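/- arXiv:2102.08243 — 10 statements merged into one kernel-verified Lean document; each statement's English description precedes it below -/
import Mathlib

section
/- Let Γ : L × [D] → R be a bipartite graph with finite left side L, finite right side R and left degree D ≥ 1, and suppose it is a (K, γD) expander for a real γ with γD ≥ 1. Then for every set S ⊆ L with |S| ≤ K there exist sets of edge labels A_x ⊆ [D], one for each x ∈ S, such that |A_x| ≥ ⌊γD⌋ for every x ∈ S, and for all distinct x, x′ ∈ S and all i ∈ A_x, j ∈ A_{x′} one has Γ(x,i) ≠ Γ(x′,j) (i.e., the sets of right nodes assigned to different elements of S are pairwise disjoint). -/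
open Finset

/-- A bipartite graph `Γ : L × [D] → R` (as `Γ : L → ι → R` with an index type `ι`
for the edge labels) is a `(K, γ)` expander if every set `S ⊆ L` with `|S| ≤ K`
has at least `γ·|S|` neighbors. -/
def Expander {L R ι : Type*} [DecidableEq R] [Fintype ι]
    (Γ : L → ι → R) (K : ℕ) (γ : ℝ) : Prop :=
  ∀ S : Finset L, S.card ≤ K →
    γ * (S.card : ℝ) ≤
      (((S ×ˢ (Finset.univ : Finset ι)).image fun q => Γ q.1 q.2).card : ℝ)

/-- **Offline matching in lossless expanders.**
If `Γ : L × [D] → R` (with `D ≥ 1`) is a `(K, γD)` expander with `γD ≥ 1`, then for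
every `S ⊆ L` with `|S| ≤ K` there are sets of edge labels `A x ⊆ [D]` for `x ∈ S`,
each of size at least `⌊γD⌋`, such that the right nodes assigned to different
elements of `S` are pairwise disjoint. -/
theorem offline_matching_of_expander
    {L R : Type*} [Fintype L] [Fintype R] [DecidableEq L] [DecidableEq R]
    (D : ℕ) (hD : 1 ≤ D) (Γ : L → Fin D → R) (K : ℕ) (γ : ℝ)
    (hγD : 1 ≤ γ * (D : ℝ))
    (hexp : Expander Γ K (γ * D)) :
    ∀ S : Finset L, S.card ≤ K →
      ∃ A : L → Finset (Fin D),
        (∀ x ∈ S, ⌊γ * (D : ℝ)⌋ ≤ ((A x).card : ℤ)) ∧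
        (∀ x ∈ S, ∀ x' ∈ S, x ≠ x' →
          ∀ i ∈ A x, ∀ j ∈ A x', Γ x i ≠ Γ x' j) := by
  intro S hSK
  classical
  set b : ℕ := (⌊γ * (D : ℝ)⌋).toNat with hb
  have hb1 : 1 ≤ (⌊γ * (D : ℝ)⌋ : ℤ) := by
    exact_mod_cast Int.le_floor.mpr (by exact_mod_cast hγD)
  have hbZ : (b : ℤ) = ⌊γ * (D : ℝ)⌋ := Int.toNat_of_nonneg (by omega)
  have hbR : (b : ℝ) ≤ γ * D := by
    have := Int.floor_le (γ * (D : ℝ))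
    calc (b : ℝ) = ((b : ℤ) : ℝ) := by norm_cast
      _ = ((⌊γ * (D : ℝ)⌋ : ℤ) : ℝ) := by rw [hbZ]
      _ ≤ γ * D := this
  -- Hall's theorem setup on ↥S × Fin b
  let t : ↥S × Fin b → Finset R := fun p => (Finset.univ : Finset (Fin D)).image (Γ p.1.1)
  have hall : ∀ s : Finset (↥S × Fin b), s.card ≤ (s.biUnion t).card := by
    intro s
    set T : Finset L := s.image (fun p => (p.1 : L)) with hT
    have hTS : T ⊆ S := by
      intro x hx
      simp only [hT, mem_image] at hx
      obtain ⟨p, _, rfl⟩ := hx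
      exact p.1.2
    have hTK : T.card ≤ K := le_trans (card_le_card hTS) hSK
    have hUnion : s.biUnion t = (T ×ˢ (Finset.univ : Finset (Fin D))).image fun q => Γ q.1 q.2 := by
      ext r
      simp only [mem_biUnion, mem_image, mem_product, mem_univ, and_true, hT, t]
      constructor
      · rintro ⟨p, hp, i, -, rfl⟩
        exact ⟨((p.1 : L), i), ⟨p, hp, rfl⟩, rfl⟩
      · rintro ⟨⟨x, i⟩, ⟨p, hp, rfl⟩, rfl⟩
        exact ⟨p, hp, i, trivial, rfl⟩
    have hcard : s.card ≤ T.card * b := by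
      have hsub : s ⊆ (s.image Prod.fst) ×ˢ (Finset.univ : Finset (Fin b)) := by
        intro p hp
        simp only [mem_product, mem_image, mem_univ, and_true]
        exact ⟨p, hp, rfl⟩
      have h1 : s.card ≤ (s.image Prod.fst).card * b := by
        calc s.card ≤ ((s.image Prod.fst) ×ˢ (Finset.univ : Finset (Fin b))).card :=
              card_le_card hsub
          _ = (s.image Prod.fst).card * b := by simp [card_product]
      have h2 : T.card = (s.image Prod.fst).card := by
        have hTe : T = (s.image Prod.fst).image Subtype.val := by
          simp [hT, Finset.image_image]
          rfl
        rw [hTe, Finset.card_image_of_injective _ Subtype.coe_injective]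
      rw [h2]; exact h1
    have hexpT := hexp T hTK
    rw [← hUnion] at hexpT
    have : (s.card : ℝ) ≤ ((s.biUnion t).card : ℝ) := by
      calc (s.card : ℝ) ≤ (T.card : ℝ) * b := by exact_mod_cast hcard
        _ ≤ (T.card : ℝ) * (γ * D) := by
            apply mul_le_mul_of_nonneg_left hbR (by positivity)
        _ = γ * D * T.card := by ring
        _ ≤ ((s.biUnion t).card : ℝ) := hexpT
    exact_mod_cast this
  obtain ⟨f, hf_inj, hf_mem⟩ := (Finset.all_card_le_biUnion_card_iff_exists_injective t).mp hall
  -- build label sets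
  refine ⟨fun x => if h : x ∈ S then
      (Finset.univ : Finset (Fin D)).filter (fun i => ∃ k : Fin b, Γ x i = f (⟨x, h⟩, k))
    else ∅, ?_, ?_⟩
  · intro x hx
    rw [← hbZ]
    simp only [hx, dif_pos]
    -- choose for each k a label g k
    have hch : ∀ k : Fin b, ∃ i : Fin D, Γ x i = f (⟨x, hx⟩, k) := by
      intro k
      have := hf_mem (⟨x, hx⟩, k)
      simp only [t, mem_image, mem_univ, true_and] at this
      obtain ⟨i, hi⟩ := this
      exact ⟨i, hi⟩
    choose g hg using hch
    have hg_inj : Function.Injective g := by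
      intro k k' hkk
      have : f (⟨x, hx⟩, k) = f (⟨x, hx⟩, k') := by rw [← hg k, ← hg k', hkk]
      have := hf_inj this
      simpa using this
    have : b ≤ (Finset.univ.filter (fun i => ∃ k : Fin b, Γ x i = f (⟨x, hx⟩, k))).card := by
      have : (Finset.univ : Finset (Fin b)).image g ⊆
          Finset.univ.filter (fun i => ∃ k : Fin b, Γ x i = f (⟨x, hx⟩, k)) := by
        intro i hi
        simp only [mem_image, mem_univ, true_and] at hi
        obtain ⟨k, rfl⟩ := hi
        simp only [mem_filter, mem_univ, true_and]
        exact ⟨k, hg k⟩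
      calc b = ((Finset.univ : Finset (Fin b)).image g).card := by
            rw [Finset.card_image_of_injective _ hg_inj]; simp
        _ ≤ _ := card_le_card this
    exact_mod_cast this
  · intro x hx x' hx' hne i hi j hj
    simp only [hx, hx', dif_pos, mem_filter, mem_univ, true_and] at hi hj
    obtain ⟨k, hk⟩ := hi
    obtain ⟨k', hk'⟩ := hj
    intro hEq
    rw [hk, hk'] at hEq
    have := hf_inj hEq
    apply hne
    exact congrArg Subtype.val (congrArg Prod.fst this)
end

section
/- Let Γ : L × [D] → R be a bipartite graph with finite left side L, finite right side R and left degree D ≥ 1 that has (r, K, ε) bounded right degree, where r ≥ 1 is an integer and ε > 0. Then for every nonempty set S ⊆ L with |S| ≤ K, the number of right nodes that are heavy for S is strictly less than (1/r)·ε·D·|S|. -/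
open Finset

/-- `|ℰ(S, p)|`: the number of edges `(x, i)` with `x ∈ S` whose right endpoint is `p`. -/
def edgeCount {L R ι : Type*} [DecidableEq L] [DecidableEq R] [Fintype ι]
    (Γ : L → ι → R) (S : Finset L) (p : R) : ℕ :=
  ((S ×ˢ (Finset.univ : Finset ι)).filter fun q => Γ q.1 q.2 = p).card

/-- `excess_S(r) = Σ_{p ∈ R} max(|ℰ(S,p)| − r, 0)` (here `ℕ`-subtraction is truncated). -/
def excess {L R ι : Type*} [DecidableEq L] [Fintype R] [DecidableEq R] [Fintype ι]
    (Γ : L → ι → R) (S : Finset L) (r : ℕ) : ℕ :=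
  ∑ p : R, (edgeCount Γ S p - r)

/-- The graph has `(r, K, ε)` bounded right degree if `excess_S(r) ≤ ε·D·|S|`
for every `S ⊆ L` with `|S| ≤ K`, where `D` is the left degree. -/
def BoundedRightDegree {L R ι : Type*} [DecidableEq L] [Fintype R] [DecidableEq R] [Fintype ι]
    (Γ : L → ι → R) (r K : ℕ) (ε : ℝ) : Prop :=
  ∀ S : Finset L, S.card ≤ K →
    (excess Γ S r : ℝ) ≤ ε * (Fintype.card ι : ℝ) * (S.card : ℝ)

/-- A right node `p` is heavy for `S` if it has more than `2r` distinct neighbors in `S`. -/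
def Heavy {L R ι : Type*} (Γ : L → ι → R) (S : Finset L) (r : ℕ) (p : R) : Prop :=
  2 * r < {x : L | x ∈ S ∧ ∃ i : ι, Γ x i = p}.ncard

lemma ncard_le_edgeCount {L R ι : Type*} [DecidableEq L] [DecidableEq R] [Fintype ι]
    [Nonempty ι] (Γ : L → ι → R) (S : Finset L) (p : R) :
    {x : L | x ∈ S ∧ ∃ i : ι, Γ x i = p}.ncard ≤ edgeCount Γ S p := by
  classical
  have hset : {x : L | x ∈ S ∧ ∃ i : ι, Γ x i = p} =
      ↑(S.filter fun x => ∃ i : ι, Γ x i = p) := by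
    ext x; simp
  rw [hset, Set.ncard_coe_finset, edgeCount]
  apply Finset.card_le_card_of_injOn
    (fun x => (x, if h : ∃ i : ι, Γ x i = p then h.choose else Classical.arbitrary ι))
  · intro x hx
    simp only [Finset.mem_coe, Finset.mem_filter] at hx ⊢
    obtain ⟨hxS, hex⟩ := hx
    simp [hxS, hex, hex.choose_spec]
  · intro a _ b _ h
    exact congrArg Prod.fst h

/-- If `Γ : L × [D] → R` (with `D ≥ 1`) has `(r, K, ε)` bounded right degree
(`r ≥ 1` an integer, `ε > 0`), then for every nonempty `S ⊆ L` with `|S| ≤ K`,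
the number of right nodes heavy for `S` is `< (1/r)·ε·D·|S|`. -/
theorem heavy_count_lt
    {L R : Type*} [Fintype L] [Fintype R] [DecidableEq L] [DecidableEq R]
    (D : ℕ) (hD : 1 ≤ D) (Γ : L → Fin D → R) (r K : ℕ) (hr : 1 ≤ r) (ε : ℝ) (hε : 0 < ε)
    (hbd : BoundedRightDegree Γ r K ε) :
    ∀ S : Finset L, S.Nonempty → S.card ≤ K →
      ({p : R | Heavy Γ S r p}.ncard : ℝ) < (1 / (r : ℝ)) * ε * (D : ℝ) * (S.card : ℝ) := by
  classical
  have hne : Nonempty (Fin D) := Fin.pos_iff_nonempty.mp hD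
  intro S hS hSK
  set Hset := Finset.univ.filter (fun p => Heavy Γ S r p) with hHdef
  have hset : {p : R | Heavy Γ S r p} = ↑Hset := by ext p; simp [hHdef]
  rw [hset, Set.ncard_coe_finset]
  have key : (r + 1) * Hset.card ≤ excess Γ S r := by
    calc (r + 1) * Hset.card = ∑ _p ∈ Hset, (r + 1) := by
          rw [Finset.sum_const, smul_eq_mul, mul_comm]
      _ ≤ ∑ p ∈ Hset, (edgeCount Γ S p - r) := by
          apply Finset.sum_le_sum
          intro p hp
          have hheavy : Heavy Γ S r p := by simpa [hHdef] using hp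
          have h1 := ncard_le_edgeCount Γ S p
          have h2 : 2 * r < edgeCount Γ S p := lt_of_lt_of_le hheavy h1
          omega
      _ ≤ excess Γ S r := Finset.sum_le_sum_of_subset (Finset.subset_univ Hset)
  have hb := hbd S hSK
  rw [Fintype.card_fin] at hb
  have hkeyR : ((r + 1 : ℕ) : ℝ) * (Hset.card : ℝ) ≤ ε * (D : ℝ) * (S.card : ℝ) := by
    calc ((r + 1 : ℕ) : ℝ) * (Hset.card : ℝ) = (((r + 1) * Hset.card : ℕ) : ℝ) := by
          push_cast; ring
      _ ≤ (excess Γ S r : ℝ) := by exact_mod_cast key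
      _ ≤ _ := hb
  have hrpos : (0 : ℝ) < r := by exact_mod_cast hr
  have hSpos : (0 : ℝ) < S.card := by exact_mod_cast hS.card_pos
  have hDpos : (0 : ℝ) < D := by exact_mod_cast hD
  have hpos : 0 < ε * (D : ℝ) * (S.card : ℝ) := by positivity
  rw [show (1 / (r : ℝ)) * ε * (D : ℝ) * (S.card : ℝ)
      = (ε * (D : ℝ) * (S.card : ℝ)) / r by ring, lt_div_iff₀ hrpos]
  rcases Nat.eq_zero_or_pos Hset.card with h0 | h1
  · rw [h0]; simpa using hpos
  · have h1' : (1 : ℝ) ≤ (Hset.card : ℝ) := by exact_mod_cast h1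
    push_cast at hkeyR
    nlinarith
end

section
/- Let Γ : L × [D] → R be a bipartite graph with finite left side L, finite right side R and left degree D ≥ 1 that has (r, K, ε) bounded right degree, where r ≥ 1 is an integer and ε > 0. Then for every set S ⊆ L with |S| ≤ K, the number of nodes x ∈ S that are deficient for S is at most |S|/2. -/
open Finset

/-- A left node `x` is deficient for `S` if at least `4εD` of its edge labels `i`
lead to a right node that is heavy for `S`. -/
def Deficient {L R ι : Type*} [Fintype ι] (Γ : L → ι → R) (S : Finset L) (r : ℕ) (ε : ℝ)
    (x : L) : Prop :=
  4 * ε * (Fintype.card ι : ℝ) ≤ ({i : ι | Heavy Γ S r (Γ x i)}.ncard : ℝ)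

/-- If `Γ : L × [D] → R` (with `D ≥ 1`) has `(r, K, ε)` bounded right degree
(`r ≥ 1` an integer, `ε > 0`), then for every `S ⊆ L` with `|S| ≤ K`,
the number of nodes of `S` that are deficient for `S` is at most `|S|/2`. -/
theorem deficient_count_le
    {L R : Type*} [Fintype L] [Fintype R] [DecidableEq L] [DecidableEq R]
    (D : ℕ) (hD : 1 ≤ D) (Γ : L → Fin D → R) (r K : ℕ) (hr : 1 ≤ r) (ε : ℝ) (hε : 0 < ε)
    (hbd : BoundedRightDegree Γ r K ε) :
    ∀ S : Finset L, S.card ≤ K →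
      ({x : L | x ∈ S ∧ Deficient Γ S r ε x}.ncard : ℝ) ≤ (S.card : ℝ) / 2 := by
  classical
  intro S hS
  set Def : Finset L := S.filter (fun x => Deficient Γ S r ε x) with hDefdef
  have hncard : {x : L | x ∈ S ∧ Deficient Γ S r ε x}.ncard = Def.card := by
    rw [Set.ncard_eq_toFinset_card']
    congr 1
    ext x
    simp [hDefdef]
  set HeavySet : Finset R := Finset.univ.filter (Heavy Γ S r) with hHS
  set hcnt : L → ℕ := fun x => (Finset.univ.filter fun i : Fin D => Heavy Γ S r (Γ x i)).card
    with hhcnt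
  -- Deficient gives lower bound on hcnt
  have hdefc : ∀ x, Deficient Γ S r ε x → 4 * ε * D ≤ (hcnt x : ℝ) := by
    intro x hx
    have h1 : {i : Fin D | Heavy Γ S r (Γ x i)}.ncard = hcnt x := by
      rw [Set.ncard_eq_toFinset_card']
      congr 1
      ext i
      simp [hhcnt]
    rw [Deficient, h1] at hx
    simpa using hx
  -- heavy nodes receive many edges
  have edge_ge : ∀ p ∈ HeavySet, 2 * r < edgeCount Γ S p := by
    intro p hp
    have hp' : Heavy Γ S r p := (Finset.mem_filter.mp hp).2
    have h1 : {x : L | x ∈ S ∧ ∃ i, Γ x i = p}.ncard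
        = (S.filter fun x => ∃ i, Γ x i = p).card := by
      rw [Set.ncard_eq_toFinset_card']
      congr 1
      ext x
      simp
    rw [Heavy, h1] at hp'
    refine lt_of_lt_of_le hp' ?_
    apply Finset.card_le_card_of_injOn
      (fun x => (x, if h : ∃ i, Γ x i = p then h.choose else ⟨0, hD⟩))
    · intro x hx
      rcases Finset.mem_filter.mp hx with ⟨hxS, hex⟩
      simp only [dif_pos hex, Finset.mem_coe, Finset.mem_filter, Finset.mem_product, Finset.mem_univ,
        and_true]
      exact ⟨hxS, hex.choose_spec⟩
    · intro a _ b _ hab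
      exact congrArg Prod.fst hab
  -- double counting
  have hc : ∀ p, edgeCount Γ S p
      = ∑ x ∈ S, ∑ i : Fin D, if Γ x i = p then 1 else 0 := by
    intro p
    rw [edgeCount, Finset.card_filter, Finset.sum_product]
  have count_eq : ∑ x ∈ S, hcnt x = ∑ p ∈ HeavySet, edgeCount Γ S p := by
    simp only [hc]
    rw [Finset.sum_comm]
    refine Finset.sum_congr rfl fun x _ => ?_
    rw [Finset.sum_comm]
    simp only [Finset.sum_ite_eq, hHS, Finset.mem_filter, Finset.mem_univ, true_and]
    exact Finset.card_filter _ _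
  -- heavy edges bounded by twice the excess
  have heavy_le : ∑ p ∈ HeavySet, edgeCount Γ S p ≤ 2 * excess Γ S r := by
    calc ∑ p ∈ HeavySet, edgeCount Γ S p
        ≤ ∑ p ∈ HeavySet, 2 * (edgeCount Γ S p - r) := by
          refine Finset.sum_le_sum fun p hp => ?_
          have := edge_ge p hp
          omega
      _ = 2 * ∑ p ∈ HeavySet, (edgeCount Γ S p - r) := by rw [Finset.mul_sum]
      _ ≤ 2 * excess Γ S r := by
          refine Nat.mul_le_mul_left 2 ?_
          exact Finset.sum_le_sum_of_subset (Finset.subset_univ _)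
  -- put things together, over ℝ
  have hexc : (excess Γ S r : ℝ) ≤ ε * D * S.card := by simpa using hbd S hS
  have key : 4 * ε * D * (Def.card : ℝ) ≤ 2 * (ε * D * S.card) := by
    calc 4 * ε * D * (Def.card : ℝ)
        = ∑ _x ∈ Def, 4 * ε * D := by rw [Finset.sum_const, nsmul_eq_mul]; ring
      _ ≤ ∑ x ∈ Def, (hcnt x : ℝ) := by
          refine Finset.sum_le_sum fun x hx => ?_
          exact hdefc x (Finset.mem_filter.mp hx).2
      _ ≤ ∑ x ∈ S, (hcnt x : ℝ) := by
          refine Finset.sum_le_sum_of_subset_of_nonneg (Finset.filter_subset _ _) ?_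
          intro x _ _
          positivity
      _ = ((∑ x ∈ S, hcnt x : ℕ) : ℝ) := by push_cast; ring
      _ ≤ ((2 * excess Γ S r : ℕ) : ℝ) := by
          exact_mod_cast count_eq ▸ heavy_le
      _ ≤ 2 * (ε * D * S.card) := by push_cast; linarith
  rw [hncard]
  have hεD : 0 < ε * D := by positivity
  nlinarith [key, hεD]
end

section
/- Let Γ : L × [D] → R be a bipartite graph with finite left side L, finite right side R and left degree D ≥ 1 that has (r, K, ε) bounded right degree, where r ≥ 1 is an integer, ε > 0, and K ≥ 2. Then the graph admits ((1−4ε)D, 2⌈log₂ K⌉·r) online matching up to size K. -/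
open Finset

/-- The graph `Γ : L → ι → R` admits `(ℓ, r)` online matching up to size `K` if
there is an assignment function `f` from (list of requests, left node) to sets of
edge labels such that: (1) nodes not in the list get the empty set; (2) a node in
the list gets at least `ℓ` labels, and its assigned set is stable under extending
the list (within the size bound `K`); (3) for every right node `p` and every list,
at most `r` distinct listed nodes have an assigned edge ending in `p`. -/
def OnlineMatching {L R ι : Type*} (Γ : L → ι → R) (ℓ : ℝ) (r K : ℕ) : Prop :=
  ∃ f : List L → L → Finset ι,
    (∀ S : List L, S.length ≤ K → ∀ x : L,
      (x ∉ S → f S x = ∅) ∧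
      (x ∈ S →
        (ℓ ≤ ((f S x).card : ℝ) ∧
         ∀ S' : List L, S'.length ≤ K → S <+: S' → f S x = f S' x))) ∧
    (∀ S : List L, S.length ≤ K → ∀ p : R,
      {x : L | x ∈ S ∧ ∃ i ∈ f S x, Γ x i = p}.ncard ≤ r)



set_option linter.unusedSectionVars false
section OMAux

variable {L R : Type*} [Fintype L] [Fintype R] [DecidableEq L] [DecidableEq R] {D : ℕ}

/-- distinct neighbors of `p` in `A`. -/
def OM.nbr (Γ : L → Fin D → R) (A : Finset L) (p : R) : Finset L :=
  A.filter (fun x => ∃ i, Γ x i = p)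

/-- heavy right nodes for `A`. -/
def OM.Bset (Γ : L → Fin D → R) (r : ℕ) (A : Finset L) : Finset R :=
  Finset.univ.filter (fun p => 2 * r < (OM.nbr Γ A p).card)

/-- number of edges from `x` into heavy nodes of `A`. -/
def OM.badC (Γ : L → Fin D → R) (r : ℕ) (A : Finset L) (x : L) : ℕ :=
  (Finset.univ.filter (fun i : Fin D => Γ x i ∈ OM.Bset Γ r A)).card

open scoped Classical in
noncomputable def OM.chain (Γ : L → Fin D → R) (r : ℕ) (ε : ℝ) (T : Finset L) : ℕ → Finset L
  | 0 => T
  | k+1 => (OM.chain Γ r ε T k).filter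
      (fun x => 4 * ε * D < (OM.badC Γ r (OM.chain Γ r ε T k) x : ℝ))

noncomputable def OM.level (Γ : L → Fin D → R) (r : ℕ) (ε : ℝ) (T : Finset L) (x : L) : ℕ :=
  sInf {k | x ∉ OM.chain Γ r ε T (k+1)}

def OM.arrT (S : List L) (x : L) : Finset L := (S.take (S.idxOf x + 1)).toFinset

noncomputable def OM.fm (Γ : L → Fin D → R) (r : ℕ) (ε : ℝ) (S : List L) (x : L) :
    Finset (Fin D) :=
  if x ∈ S then
    Finset.univ.filter (fun i => Γ x i ∉
      OM.Bset Γ r (OM.chain Γ r ε (OM.arrT S x) (OM.level Γ r ε (OM.arrT S x) x)))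
  else ∅

namespace OM

lemma chain_zero (Γ : L → Fin D → R) (r : ℕ) (ε : ℝ) (T : Finset L) :
    chain Γ r ε T 0 = T := rfl

open scoped Classical in
lemma chain_succ (Γ : L → Fin D → R) (r : ℕ) (ε : ℝ) (T : Finset L) (k : ℕ) :
    chain Γ r ε T (k+1) = (chain Γ r ε T k).filter
      (fun x => 4 * ε * D < (badC Γ r (chain Γ r ε T k) x : ℝ)) := rfl

lemma chain_succ_subset (Γ : L → Fin D → R) (r : ℕ) (ε : ℝ) (T : Finset L) (k : ℕ) :
    chain Γ r ε T (k+1) ⊆ chain Γ r ε T k := by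
  rw [chain_succ]; exact filter_subset _ _

lemma chain_subset (Γ : L → Fin D → R) (r : ℕ) (ε : ℝ) (T : Finset L) (k : ℕ) :
    chain Γ r ε T k ⊆ T := by
  induction k with
  | zero => exact subset_rfl
  | succ k ih => exact (chain_succ_subset Γ r ε T k).trans ih

lemma Bset_mono (Γ : L → Fin D → R) (r : ℕ) {A A' : Finset L} (h : A ⊆ A') :
    Bset Γ r A ⊆ Bset Γ r A' := by
  intro p hp
  simp only [Bset, mem_filter, mem_univ, true_and] at hp ⊢
  exact lt_of_lt_of_le hp (card_le_card (filter_subset_filter _ h))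

lemma badC_mono (Γ : L → Fin D → R) (r : ℕ) {A A' : Finset L} (h : A ⊆ A') (x : L) :
    badC Γ r A x ≤ badC Γ r A' x := by
  apply card_le_card
  intro i hi
  rw [mem_filter] at hi ⊢
  exact ⟨hi.1, Bset_mono Γ r h hi.2⟩

lemma chain_mono (Γ : L → Fin D → R) (r : ℕ) (ε : ℝ) {T T' : Finset L} (h : T ⊆ T') (k : ℕ) :
    chain Γ r ε T k ⊆ chain Γ r ε T' k := by
  induction k with
  | zero => exact h
  | succ k ih =>
      classical
      rw [chain_succ, chain_succ]
      intro x hx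
      rw [mem_filter] at hx ⊢
      refine ⟨ih hx.1, lt_of_lt_of_le hx.2 ?_⟩
      exact_mod_cast Nat.cast_le.2 (badC_mono Γ r ih x)

lemma edgeCount_eq_sum (Γ : L → Fin D → R) (A : Finset L) (p : R) :
    edgeCount Γ A p = ∑ x ∈ A, (Finset.univ.filter (fun i : Fin D => Γ x i = p)).card := by
  unfold edgeCount
  rw [Finset.card_filter, Finset.sum_product]
  exact Finset.sum_congr rfl (fun x _ => (Finset.card_filter _ _).symm)

lemma nbr_card_le_edgeCount (Γ : L → Fin D → R) (A : Finset L) (p : R) :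
    (nbr Γ A p).card ≤ edgeCount Γ A p := by
  rw [edgeCount_eq_sum, nbr, Finset.card_filter]
  apply Finset.sum_le_sum
  intro x _
  by_cases h : ∃ i, Γ x i = p
  · rw [if_pos h]
    obtain ⟨i, hi⟩ := h
    exact Finset.card_pos.2 ⟨i, by simp [hi]⟩
  · rw [if_neg h]
    exact Nat.zero_le _

lemma badC_eq (Γ : L → Fin D → R) (r : ℕ) (A : Finset L) (x : L) :
    badC Γ r A x = ∑ p ∈ Bset Γ r A, (Finset.univ.filter (fun i : Fin D => Γ x i = p)).card := by
  unfold badC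
  rw [Finset.card_filter]
  simp_rw [Finset.card_filter]
  rw [Finset.sum_comm]
  congr 1
  ext i
  rw [Finset.sum_ite_eq]

lemma sum_badC (Γ : L → Fin D → R) (r : ℕ) (A : Finset L) :
    ∑ x ∈ A, badC Γ r A x = ∑ p ∈ Bset Γ r A, edgeCount Γ A p := by
  simp_rw [badC_eq, edgeCount_eq_sum]
  rw [Finset.sum_comm]

lemma sum_badC_le (Γ : L → Fin D → R) (r K : ℕ) (ε : ℝ)
    (hbd : BoundedRightDegree Γ r K ε) (A : Finset L) (hA : A.card ≤ K) :
    ((∑ x ∈ A, badC Γ r A x : ℕ) : ℝ) ≤ 2 * ε * D * A.card := by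
  have h1 : ∑ x ∈ A, badC Γ r A x ≤ 2 * excess Γ A r := by
    rw [sum_badC]
    calc ∑ p ∈ Bset Γ r A, edgeCount Γ A p
        ≤ ∑ p ∈ Bset Γ r A, 2 * (edgeCount Γ A p - r) := by
          apply Finset.sum_le_sum
          intro p hp
          simp only [Bset, mem_filter, mem_univ, true_and] at hp
          have := nbr_card_le_edgeCount Γ A p
          omega
      _ = 2 * ∑ p ∈ Bset Γ r A, (edgeCount Γ A p - r) := by rw [Finset.mul_sum]
      _ ≤ 2 * excess Γ A r := by
          apply Nat.mul_le_mul_left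
          exact Finset.sum_le_sum_of_subset (Finset.subset_univ _)
  calc ((∑ x ∈ A, badC Γ r A x : ℕ) : ℝ) ≤ ((2 * excess Γ A r : ℕ) : ℝ) := by exact_mod_cast h1
    _ = 2 * (excess Γ A r : ℝ) := by push_cast; ring
    _ ≤ 2 * (ε * D * A.card) := by
        have := hbd A hA
        rw [Fintype.card_fin] at this
        linarith
    _ = 2 * ε * D * A.card := by ring

lemma halving (Γ : L → Fin D → R) (r K : ℕ) (ε : ℝ) (hε : 0 < ε) (hD : 1 ≤ D)
    (hbd : BoundedRightDegree Γ r K ε) (T : Finset L) (hT : T.card ≤ K) (k : ℕ) :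
    2 * (chain Γ r ε T (k+1)).card ≤ (chain Γ r ε T k).card ∧
      ((chain Γ r ε T (k+1)).Nonempty →
        2 * (chain Γ r ε T (k+1)).card < (chain Γ r ε T k).card) := by
  classical
  set A := chain Γ r ε T k with hA
  set A' := chain Γ r ε T (k+1) with hA'
  have hAK : A.card ≤ K := le_trans (card_le_card (chain_subset Γ r ε T k)) hT
  have hsub : A' ⊆ A := chain_succ_subset Γ r ε T k
  have hεD : (0:ℝ) < ε * D := by
    have : (1:ℝ) ≤ D := by exact_mod_cast hD
    nlinarith
  -- each x ∈ A' has badC > 4εD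
  have hbig : ∀ x ∈ A', 4 * ε * D < (badC Γ r A x : ℝ) := by
    intro x hx
    rw [hA', chain_succ, mem_filter] at hx
    exact hx.2
  have hsum1 : (4 * ε * D) * A'.card ≤ ∑ x ∈ A', (badC Γ r A x : ℝ) := by
    calc (4 * ε * D) * A'.card = ∑ _x ∈ A', 4 * ε * D := by
          rw [Finset.sum_const, nsmul_eq_mul]; ring
      _ ≤ ∑ x ∈ A', (badC Γ r A x : ℝ) :=
          Finset.sum_le_sum (fun x hx => le_of_lt (hbig x hx))
  have hsum2 : ∑ x ∈ A', (badC Γ r A x : ℝ) ≤ ∑ x ∈ A, (badC Γ r A x : ℝ) :=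
    Finset.sum_le_sum_of_subset_of_nonneg hsub (fun _ _ _ => by positivity)
  have hsum3 : ∑ x ∈ A, (badC Γ r A x : ℝ) ≤ 2 * ε * D * A.card := by
    have := sum_badC_le Γ r K ε hbd A hAK
    push_cast at this ⊢
    exact this
  constructor
  · have h4 : (4 * ε * D) * A'.card ≤ 2 * ε * D * A.card := by linarith
    have : (2:ℝ) * A'.card ≤ A.card := by nlinarith
    exact_mod_cast this
  · intro hne
    have hstrict : (4 * ε * D) * A'.card < ∑ x ∈ A', (badC Γ r A x : ℝ) := by
      have := Finset.sum_lt_sum_of_nonempty hne hbig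
      calc (4 * ε * D) * A'.card = ∑ _x ∈ A', 4 * ε * D := by
            rw [Finset.sum_const, nsmul_eq_mul]; ring
        _ < ∑ x ∈ A', (badC Γ r A x : ℝ) := this
    have h4 : (4 * ε * D) * A'.card < 2 * ε * D * A.card := by linarith
    have : (2:ℝ) * A'.card < A.card := by nlinarith
    exact_mod_cast this

lemma pow_mul_chain_card_le (Γ : L → Fin D → R) (r K : ℕ) (ε : ℝ) (hε : 0 < ε) (hD : 1 ≤ D)
    (hbd : BoundedRightDegree Γ r K ε) (T : Finset L) (hT : T.card ≤ K) (k : ℕ) :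
    2 ^ k * (chain Γ r ε T k).card ≤ T.card := by
  induction k with
  | zero => simp [chain_zero]
  | succ k ih =>
      have h := (halving Γ r K ε hε hD hbd T hT k).1
      calc 2 ^ (k+1) * (chain Γ r ε T (k+1)).card
          = 2 ^ k * (2 * (chain Γ r ε T (k+1)).card) := by ring
        _ ≤ 2 ^ k * (chain Γ r ε T k).card := Nat.mul_le_mul_left _ h
        _ ≤ T.card := ih

lemma level_set_nonempty (Γ : L → Fin D → R) (r K : ℕ) (ε : ℝ) (hε : 0 < ε) (hD : 1 ≤ D)
    (hbd : BoundedRightDegree Γ r K ε) (T : Finset L) (hT : T.card ≤ K) (x : L) :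
    {k | x ∉ chain Γ r ε T (k+1)}.Nonempty := by
  refine ⟨T.card, fun hx => ?_⟩
  have h1 : 1 ≤ (chain Γ r ε T (T.card + 1)).card := Finset.card_pos.2 ⟨x, hx⟩
  have h2 := pow_mul_chain_card_le Γ r K ε hε hD hbd T hT (T.card + 1)
  have h3 : T.card < 2 ^ (T.card + 1) := by
    have h4 : T.card < 2 ^ T.card := Nat.lt_two_pow_self
    have h5 : (2:ℕ) ^ T.card ≤ 2 ^ (T.card + 1) :=
      Nat.pow_le_pow_right (by norm_num) (by omega)
    omega
  nlinarith

lemma level_mem_chain (Γ : L → Fin D → R) (r K : ℕ) (ε : ℝ) (hε : 0 < ε) (hD : 1 ≤ D)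
    (hbd : BoundedRightDegree Γ r K ε) (T : Finset L) (hT : T.card ≤ K) (x : L) (hx : x ∈ T) :
    x ∈ chain Γ r ε T (level Γ r ε T x) ∧ x ∉ chain Γ r ε T (level Γ r ε T x + 1) := by
  have hne := level_set_nonempty Γ r K ε hε hD hbd T hT x
  constructor
  · -- ∀ j ≤ level, x ∈ chain j
    have : ∀ j, j ≤ level Γ r ε T x → x ∈ chain Γ r ε T j := by
      intro j
      induction j with
      | zero => intro _; exact hx
      | succ j ih =>
          intro hj
          have : j ∉ {k | x ∉ chain Γ r ε T (k+1)} :=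
            Nat.notMem_of_lt_sInf (lt_of_lt_of_le (Nat.lt_of_succ_le hj) le_rfl)
          simpa [Set.mem_setOf_eq, not_not] using this
    exact this _ le_rfl
  · exact Nat.sInf_mem hne

lemma level_badC_le (Γ : L → Fin D → R) (r K : ℕ) (ε : ℝ) (hε : 0 < ε) (hD : 1 ≤ D)
    (hbd : BoundedRightDegree Γ r K ε) (T : Finset L) (hT : T.card ≤ K) (x : L) (hx : x ∈ T) :
    (badC Γ r (chain Γ r ε T (level Γ r ε T x)) x : ℝ) ≤ 4 * ε * D := by
  classical
  obtain ⟨h1, h2⟩ := level_mem_chain Γ r K ε hε hD hbd T hT x hx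
  by_contra hc
  push_neg at hc
  apply h2
  rw [chain_succ, mem_filter]
  exact ⟨h1, hc⟩

lemma strict_chain_card (Γ : L → Fin D → R) (r K : ℕ) (ε : ℝ) (hε : 0 < ε) (hD : 1 ≤ D)
    (hbd : BoundedRightDegree Γ r K ε) (T : Finset L) (hT : T.card ≤ K) :
    ∀ m, 1 ≤ m → (chain Γ r ε T m).Nonempty → 2 ^ m * (chain Γ r ε T m).card < T.card := by
  intro m
  induction m with
  | zero => omega
  | succ m ih =>
      intro _ hne
      by_cases hm : m = 0
      · subst hm
        have h := (halving Γ r K ε hε hD hbd T hT 0).2 hne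
        rw [chain_zero] at h
        simpa [pow_succ, pow_zero, one_mul] using h
      · have hm1 : 1 ≤ m := by omega
        have hnem : (chain Γ r ε T m).Nonempty := by
          obtain ⟨y, hy⟩ := hne
          exact ⟨y, chain_succ_subset Γ r ε T m hy⟩
        have ihm := ih hm1 hnem
        have hstep := (halving Γ r K ε hε hD hbd T hT m).2 hne
        have h2 : 2 * (chain Γ r ε T (m+1)).card + 1 ≤ (chain Γ r ε T m).card := hstep
        calc 2 ^ (m+1) * (chain Γ r ε T (m+1)).card
            = 2 ^ m * (2 * (chain Γ r ε T (m+1)).card) := by ring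
          _ ≤ 2 ^ m * ((chain Γ r ε T m).card - 1) := Nat.mul_le_mul_left _ (by omega)
          _ < T.card := by
              have hpos : 1 ≤ 2 ^ m := Nat.one_le_two_pow
              have hc1 : 1 ≤ (chain Γ r ε T m).card := Finset.card_pos.2 hnem
              have hd : (chain Γ r ε T m).card = ((chain Γ r ε T m).card - 1) + 1 := by
                omega
              have key : 2 ^ m * ((chain Γ r ε T m).card - 1) + 2 ^ m
                  = 2 ^ m * (chain Γ r ε T m).card := by
                conv_rhs => rw [hd, Nat.mul_succ]
              omega

lemma level_lt_clog (Γ : L → Fin D → R) (r K : ℕ) (ε : ℝ) (hε : 0 < ε) (hD : 1 ≤ D)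
    (hK : 2 ≤ K) (hbd : BoundedRightDegree Γ r K ε) (T : Finset L) (hT : T.card ≤ K)
    (x : L) (hx : x ∈ T) : level Γ r ε T x < Nat.clog 2 K := by
  set m := level Γ r ε T x with hm
  have hclogpos : 0 < Nat.clog 2 K := Nat.clog_pos (by norm_num) hK
  rcases Nat.eq_zero_or_pos m with h0 | hpos
  · omega
  · have hmem := (level_mem_chain Γ r K ε hε hD hbd T hT x hx).1
    have hne : (chain Γ r ε T m).Nonempty := ⟨x, hmem⟩
    have := strict_chain_card Γ r K ε hε hD hbd T hT m hpos hne
    have hc1 : 1 ≤ (chain Γ r ε T m).card := Finset.card_pos.2 hne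
    have h2m : 2 ^ m < K := by
      have : 2 ^ m ≤ 2 ^ m * (chain Γ r ε T m).card := Nat.le_mul_of_pos_right _ hc1
      omega
    by_contra hc
    push_neg at hc
    have := (Nat.clog_le_iff_le_pow (show 1 < 2 by norm_num)).1 hc
    omega

lemma mem_arrT_self {S : List L} {x : L} (hx : x ∈ S) : x ∈ arrT S x := by
  have h1 := List.idxOf_lt_length_iff.2 hx
  rw [arrT, List.mem_toFinset]
  have h2 : (S.take (S.idxOf x + 1))[S.idxOf x]'(by
      simp [List.length_take]; omega) = x := by
    rw [List.getElem_take]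
    exact List.getElem_idxOf h1
  have h3 : (S.take (S.idxOf x + 1))[S.idxOf x]'(by
      simp [List.length_take]; omega) ∈ S.take (S.idxOf x + 1) := List.getElem_mem _
  rwa [h2] at h3

lemma arrT_card_le {S : List L} {x : L} : (arrT S x).card ≤ S.length := by
  apply le_trans (List.toFinset_card_le _)
  simp [List.length_take]

lemma arrT_prefix {S S' : List L} {x : L} (hpre : S <+: S') (hx : x ∈ S) :
    arrT S' x = arrT S x := by
  obtain ⟨t, rfl⟩ := hpre
  rw [arrT, arrT, List.idxOf_append_of_mem hx,
    List.take_append_of_le_length (Nat.succ_le_of_lt (List.idxOf_lt_length_iff.2 hx))]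

lemma arrT_mono {S : List L} {x y : L} (h : S.idxOf x ≤ S.idxOf y) :
    arrT S x ⊆ arrT S y := by
  intro a ha
  rw [arrT, List.mem_toFinset] at ha ⊢
  exact (List.take_prefix_take_left (l := S) (by omega : S.idxOf x + 1 ≤ S.idxOf y + 1)).subset ha

end OM
end OMAux


/-- **Bounded right degree ⇒ online matching.**
If `Γ : L × [D] → R` (with `D ≥ 1`) has `(r, K, ε)` bounded right degree, where
`r ≥ 1`, `ε > 0` and `K ≥ 2`, then `Γ` admits `((1−4ε)D, 2⌈log₂ K⌉·r)` online
matching up to size `K`. -/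
theorem onlineMatching_of_boundedRightDegree
    {L R : Type*} [Fintype L] [Fintype R] [DecidableEq L] [DecidableEq R]
    (D : ℕ) (hD : 1 ≤ D) (Γ : L → Fin D → R) (r K : ℕ) (hr : 1 ≤ r) (hK : 2 ≤ K)
    (ε : ℝ) (hε : 0 < ε)
    (hbd : BoundedRightDegree Γ r K ε) :
    OnlineMatching Γ ((1 - 4 * ε) * (D : ℝ)) (2 * Nat.clog 2 K * r) K := by
  classical
  refine ⟨OM.fm Γ r ε, ?_, ?_⟩
  · intro S hS x
    constructor
    · intro hx
      rw [OM.fm, if_neg hx]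
    · intro hx
      have hT : (OM.arrT S x).card ≤ K := le_trans OM.arrT_card_le hS
      have hxT : x ∈ OM.arrT S x := OM.mem_arrT_self hx
      constructor
      · rw [OM.fm, if_pos hx]
        set A := OM.chain Γ r ε (OM.arrT S x) (OM.level Γ r ε (OM.arrT S x) x) with hA
        have hbad := OM.level_badC_le Γ r K ε hε hD hbd (OM.arrT S x) hT x hxT
        rw [← hA] at hbad
        have hsplit : (Finset.univ.filter (fun i : Fin D => Γ x i ∈ OM.Bset Γ r A)).card
            + (Finset.univ.filter (fun i : Fin D => ¬ (Γ x i ∈ OM.Bset Γ r A))).card = D := by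
          rw [Finset.card_filter_add_card_filter_not, Finset.card_univ,
            Fintype.card_fin]
        have hbadC : OM.badC Γ r A x
            = (Finset.univ.filter (fun i : Fin D => Γ x i ∈ OM.Bset Γ r A)).card := rfl
        have hcard : ((Finset.univ.filter
            (fun i : Fin D => ¬ (Γ x i ∈ OM.Bset Γ r A))).card : ℝ)
            = (D : ℝ) - (OM.badC Γ r A x : ℝ) := by
          rw [hbadC]
          have := hsplit
          push_cast [← this]
          ring
        calc (1 - 4 * ε) * (D : ℝ) = (D : ℝ) - 4 * ε * D := by ring
          _ ≤ (D : ℝ) - (OM.badC Γ r A x : ℝ) := by linarith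
          _ = _ := hcard.symm
      · intro S' _ hpre
        rw [OM.fm, OM.fm, if_pos hx, if_pos (hpre.subset hx), OM.arrT_prefix hpre hx]
  · intro S hS p
    set g := fun x : L => OM.level Γ r ε (OM.arrT S x) x with hg
    set Mf := S.toFinset.filter (fun x => ∃ i ∈ OM.fm Γ r ε S x, Γ x i = p) with hMf
    have hset : {x : L | x ∈ S ∧ ∃ i ∈ OM.fm Γ r ε S x, Γ x i = p} = ↑Mf := by
      ext x
      simp [hMf, List.mem_toFinset]
    rw [hset, Set.ncard_coe_finset]
    have hsub : Mf ⊆ (Finset.range (Nat.clog 2 K)).biUnion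
        (fun m => Mf.filter (fun x => g x = m)) := by
      intro x hxM
      have hxS : x ∈ S := by
        rw [hMf, mem_filter, List.mem_toFinset] at hxM
        exact hxM.1
      have hT : (OM.arrT S x).card ≤ K := le_trans OM.arrT_card_le hS
      refine Finset.mem_biUnion.2 ⟨g x, Finset.mem_range.2 ?_, Finset.mem_filter.2 ⟨hxM, rfl⟩⟩
      exact OM.level_lt_clog Γ r K ε hε hD hK hbd _ hT x (OM.mem_arrT_self hxS)
    have hlevel : ∀ m : ℕ, (Mf.filter (fun x => g x = m)).card ≤ 2 * r := by
      intro m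
      by_cases hne : (Mf.filter (fun x => g x = m)).Nonempty
      · obtain ⟨xs, hxsmem, hxsmax⟩ :=
          Finset.exists_max_image _ (fun x => S.idxOf x) hne
        have hxsMf := (Finset.mem_filter.1 hxsmem).1
        have hxslvl : g xs = m := (Finset.mem_filter.1 hxsmem).2
        rw [hMf, mem_filter, List.mem_toFinset] at hxsMf
        have hxsS := hxsMf.1
        obtain ⟨i0, hi0F, hi0P⟩ := hxsMf.2
        set As := OM.chain Γ r ε (OM.arrT S xs) m with hAs
        have hpB : p ∉ OM.Bset Γ r As := by
          rw [OM.fm, if_pos hxsS, Finset.mem_filter] at hi0F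
          have h2 := hi0F.2
          rw [show OM.level Γ r ε (OM.arrT S xs) xs = m from hxslvl] at h2
          rwa [hi0P] at h2
        have hnb : (OM.nbr Γ As p).card ≤ 2 * r := by
          by_contra hc
          push_neg at hc
          exact hpB (by rw [OM.Bset, Finset.mem_filter]; exact ⟨mem_univ _, hc⟩)
        refine le_trans (card_le_card ?_) hnb
        intro x hxm
        have hxMf := (Finset.mem_filter.1 hxm).1
        have hxlvl : g x = m := (Finset.mem_filter.1 hxm).2
        rw [hMf, mem_filter, List.mem_toFinset] at hxMf
        have hxS := hxMf.1
        obtain ⟨i, hiF, hiP⟩ := hxMf.2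
        rw [OM.nbr, Finset.mem_filter]
        constructor
        · have hT : (OM.arrT S x).card ≤ K := le_trans OM.arrT_card_le hS
          have hmem := (OM.level_mem_chain Γ r K ε hε hD hbd (OM.arrT S x) hT x
            (OM.mem_arrT_self hxS)).1
          rw [show OM.level Γ r ε (OM.arrT S x) x = m from hxlvl] at hmem
          exact OM.chain_mono Γ r ε (OM.arrT_mono (hxsmax x hxm)) m hmem
        · exact ⟨i, hiP⟩
      · rw [Finset.not_nonempty_iff_eq_empty] at hne
        rw [hne]
        simp
    calc Mf.card ≤ ((Finset.range (Nat.clog 2 K)).biUnion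
          (fun m => Mf.filter (fun x => g x = m))).card := card_le_card hsub
      _ ≤ ∑ m ∈ Finset.range (Nat.clog 2 K), (Mf.filter (fun x => g x = m)).card :=
          Finset.card_biUnion_le
      _ ≤ ∑ _m ∈ Finset.range (Nat.clog 2 K), 2 * r :=
          Finset.sum_le_sum (fun m _ => hlevel m)
      _ = 2 * Nat.clog 2 K * r := by
          rw [Finset.sum_const, Finset.card_range, smul_eq_mul]
          ring
end

section
/- Let G be a bipartite graph Γ : L × [D] → R with finite left side L whose elements are labeled by distinct strings in {0,1}^n, with n ≥ 2, finite right side R and left degree D ≥ 1, let 0 < ε < 1 and let r ≥ 2 be an integer. If G admits (ℓ, r) online matching up to size K, then the graph G′ obtained from G by the G ↦ G′ transformation with parameters ε and r admits ((1−ε)·ℓ·t, 1) online matching up to size K, where t is the smallest power of two with t ≥ (1/ε)(n−1)(r−1) and t ≥ 2. -/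
open Finset

/-- The polynomial over a field `F` whose coefficients are the bits of `bits`
(each interpreted as `0` or `1` in `F`), evaluated at `a`. -/
noncomputable def polyEval {n : ℕ} {F : Type*} [Field F] (bits : Fin n → Bool) (a : F) : F :=
  ∑ j : Fin n, (if bits j then (1 : F) else 0) * a ^ (j : ℕ)

section Aux
open Polynomial

noncomputable def pX {n : ℕ} {F : Type*} [Field F] (b : Fin n → Bool) : F[X] :=
  ∑ j : Fin n, C (if b j then (1:F) else 0) * X ^ (j : ℕ)

lemma pX_eval {n : ℕ} {F : Type*} [Field F] (b : Fin n → Bool) (a : F) :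
    (pX b).eval a = polyEval b a := by
  simp only [pX, polyEval, eval_finset_sum, eval_mul, eval_C, eval_pow, eval_X]

lemma pX_natDegree_le {n : ℕ} {F : Type*} [Field F] (b : Fin n → Bool) :
    (pX (F := F) b).natDegree ≤ n - 1 := by
  apply Polynomial.natDegree_sum_le_of_forall_le
  intro j _
  calc (C (if b j then (1:F) else 0) * X ^ (j:ℕ)).natDegree
      ≤ ((X : F[X]) ^ (j:ℕ)).natDegree := natDegree_C_mul_le _ _
    _ = (j : ℕ) := natDegree_X_pow _
    _ ≤ n - 1 := by have := j.isLt; omega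

lemma pX_coeff {n : ℕ} {F : Type*} [Field F] (b : Fin n → Bool) (j : Fin n) :
    (pX (F := F) b).coeff (j : ℕ) = if b j then 1 else 0 := by
  rw [pX, finset_sum_coeff, Finset.sum_eq_single j]
  · rw [coeff_C_mul, coeff_X_pow, if_pos rfl, mul_one]
  · intro k _ hk
    have hne : ¬ ((j : ℕ) = (k : ℕ)) := fun h => hk (Fin.val_injective h.symm)
    rw [coeff_C_mul, coeff_X_pow, if_neg hne, mul_zero]
  · simp

lemma pX_sub_ne {n : ℕ} {F : Type*} [Field F] {b b' : Fin n → Bool} (h : b ≠ b') :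
    pX (F := F) b - pX b' ≠ 0 := by
  obtain ⟨j, hj⟩ := Function.ne_iff.mp h
  intro h0
  have h1 := congrArg (fun q : F[X] => q.coeff (j : ℕ)) h0
  simp only [coeff_sub, pX_coeff, coeff_zero] at h1
  rcases hb : b j <;> rcases hb' : b' j <;> simp_all

lemma agree_card_le {n : ℕ} {F : Type*} [Field F] [Fintype F] [DecidableEq F]
    {b b' : Fin n → Bool} (h : b ≠ b') :
    (univ.filter (fun a : F => polyEval b a = polyEval b' a)).card ≤ n - 1 := by
  set q : F[X] := pX b - pX b' with hq
  have hq0 : q ≠ 0 := pX_sub_ne h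
  have hsub : univ.filter (fun a : F => polyEval b a = polyEval b' a) ⊆ q.roots.toFinset := by
    intro a ha
    simp only [mem_filter] at ha
    rw [Multiset.mem_toFinset, mem_roots hq0]
    simp [hq, IsRoot, eval_sub, pX_eval, ha.2, sub_eq_zero]
  calc _ ≤ q.roots.toFinset.card := card_le_card hsub
    _ ≤ Multiset.card q.roots := q.roots.toFinset_card_le
    _ ≤ q.natDegree := card_roots' q
    _ ≤ n - 1 := le_trans (natDegree_sub_le _ _)
        (max_le (pX_natDegree_le b) (pX_natDegree_le b'))

lemma takeWhile_append_eq {α : Type*} (p : α → Bool) (S u : List α)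
    (h : ∃ y ∈ S, p y = false) : (S ++ u).takeWhile p = S.takeWhile p := by
  induction S with
  | nil => simp at h
  | cons a T ih =>
    rcases h with ⟨y, hy, hpy⟩
    rcases List.mem_cons.mp hy with rfl | hyT
    · simp [List.takeWhile_cons, hpy]
    · by_cases hpa : p a = true
      · simp [List.takeWhile_cons, hpa, ih ⟨y, hyT, hpy⟩]
      · simp [List.takeWhile_cons, hpa]

def preL {α : Type*} [DecidableEq α] (S : List α) (x : α) : List α :=
  S.takeWhile (fun y => decide (y ≠ x)) ++ [x]

lemma mem_preL {α : Type*} [DecidableEq α] (S : List α) (x : α) : x ∈ preL S x := by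
  simp [preL]

lemma preL_prefix {α : Type*} [DecidableEq α] {S : List α} {x : α} (hx : x ∈ S) :
    preL S x <+: S := by
  induction S with
  | nil => simp at hx
  | cons a T ih =>
    by_cases hax : a = x
    · subst hax
      exact ⟨T, by simp [preL, List.takeWhile_cons]⟩
    · have hxT : x ∈ T := by
        rcases List.mem_cons.mp hx with h | h
        · exact absurd h.symm hax
        · exact h
      have hne : decide (a ≠ x) = true := by simp [hax]
      have : preL (a :: T) x = a :: preL T x := by
        simp only [preL, List.takeWhile_cons, hne, if_true]
        simp [hax]
      rw [this]
      obtain ⟨u, hu⟩ := ih hxT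
      exact ⟨u, by simp [hu]⟩

lemma preL_eq_of_prefix {α : Type*} [DecidableEq α] {S S' : List α} {x : α}
    (hx : x ∈ S) (h : S <+: S') : preL S' x = preL S x := by
  obtain ⟨u, rfl⟩ := h
  unfold preL
  rw [takeWhile_append_eq _ _ _ ⟨x, hx, by simp⟩]

end Aux

/-- **The `G ↦ G'` transformation preserves online matching while removing sharing.**
Let `G` be a bipartite graph `Γ : L × [D] → R` whose left nodes are labeled by
distinct strings in `{0,1}^n` (`n ≥ 2`), let `0 < ε < 1` and let `r ≥ 2`. If `G`
admits `(ℓ, r)` online matching up to size `K`, then the graph `G'` (with right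
side `R × 𝔽_t × 𝔽_t` and edges `Γ'(x,(i,a)) = (Γ(x,i), x(a), a)`, where
`t = 2^s` is the smallest power of two with `t ≥ (1/ε)(n−1)(r−1)` and `t ≥ 2`)
admits `((1−ε)·ℓ·t, 1)` online matching up to size `K`. -/
theorem gPrime_onlineMatching
    {L R : Type*} [Fintype L] [Fintype R]
    (n : ℕ) (hn : 2 ≤ n) (D : ℕ) (hD : 1 ≤ D) (Γ : L → Fin D → R)
    (lab : L → Fin n → Bool) (hlab : Function.Injective lab)
    (ε : ℝ) (hε0 : 0 < ε) (hε1 : ε < 1) (r : ℕ) (hr : 2 ≤ r)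
    (ℓ : ℝ) (K : ℕ)
    (hG : OnlineMatching Γ ℓ r K)
    (s : ℕ) (hs : 1 ≤ s)
    (ht : (1 / ε) * ((n : ℝ) - 1) * ((r : ℝ) - 1) ≤ ((2 : ℝ) ^ s))
    (hmin : ∀ s' : ℕ, 1 ≤ s' →
      (1 / ε) * ((n : ℝ) - 1) * ((r : ℝ) - 1) ≤ ((2 : ℝ) ^ s') → s ≤ s') :
    OnlineMatching
      (fun (x : L) (q : Fin D × GaloisField 2 s) =>
        ((Γ x q.1, polyEval (lab x) q.2, q.2) : R × GaloisField 2 s × GaloisField 2 s))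
      ((1 - ε) * ℓ * ((2 : ℝ) ^ s)) 1 K := by
  classical
  obtain ⟨f, hf1, hf2⟩ := hG
  set F := GaloisField 2 s with hF
  haveI : Fintype F := Fintype.ofFinite F
  have hcardF : ((Fintype.card F : ℕ) : ℝ) = 2 ^ s := by
    have := GaloisField.card 2 s (by omega)
    rw [Nat.card_eq_fintype_card] at this
    rw [this]; push_cast; ring
  have hεt : ((n : ℝ) - 1) * ((r : ℝ) - 1) ≤ ε * 2 ^ s := by
    have h1 := mul_le_mul_of_nonneg_left ht hε0.le
    have h2 : ε * ((1 / ε) * ((n : ℝ) - 1) * ((r : ℝ) - 1))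
        = ((n : ℝ) - 1) * ((r : ℝ) - 1) := by
      field_simp
    rw [h2] at h1
    exact h1
  have hlabne : ∀ x y : L, x ≠ y → lab x ≠ lab y := fun x y hxy h => hxy (hlab h)
  -- the good evaluation points for a node x, request list prefix P and edge i
  set A : List L → L → Fin D → Finset F := fun P x i =>
    univ.filter (fun a : F => ∀ y ∈ P, y ≠ x →
      (∃ i' ∈ f P y, Γ y i' = Γ x i) → polyEval (lab y) a ≠ polyEval (lab x) a) with hA
  set f' : List L → L → Finset (Fin D × F) := fun S x =>
    if x ∈ S then (f (preL S x) x).biUnion (fun i => {i} ×ˢ A (preL S x) x i) else ∅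
    with hf'
  have hmemf' : ∀ (S : List L) (x : L), x ∈ S → ∀ q : Fin D × F,
      q ∈ f' S x ↔ q.1 ∈ f (preL S x) x ∧ q.2 ∈ A (preL S x) x q.1 := by
    intro S x hx q
    rw [hf']
    simp only [if_pos hx, Finset.mem_biUnion, Finset.mem_product, Finset.mem_singleton]
    constructor
    · rintro ⟨i, hi, h1, h2⟩; exact ⟨h1 ▸ hi, h1 ▸ h2⟩
    · rintro ⟨h1, h2⟩; exact ⟨q.1, h1, rfl, h2⟩
  -- cardinality of A
  have hAcard : ∀ (P : List L) (x : L), P.length ≤ K → x ∈ P → ∀ i : Fin D, i ∈ f P x →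
      (1 - ε) * 2 ^ s ≤ ((A P x i).card : ℝ) := by
    intro P x hPK hxP i hi
    set T : Finset L := univ.filter (fun z => z ∈ P ∧ ∃ j ∈ f P z, Γ z j = Γ x i) with hT
    have hTr : T.card ≤ r := by
      have h2 := hf2 P hPK (Γ x i)
      have hset : {z : L | z ∈ P ∧ ∃ j ∈ f P z, Γ z j = Γ x i} = ↑T := by
        ext z; simp [hT]
      rwa [hset, Set.ncard_coe_finset] at h2
    have hxT : x ∈ T := by
      simp only [hT, Finset.mem_filter, Finset.mem_univ, true_and]
      exact ⟨hxP, i, hi, rfl⟩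
    have hTe : (T.erase x).card ≤ r - 1 := by
      rw [Finset.card_erase_of_mem hxT]; omega
    -- the bad points
    have hBsub : univ \ A P x i ⊆ (T.erase x).biUnion
        (fun y => univ.filter (fun a : F => polyEval (lab x) a = polyEval (lab y) a)) := by
      intro a ha
      rw [Finset.mem_sdiff] at ha
      have ha2 := ha.2
      rw [hA] at ha2
      simp only [Finset.mem_filter, Finset.mem_univ, true_and] at ha2
      push_neg at ha2
      obtain ⟨y, hyP, hyx, hconf, heval⟩ := ha2
      refine Finset.mem_biUnion.mpr ⟨y, Finset.mem_erase.mpr ⟨hyx, ?_⟩, ?_⟩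
      · simp only [hT, Finset.mem_filter, Finset.mem_univ, true_and]
        exact ⟨hyP, hconf⟩
      · simp only [Finset.mem_filter, Finset.mem_univ, true_and]
        exact heval.symm
    have hBcard : (univ \ A P x i).card ≤ (r - 1) * (n - 1) := by
      calc (univ \ A P x i).card ≤ _ := Finset.card_le_card hBsub
        _ ≤ ∑ y ∈ T.erase x, ((univ.filter
              (fun a : F => polyEval (lab x) a = polyEval (lab y) a)).card) :=
            Finset.card_biUnion_le
        _ ≤ ∑ _y ∈ T.erase x, (n - 1) := by
            apply Finset.sum_le_sum
            intro y hy
            exact agree_card_le (hlabne x y (Finset.mem_erase.mp hy).1.symm)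
        _ = (T.erase x).card * (n - 1) := by rw [Finset.sum_const, smul_eq_mul]
        _ ≤ (r - 1) * (n - 1) := Nat.mul_le_mul_right _ hTe
    have hsplit : ((A P x i).card : ℝ) = 2 ^ s - ((univ \ A P x i).card : ℝ) := by
      have h1 : (univ \ A P x i).card = Fintype.card F - (A P x i).card := by
        rw [Finset.card_sdiff_of_subset (Finset.subset_univ _), Finset.card_univ]
      have h2 : (A P x i).card ≤ Fintype.card F := by
        rw [← Finset.card_univ]; exact Finset.card_le_card (Finset.subset_univ _)
      rw [h1, Nat.cast_sub h2, hcardF]; ring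
    have hcast : (((r - 1) * (n - 1) : ℕ) : ℝ) = ((r : ℝ) - 1) * ((n : ℝ) - 1) := by
      push_cast [Nat.cast_sub (by omega : 1 ≤ r), Nat.cast_sub (by omega : 1 ≤ n)]
      ring
    have hB2 : ((univ \ A P x i).card : ℝ) ≤ ε * 2 ^ s := by
      calc ((univ \ A P x i).card : ℝ) ≤ (((r - 1) * (n - 1) : ℕ) : ℝ) := by
            exact_mod_cast hBcard
        _ = ((r : ℝ) - 1) * ((n : ℝ) - 1) := hcast
        _ ≤ ε * 2 ^ s := by linarith [hεt]
    rw [hsplit]; linarith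
  refine ⟨f', fun S hSK x => ⟨fun hx => by rw [hf']; exact if_neg hx, fun hx => ?_⟩,
    fun S hSK p' => ?_⟩
  · -- size and stability
    have hPpre := preL_prefix hx
    have hPK : (preL S x).length ≤ K := le_trans hPpre.length_le hSK
    have hxP : x ∈ preL S x := mem_preL S x
    obtain ⟨hfc, hfs⟩ := (hf1 (preL S x) hPK x).2 hxP
    constructor
    · -- cardinality
      have hdisj : ∀ i ∈ f (preL S x) x, ∀ j ∈ f (preL S x) x, i ≠ j →
          Disjoint ({i} ×ˢ A (preL S x) x i) ({j} ×ˢ A (preL S x) x j) := by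
        intro i _ j _ hij
        rw [Finset.disjoint_left]
        intro q hqi hqj
        rw [Finset.mem_product, Finset.mem_singleton] at hqi hqj
        exact hij (hqi.1 ▸ hqj.1 ▸ rfl)
      have hcardeq : (f' S x).card = ∑ i ∈ f (preL S x) x, (A (preL S x) x i).card := by
        rw [hf']
        simp only [if_pos hx]
        rw [Finset.card_biUnion hdisj]
        apply Finset.sum_congr rfl
        intro i _
        rw [Finset.card_product, Finset.card_singleton, one_mul]
      have hsum : ((f (preL S x) x).card : ℝ) * ((1 - ε) * 2 ^ s)
          ≤ ((f' S x).card : ℝ) := by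
        rw [hcardeq]
        push_cast
        have := Finset.card_nsmul_le_sum (f (preL S x) x)
          (fun i => ((A (preL S x) x i).card : ℝ)) ((1 - ε) * 2 ^ s)
          (fun i hi => hAcard (preL S x) x hPK hxP i hi)
        rwa [nsmul_eq_mul] at this
      have hpos : (0 : ℝ) ≤ (1 - ε) * 2 ^ s :=
        mul_nonneg (by linarith) (by positivity)
      calc (1 - ε) * ℓ * 2 ^ s = ℓ * ((1 - ε) * 2 ^ s) := by ring
        _ ≤ ((f (preL S x) x).card : ℝ) * ((1 - ε) * 2 ^ s) :=
            mul_le_mul_of_nonneg_right hfc hpos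
        _ ≤ _ := hsum
    · -- stability
      intro S' hS'K hSS'
      have hx' : x ∈ S' := hSS'.subset hx
      rw [hf']
      simp only [if_pos hx, if_pos hx']
      rw [preL_eq_of_prefix hx hSS']
  · -- right degree 1
    have main : ∀ x y : L, x ∈ S → y ∈ S → x ≠ y →
        ∀ qx qy : Fin D × F,
        qx ∈ f' S x → qy ∈ f' S y →
        qx.2 = qy.2 → Γ x qx.1 = Γ y qy.1 →
        polyEval (lab x) qx.2 = polyEval (lab y) qy.2 →
        preL S x <+: preL S y → False := by
      intro x y hxS hyS hxy qx qy hqx hqy ha hΓ hv hpre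
      obtain ⟨hqx1, hqx2⟩ := (hmemf' S x hxS qx).mp hqx
      obtain ⟨hqy1, hqy2⟩ := (hmemf' S y hyS qy).mp hqy
      have hPKx : (preL S x).length ≤ K := le_trans (preL_prefix hxS).length_le hSK
      have hPKy : (preL S y).length ≤ K := le_trans (preL_prefix hyS).length_le hSK
      have hxPy : x ∈ preL S y := hpre.subset (mem_preL S x)
      have hstab : f (preL S x) x = f (preL S y) x :=
        ((hf1 (preL S x) hPKx x).2 (mem_preL S x)).2 (preL S y) hPKy hpre
      rw [hA] at hqy2
      simp only [Finset.mem_filter, Finset.mem_univ, true_and] at hqy2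
      have hcond := hqy2 x hxPy hxy ⟨qx.1, hstab ▸ hqx1, hΓ⟩
      rw [ha] at hv
      exact hcond hv
    have hsub : {x : L | x ∈ S ∧ ∃ q ∈ f' S x,
        (Γ x q.1, polyEval (lab x) q.2, q.2) = p'}.Subsingleton := by
      intro x hx y hy
      by_contra hxy
      obtain ⟨hxS, qx, hqx, hΓx⟩ := hx
      obtain ⟨hyS, qy, hqy, hΓy⟩ := hy
      have heq : (Γ x qx.1, polyEval (lab x) qx.2, qx.2)
          = (Γ y qy.1, polyEval (lab y) qy.2, qy.2) := by rw [hΓx, hΓy]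
      have h1 : Γ x qx.1 = Γ y qy.1 := congrArg Prod.fst heq
      have h2 : polyEval (lab x) qx.2 = polyEval (lab y) qy.2 :=
        congrArg (fun z => z.2.1) heq
      have h3 : qx.2 = qy.2 := congrArg (fun z => z.2.2) heq
      rcases List.prefix_or_prefix_of_prefix (preL_prefix hxS) (preL_prefix hyS) with h | h
      · exact main x y hxS hyS hxy qx qy hqx hqy h3 h1 h2 h
      · exact main y x hyS hxS (Ne.symm hxy) qy qx hqy hqx h3.symm h1.symm h2.symm h
    rcases Set.Subsingleton.eq_empty_or_singleton hsub with h | ⟨c, h⟩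
    · rw [h]; simp
    · rw [h]; simp
end

section
/- Let C : {0,1}^n × {0,1}^d → {0,1}^m and let k_max ≤ n and e be nonnegative integers. Suppose C is a k →_ε (k+d−e) condenser for every nonnegative integer k ≤ k_max. Then m ≥ k_max + d − e, and in the graph corresponding to C, for every set S ⊆ {0,1}^n with |S| = 2^k for some nonnegative integer k ≤ k_max, one has excess_S(2^e) ≤ ε·2^d·|S|. -/
open Finset

/-- `P` is a probability distribution on the finite type `α`. -/
def IsDist {α : Type*} [Fintype α] (P : α → ℝ) : Prop :=
  (∀ a, 0 ≤ P a) ∧ ∑ a : α, P a = 1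

/-- `P` has min-entropy at least `k`: every point has probability at most `2^(−k)`. -/
noncomputable def MinEntropyGe {α : Type*} (P : α → ℝ) (k : ℝ) : Prop :=
  ∀ a, P a ≤ (2 : ℝ) ^ (-k)

/-- `P` and `Q` are `ε`-close: their statistical distance is at most `ε`. -/
def CloseDist {α : Type*} [Fintype α] (P Q : α → ℝ) (ε : ℝ) : Prop :=
  ∀ T : Finset α, |∑ a ∈ T, P a - ∑ a ∈ T, Q a| ≤ ε

/-- The distribution of `C(X, U_d)` where `X` has distribution `P` and `U_d` is
uniform on `{0,1}^d` and independent of `X`. -/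
noncomputable def outDist {n d m : ℕ} (C : (Fin n → Bool) → (Fin d → Bool) → (Fin m → Bool))
    (P : (Fin n → Bool) → ℝ) (y : Fin m → Bool) : ℝ :=
  ∑ x : Fin n → Bool, ∑ ρ : Fin d → Bool, if C x ρ = y then P x / 2 ^ d else 0

/-- `C` is a `k →_ε k'` condenser: for every distribution `X` on `{0,1}^n` with
min-entropy at least `k`, the distribution of `C(X, U_d)` is `ε`-close to some
distribution on `{0,1}^m` with min-entropy at least `k'`. -/
noncomputable def IsCondenser {n d m : ℕ}
    (C : (Fin n → Bool) → (Fin d → Bool) → (Fin m → Bool)) (k : ℝ) (ε : ℝ) (k' : ℝ) : Prop :=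
  ∀ P : (Fin n → Bool) → ℝ, IsDist P → MinEntropyGe P k →
    ∃ Q : (Fin m → Bool) → ℝ, IsDist Q ∧ MinEntropyGe Q k' ∧ CloseDist (outDist C P) Q ε

noncomputable def unifD {α : Type*} [Fintype α] [DecidableEq α] (S : Finset α) : α → ℝ :=
  fun a => if a ∈ S then (S.card : ℝ)⁻¹ else 0

lemma unifD_isDist {α : Type*} [Fintype α] [DecidableEq α] (S : Finset α) (hS : S.Nonempty) :
    IsDist (unifD S) := by
  constructor
  · intro a; unfold unifD; split <;> positivity
  · have hc : (S.card : ℝ) ≠ 0 :=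
      Nat.cast_ne_zero.mpr (card_pos.mpr hS).ne'
    simp [unifD, Finset.sum_ite_mem, mul_inv_cancel₀ hc]

lemma rpow_neg_nat (k : ℕ) : (2 : ℝ) ^ (-(k : ℝ)) = ((2 : ℝ) ^ k)⁻¹ := by
  rw [Real.rpow_neg (by norm_num), Real.rpow_natCast]

lemma unifD_minEntropy {α : Type*} [Fintype α] [DecidableEq α] (S : Finset α) (k : ℕ)
    (hcard : S.card = 2 ^ k) : MinEntropyGe (unifD S) k := by
  intro a
  rw [rpow_neg_nat]
  unfold unifD
  split
  · simp [hcard]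
  · positivity

lemma outDist_unifD {n d m : ℕ} (C : (Fin n → Bool) → (Fin d → Bool) → (Fin m → Bool))
    (S : Finset (Fin n → Bool)) (y : Fin m → Bool) :
    outDist C (unifD S) y
      = (edgeCount (fun x (ρ : Fin d → Bool) => C x ρ) S y : ℝ) / ((S.card : ℝ) * 2 ^ d) := by
  unfold outDist
  have h1 : ∀ x : Fin n → Bool, ∀ ρ : Fin d → Bool,
      (if C x ρ = y then unifD S x / 2 ^ d else 0)
      = if x ∈ S ∧ C x ρ = y then ((S.card : ℝ) * 2 ^ d)⁻¹ else 0 := by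
    intro x ρ
    unfold unifD
    by_cases hx : x ∈ S <;> by_cases hy : C x ρ = y <;>
      simp [hx, hy, mul_inv, div_eq_mul_inv, mul_comm]
  simp only [h1]
  rw [← Finset.sum_product']
  rw [Finset.sum_ite, Finset.sum_const, Finset.sum_const]
  have hfe : ((Finset.univ ×ˢ Finset.univ).filter
        (fun q : (Fin n → Bool) × (Fin d → Bool) => q.1 ∈ S ∧ C q.1 q.2 = y))
      = ((S ×ˢ Finset.univ).filter fun q => C q.1 q.2 = y) := by
    ext q; simp [Finset.mem_filter, Finset.mem_product, and_assoc]
  rw [hfe]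
  simp [edgeCount, div_eq_mul_inv, mul_comm]

/-- **Condenser ⇒ bounded excess** (first half of the condenser / bounded right
degree equivalence). If `C : {0,1}^n × {0,1}^d → {0,1}^m` is a `k →_ε (k+d−e)`
condenser for every nonnegative integer `k ≤ k_max` (where `k_max ≤ n`), then
`m ≥ k_max + d − e` and, in the graph corresponding to `C`, every set
`S ⊆ {0,1}^n` of size `2^k` for some `k ≤ k_max` satisfies
`excess_S(2^e) ≤ ε·2^d·|S|`. -/
theorem condenser_implies_boundedExcess
    (n d m kmax e : ℕ) (hkmax : kmax ≤ n) (ε : ℝ)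
    (C : (Fin n → Bool) → (Fin d → Bool) → (Fin m → Bool))
    (hcond : ∀ k : ℕ, k ≤ kmax → IsCondenser C (k : ℝ) ε ((k : ℝ) + (d : ℝ) - (e : ℝ))) :
    kmax + d ≤ m + e ∧
    ∀ S : Finset (Fin n → Bool), (∃ k : ℕ, k ≤ kmax ∧ S.card = 2 ^ k) →
      (excess (fun x (ρ : Fin d → Bool) => C x ρ) S (2 ^ e) : ℝ) ≤
        ε * (2 : ℝ) ^ d * (S.card : ℝ) := by
  constructor
  · -- part 1 : kmax + d ≤ m + e
    have hle : 2 ^ kmax ≤ (Finset.univ : Finset (Fin n → Bool)).card := by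
      rw [Finset.card_univ]
      have : Fintype.card (Fin n → Bool) = 2 ^ n := by simp
      rw [this]
      exact Nat.pow_le_pow_right (by norm_num) hkmax
    obtain ⟨S, -, hScard⟩ := Finset.exists_subset_card_eq hle
    have hSne : S.Nonempty := Finset.card_pos.mp (by rw [hScard]; positivity)
    obtain ⟨Q, hQd, hQme, -⟩ := hcond kmax le_rfl (unifD S) (unifD_isDist S hSne)
      (unifD_minEntropy S kmax hScard)
    set K : ℝ := (kmax : ℝ) + (d : ℝ) - (e : ℝ) with hK
    have h1 : (1 : ℝ) ≤ (2 : ℝ) ^ m * (2 : ℝ) ^ (-K) := by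
      calc (1 : ℝ) = ∑ a, Q a := hQd.2.symm
        _ ≤ ∑ _a : Fin m → Bool, (2 : ℝ) ^ (-K) :=
            Finset.sum_le_sum (fun a _ => hQme a)
        _ = (2 : ℝ) ^ m * (2 : ℝ) ^ (-K) := by
            rw [Finset.sum_const, Finset.card_univ]
            have : Fintype.card (Fin m → Bool) = 2 ^ m := by simp
            rw [this]; push_cast; ring
    have h2 : (2 : ℝ) ^ K ≤ (2 : ℝ) ^ (m : ℝ) := by
      have hp : (0 : ℝ) < (2 : ℝ) ^ K := Real.rpow_pos_of_pos two_pos K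
      have h3 := mul_le_mul_of_nonneg_left h1 hp.le
      rw [mul_one] at h3
      calc (2 : ℝ) ^ K ≤ (2 : ℝ) ^ K * ((2 : ℝ) ^ m * (2 : ℝ) ^ (-K)) := h3
        _ = (2 : ℝ) ^ (m : ℝ) := by
            rw [← Real.rpow_natCast 2 m, mul_comm ((2:ℝ) ^ (m:ℝ)) _, ← mul_assoc,
              ← Real.rpow_add two_pos]
            simp
    have hKm : K ≤ (m : ℝ) := (Real.rpow_le_rpow_left_iff one_lt_two).mp h2
    have hfin : (kmax : ℝ) + (d : ℝ) ≤ (m : ℝ) + (e : ℝ) := by rw [hK] at hKm; linarith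
    exact_mod_cast hfin
  · -- part 2
    rintro S ⟨k, hk, hScard⟩
    have hSne : S.Nonempty := Finset.card_pos.mp (by rw [hScard]; positivity)
    obtain ⟨Q, hQd, hQme, hclose⟩ := hcond k hk (unifD S) (unifD_isDist S hSne)
      (unifD_minEntropy S k hScard)
    set Γ : (Fin n → Bool) → (Fin d → Bool) → (Fin m → Bool) := fun x ρ => C x ρ with hΓ
    set T : Finset (Fin m → Bool) :=
      Finset.univ.filter (fun p => 2 ^ e ≤ edgeCount Γ S p) with hT
    have hcpos : (0 : ℝ) < (S.card : ℝ) * 2 ^ d := by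
      have : 0 < S.card := Finset.card_pos.mpr hSne
      positivity
    -- cast of excess
    have h0 : excess Γ S (2 ^ e) = ∑ p ∈ T, (edgeCount Γ S p - 2 ^ e) := by
      refine (Finset.sum_subset (Finset.subset_univ T) ?_).symm
      intro p _ hp
      simp only [hT, Finset.mem_filter, Finset.mem_univ, true_and, not_le] at hp
      omega
    have hex : (excess Γ S (2 ^ e) : ℝ) = ∑ p ∈ T, ((edgeCount Γ S p : ℝ) - 2 ^ e) := by
      rw [h0, Nat.cast_sum]
      refine Finset.sum_congr rfl fun p hp => ?_
      simp only [hT, Finset.mem_filter, Finset.mem_univ, true_and] at hp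
      rw [Nat.cast_sub hp]
      push_cast
      ring
    -- bound on Q
    have hqeq : (2 : ℝ) ^ (-((k : ℝ) + (d : ℝ) - (e : ℝ)))
        = (2 : ℝ) ^ e / ((S.card : ℝ) * 2 ^ d) := by
      have hcc : (S.card : ℝ) = (2 : ℝ) ^ k := by rw [hScard]; push_cast; ring
      rw [hcc, show -((k : ℝ) + (d : ℝ) - (e : ℝ)) = (e : ℝ) - ((k : ℝ) + (d : ℝ)) by ring,
        Real.rpow_sub two_pos, Real.rpow_add two_pos,
        Real.rpow_natCast, Real.rpow_natCast, Real.rpow_natCast]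
    have hQb : ∀ p, Q p ≤ (2 : ℝ) ^ e / ((S.card : ℝ) * 2 ^ d) := fun p => hqeq ▸ hQme p
    -- main chain
    have h1 : ∑ p ∈ T, outDist C (unifD S) p - ∑ p ∈ T, Q p ≤ ε :=
      (le_abs_self _).trans (hclose T)
    have h3 : ∑ p ∈ T, outDist C (unifD S) p
        = ∑ p ∈ T, (edgeCount Γ S p : ℝ) / ((S.card : ℝ) * 2 ^ d) :=
      Finset.sum_congr rfl fun p _ => outDist_unifD C S p
    have h2 : ∑ p ∈ T, Q p ≤ ∑ p ∈ T, (2 : ℝ) ^ e / ((S.card : ℝ) * 2 ^ d) :=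
      Finset.sum_le_sum fun p _ => hQb p
    have hdiv : (excess Γ S (2 ^ e) : ℝ) / ((S.card : ℝ) * 2 ^ d) ≤ ε := by
      rw [hex, Finset.sum_div]
      have hsplit : ∀ p ∈ T, ((edgeCount Γ S p : ℝ) - 2 ^ e) / ((S.card : ℝ) * 2 ^ d)
          = (edgeCount Γ S p : ℝ) / ((S.card : ℝ) * 2 ^ d)
            - (2 : ℝ) ^ e / ((S.card : ℝ) * 2 ^ d) := fun p _ => sub_div _ _ _
      rw [Finset.sum_congr rfl hsplit, Finset.sum_sub_distrib]
      linarith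
    rw [div_le_iff₀ hcpos] at hdiv
    calc (excess Γ S (2 ^ e) : ℝ) ≤ ε * ((S.card : ℝ) * 2 ^ d) := hdiv
      _ = ε * (2 : ℝ) ^ d * (S.card : ℝ) := by ring
end

section
/- Let C : {0,1}^n × {0,1}^d → {0,1}^m and let k_max ≤ n and e be nonnegative integers. Suppose the graph corresponding to C has (2^e, 2^{k_max}, ε) bounded right degree and m ≥ k_max + d − e. Then for every set S ⊆ {0,1}^n with |S| = 2^k for some nonnegative integer k ≤ k_max, there exists a function Γ′ : S × {0,1}^d → {0,1}^m such that the number of pairs (x,ρ) ∈ S × {0,1}^d with Γ′(x,ρ) ≠ C(x,ρ) is at most ε·2^d·|S|, and every p ∈ {0,1}^m satisfies Γ′(x,ρ) = p for at most 2^e pairs (x,ρ) ∈ S × {0,1}^d. (That is, one can redirect at most an ε fraction of the edges leaving S so that every right node has at most 2^e edges coming from S.) -/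
open Finset

lemma redistribute {A R : Type*} [DecidableEq A] [Fintype R] [DecidableEq R]
    (E : Finset A) (r : ℕ) (hE : E.card ≤ r * Fintype.card R)
    (g : A → R) :
    ∃ g' : A → R,
      (E.filter fun a => g' a ≠ g a).card ≤ ∑ p : R, ((E.filter fun a => g a = p).card - r) ∧
      ∀ p : R, (E.filter fun a => g' a = p).card ≤ r := by
  generalize hN : (∑ p : R, ((E.filter fun a => g a = p).card - r)) = N
  induction N generalizing g with
  | zero =>
    refine ⟨g, by simp, fun p => ?_⟩
    have := Finset.sum_eq_zero_iff.mp hN p (mem_univ p)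
    omega
  | succ N ih =>
    have hsum : E.card = ∑ p : R, (E.filter fun a => g a = p).card :=
      Finset.card_eq_sum_card_fiberwise (fun x _ => mem_univ (g x))
    obtain ⟨p, -, hp⟩ : ∃ p ∈ (univ : Finset R), (E.filter fun a => g a = p).card - r ≠ 0 := by
      apply Finset.exists_ne_zero_of_sum_ne_zero
      rw [hN]; omega
    have hpr : r < (E.filter fun a => g a = p).card := by omega
    obtain ⟨p', hp'⟩ : ∃ p', (E.filter fun a => g a = p').card < r := by
      by_contra h
      push_neg at h
      have : r * Fintype.card R < E.card := by
        rw [hsum]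
        calc r * Fintype.card R = ∑ _p : R, r := by
              simp [Finset.sum_const, mul_comm]
          _ < _ := Finset.sum_lt_sum (fun q _ => h q) ⟨p, mem_univ p, hpr⟩
      omega
    have hpp' : p ≠ p' := by intro h; rw [h] at hpr; omega
    obtain ⟨a, ha⟩ : ∃ a, a ∈ E.filter fun x => g x = p :=
      Finset.card_pos.mp (by omega)
    rw [mem_filter] at ha
    set g₁ := Function.update g a p' with hg₁
    have hup : ∀ x, x ≠ a → g₁ x = g x := fun x hx => Function.update_of_ne hx _ _
    have hua : g₁ a = p' := Function.update_self _ _ _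
    have h1 : (E.filter fun x => g₁ x = p) = (E.filter fun x => g x = p).erase a := by
      ext x
      simp only [mem_erase, mem_filter]
      by_cases hx : x = a
      · subst hx
        simp [hua, hpp'.symm, Ne.symm hpp']
      · simp [hup x hx, hx]
    have h2 : (E.filter fun x => g₁ x = p') = insert a (E.filter fun x => g x = p') := by
      ext x
      simp only [mem_insert, mem_filter]
      by_cases hx : x = a
      · subst hx; simp [hua, ha.1]
      · simp [hup x hx, hx]
    have c1 : (E.filter fun x => g₁ x = p).card = (E.filter fun x => g x = p).card - 1 := by
      rw [h1, Finset.card_erase_of_mem (by simp [ha.1, ha.2])]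
    have c2 : (E.filter fun x => g₁ x = p').card = (E.filter fun x => g x = p').card + 1 := by
      rw [h2, Finset.card_insert_of_notMem (by simp [ha.2, hpp'])]
    have key : ∀ q ∈ (univ : Finset R).erase p,
        ((E.filter fun x => g₁ x = q).card - r) = ((E.filter fun x => g x = q).card - r) := by
      intro q hq
      rw [mem_erase] at hq
      by_cases hq' : q = p'
      · subst hq'; omega
      · have : (E.filter fun x => g₁ x = q) = (E.filter fun x => g x = q) := by
          ext x
          simp only [mem_filter]
          by_cases hx : x = a
          · subst hx; simp [hua, ha.2, Ne.symm hq.1, Ne.symm hq']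
          · simp [hup x hx]
        rw [this]
    have e1 : ((E.filter fun x => g₁ x = p).card - r)
        + ∑ q ∈ (univ : Finset R).erase p, ((E.filter fun x => g₁ x = q).card - r)
        = ∑ q : R, ((E.filter fun x => g₁ x = q).card - r) :=
      Finset.add_sum_erase univ (fun q => (E.filter fun x => g₁ x = q).card - r) (mem_univ p)
    have e2 : ((E.filter fun x => g x = p).card - r)
        + ∑ q ∈ (univ : Finset R).erase p, ((E.filter fun x => g x = q).card - r)
        = ∑ q : R, ((E.filter fun x => g x = q).card - r) :=
      Finset.add_sum_erase univ (fun q => (E.filter fun x => g x = q).card - r) (mem_univ p)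
    have hsame := Finset.sum_congr rfl key
    have hN₁ : (∑ q : R, ((E.filter fun x => g₁ x = q).card - r)) = N := by
      rw [hN] at e2
      omega
    obtain ⟨g', hc, hfib⟩ := ih g₁ hN₁
    refine ⟨g', ?_, hfib⟩
    have hsub : (E.filter fun x => g' x ≠ g x) ⊆ insert a (E.filter fun x => g' x ≠ g₁ x) := by
      intro x hx
      rw [mem_filter] at hx
      rw [mem_insert]
      by_cases hxa : x = a
      · exact Or.inl hxa
      · exact Or.inr (mem_filter.mpr ⟨hx.1, by rw [hup x hxa]; exact hx.2⟩)
    calc (E.filter fun x => g' x ≠ g x).card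
        ≤ (insert a (E.filter fun x => g' x ≠ g₁ x)).card := Finset.card_le_card hsub
      _ ≤ (E.filter fun x => g' x ≠ g₁ x).card + 1 := Finset.card_insert_le _ _
      _ ≤ N + 1 := by omega

/-- **Edge redirection claim.** If the graph corresponding to
`C : {0,1}^n × {0,1}^d → {0,1}^m` has `(2^e, 2^{k_max}, ε)` bounded right degree
and `m ≥ k_max + d − e`, then for every `S ⊆ {0,1}^n` with `|S| = 2^k` for some
`k ≤ k_max`, one can redirect at most `ε·2^d·|S|` of the edges leaving `S` so that
every right node has at most `2^e` edges coming from `S`. -/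
theorem redirect_edges
    (n d m kmax e : ℕ) (hkmax : kmax ≤ n) (ε : ℝ)
    (C : (Fin n → Bool) → (Fin d → Bool) → (Fin m → Bool))
    (hbd : BoundedRightDegree (fun x (ρ : Fin d → Bool) => C x ρ) (2 ^ e) (2 ^ kmax) ε)
    (hm : kmax + d ≤ m + e) :
    ∀ S : Finset (Fin n → Bool), (∃ k : ℕ, k ≤ kmax ∧ S.card = 2 ^ k) →
      ∃ Γ' : (Fin n → Bool) → (Fin d → Bool) → (Fin m → Bool),
        (((S ×ˢ (Finset.univ : Finset (Fin d → Bool))).filter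
            (fun q => Γ' q.1 q.2 ≠ C q.1 q.2)).card : ℝ) ≤ ε * (2 : ℝ) ^ d * (S.card : ℝ) ∧
        ∀ p : Fin m → Bool,
          ((S ×ˢ (Finset.univ : Finset (Fin d → Bool))).filter
            (fun q => Γ' q.1 q.2 = p)).card ≤ 2 ^ e := by
  rintro S ⟨k, hk, hScard⟩
  set E := S ×ˢ (Finset.univ : Finset (Fin d → Bool)) with hEdef
  have hcardι : Fintype.card (Fin d → Bool) = 2 ^ d := by
    simp [Fintype.card_fun]
  have hcardR : Fintype.card (Fin m → Bool) = 2 ^ m := by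
    simp [Fintype.card_fun]
  have hE : E.card ≤ 2 ^ e * Fintype.card (Fin m → Bool) := by
    rw [hEdef, Finset.card_product, Finset.card_univ, hcardι, hcardR, hScard,
      ← pow_add, ← pow_add]
    exact Nat.pow_le_pow_right (by norm_num) (by omega)
  obtain ⟨g, hg1, hg2⟩ := redistribute E (2 ^ e) hE (fun q => C q.1 q.2)
  refine ⟨fun x ρ => g (x, ρ), ?_, fun p => hg2 p⟩
  have hexc : (∑ p : Fin m → Bool, ((E.filter fun a => C a.1 a.2 = p).card - 2 ^ e))
      = excess (fun x (ρ : Fin d → Bool) => C x ρ) S (2 ^ e) := rfl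
  have hbS := hbd S (by rw [hScard]; exact Nat.pow_le_pow_right (by norm_num) hk)
  rw [hcardι] at hbS
  calc ((E.filter fun q => g (q.1, q.2) ≠ C q.1 q.2).card : ℝ)
      ≤ ((∑ p : Fin m → Bool, ((E.filter fun a => C a.1 a.2 = p).card - 2 ^ e) : ℕ) : ℝ) := by
        exact_mod_cast hg1
    _ ≤ ε * (2 : ℝ) ^ d * (S.card : ℝ) := by
        rw [hexc]
        exact_mod_cast hbS
end

section
/- Let C : {0,1}^n × {0,1}^d → {0,1}^m and let k_max ≤ n and e be nonnegative integers, and let ε ≥ 0. If the graph corresponding to C has (2^e, 2^{k_max}, ε) bounded right degree and m ≥ k_max + d − e, then C is a k →_ε (k+d−e) condenser for every nonnegative integer k ≤ k_max. -/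
open Finset

private lemma cast_sub_max (a b : ℕ) : ((a - b : ℕ) : ℝ) = max ((a : ℝ) - b) 0 := by
  rcases le_total b a with h | h
  · rw [Nat.cast_sub h, max_eq_left (sub_nonneg.mpr (Nat.cast_le.mpr h))]
  · rw [Nat.sub_eq_zero_of_le h,
      max_eq_right (sub_nonpos.mpr (Nat.cast_le.mpr h : (a : ℝ) ≤ b))]
    simp

private lemma min_add_max_sub (a t : ℝ) : min a t + max (a - t) 0 = a := by
  rcases le_total a t with h | h
  · rw [min_eq_left h, max_eq_right (sub_nonpos.mpr h)]; ring
  · rw [min_eq_right h, max_eq_left (sub_nonneg.mpr h)]; ring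

private lemma max_div_zero (a K : ℝ) (hK : 0 < K) : max (a / K) 0 = max a 0 / K := by
  rcases le_total a 0 with h | h
  · rw [max_eq_right h, max_eq_right (div_nonpos_iff.mpr (Or.inr ⟨h, hK.le⟩)), zero_div]
  · rw [max_eq_left h, max_eq_left (div_nonneg h hK.le)]

private lemma convex_max_ineq (lam a b r : ℝ) (h0 : 0 ≤ lam) (h1 : lam ≤ 1) :
    max (lam * a + (1 - lam) * b - r) 0
      ≤ lam * max (a - r) 0 + (1 - lam) * max (b - r) 0 := by
  have h1' : 0 ≤ 1 - lam := by linarith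
  apply max_le
  · calc lam * a + (1 - lam) * b - r = lam * (a - r) + (1 - lam) * (b - r) := by ring
      _ ≤ lam * max (a - r) 0 + (1 - lam) * max (b - r) 0 :=
        add_le_add (mul_le_mul_of_nonneg_left (le_max_left _ _) h0)
          (mul_le_mul_of_nonneg_left (le_max_left _ _) h1')
  · exact add_nonneg (mul_nonneg h0 (le_max_right _ _)) (mul_nonneg h1' (le_max_right _ _))

open scoped Classical in
private lemma sum_zero_one {α : Type*} (s : Finset α) (w : α → ℝ)
    (h : ∀ x ∈ s, w x = 0 ∨ w x = 1) :
    ∑ x ∈ s, w x = ((s.filter fun x => w x = 1).card : ℝ) := by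
  rw [Finset.card_filter]
  push_cast
  refine Finset.sum_congr rfl fun x hx => ?_
  rcases h x hx with h0 | h1
  · simp [h0]
  · simp [h1]

open scoped Classical in
private lemma phi_bound {α β : Type*} [Fintype α] [Fintype β]
    (c : α → β → ℝ) (r B : ℝ) (M : ℕ)
    (hbase : ∀ S : Finset α, S.card = M →
      ∑ y : β, max ((∑ x ∈ S, c x y) - r) 0 ≤ B) :
    ∀ w : α → ℝ, (∀ x, 0 ≤ w x) → (∀ x, w x ≤ 1) → (∑ x : α, w x = (M : ℝ)) →
      ∑ y : β, max ((∑ x : α, w x * c x y) - r) 0 ≤ B := by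
  suffices H : ∀ N : ℕ, ∀ w : α → ℝ,
      (Finset.univ.filter fun x => w x ≠ 0 ∧ w x ≠ 1).card = N →
      (∀ x, 0 ≤ w x) → (∀ x, w x ≤ 1) → (∑ x : α, w x = (M : ℝ)) →
      ∑ y : β, max ((∑ x : α, w x * c x y) - r) 0 ≤ B by
    intro w h0 h1 hs; exact H _ w rfl h0 h1 hs
  intro N
  induction N using Nat.strong_induction_on with
  | _ N ih =>
  intro w hN h0 h1 hs
  by_cases hF : (Finset.univ.filter fun x => w x ≠ 0 ∧ w x ≠ 1) = ∅
  · -- base case: w is 0/1 valued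
    have hzo : ∀ x : α, w x = 0 ∨ w x = 1 := by
      intro x
      by_contra hx
      push_neg at hx
      have hmem : x ∈ Finset.univ.filter fun x => w x ≠ 0 ∧ w x ≠ 1 := by
        simp [hx.1, hx.2]
      rw [hF] at hmem
      exact absurd hmem (Finset.notMem_empty x)
    set S := Finset.univ.filter fun x => w x = 1 with hS
    have hcard : (S.card : ℝ) = (M : ℝ) := by
      rw [← hs, sum_zero_one Finset.univ w (fun x _ => hzo x)]
    have hgy : ∀ y, (∑ x : α, w x * c x y) = ∑ x ∈ S, c x y := by
      intro y
      rw [hS, Finset.sum_filter]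
      refine Finset.sum_congr rfl fun x _ => ?_
      rcases hzo x with h | h
      · simp [h]
      · simp [h]
    rw [show (∑ y : β, max ((∑ x : α, w x * c x y) - r) 0)
        = ∑ y : β, max ((∑ x ∈ S, c x y) - r) 0 from
      Finset.sum_congr rfl fun y _ => by rw [hgy]]
    exact hbase S (Nat.cast_inj.mp hcard)
  · -- inductive step
    obtain ⟨x₁, hx₁⟩ := Finset.nonempty_iff_ne_empty.mpr hF
    have hx₁' := Finset.mem_filter.mp hx₁
    have h2' : ∃ x₂ ∈ Finset.univ.filter fun x => w x ≠ 0 ∧ w x ≠ 1, x₂ ≠ x₁ := by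
      by_contra hcon
      push_neg at hcon
      have hsub : ∀ x : α, x ≠ x₁ → (w x = 0 ∨ w x = 1) := by
        intro x hxne
        by_contra hx
        push_neg at hx
        exact hxne (hcon x (by simp [hx.1, hx.2]))
      have h2 : ∑ x ∈ Finset.univ.erase x₁, w x
          = (((Finset.univ.erase x₁).filter fun x => w x = 1).card : ℝ) :=
        sum_zero_one _ _ (fun x hx => hsub x (Finset.ne_of_mem_erase hx))
      have h3 : w x₁ + ∑ x ∈ Finset.univ.erase x₁, w x = (M : ℝ) := by
        rw [← hs]
        exact Finset.add_sum_erase _ w (Finset.mem_univ x₁)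
      set cc := ((Finset.univ.erase x₁).filter fun x => w x = 1).card with hcc
      have hw1 : w x₁ = ((M : ℤ) - (cc : ℤ) : ℤ) := by
        push_cast
        rw [h2] at h3
        linarith
      have hpos : 0 < w x₁ := (h0 x₁).lt_of_ne (Ne.symm hx₁'.2.1)
      have hlt : w x₁ < 1 := (h1 x₁).lt_of_ne hx₁'.2.2
      rw [hw1] at hpos hlt
      have h4 : (0 : ℤ) < (M : ℤ) - cc := by exact_mod_cast hpos
      have h5 : ((M : ℤ) - cc) < 1 := by exact_mod_cast hlt
      omega
    obtain ⟨x₂, hx₂F, hx₂ne⟩ := h2'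
    have hx₂' := Finset.mem_filter.mp hx₂F
    have h10 : 0 < w x₁ := (h0 x₁).lt_of_ne (Ne.symm hx₁'.2.1)
    have h11 : w x₁ < 1 := (h1 x₁).lt_of_ne hx₁'.2.2
    have h20 : 0 < w x₂ := (h0 x₂).lt_of_ne (Ne.symm hx₂'.2.1)
    have h21 : w x₂ < 1 := (h1 x₂).lt_of_ne hx₂'.2.2
    set I : α → ℝ := fun x => if x = x₁ then 1 else if x = x₂ then -1 else 0 with hI
    have hIx₁ : I x₁ = 1 := by simp [hI]
    have hIx₂ : I x₂ = -1 := by simp [hI, hx₂ne]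
    have hIother : ∀ x, x ≠ x₁ → x ≠ x₂ → I x = 0 := by
      intro x e1 e2; simp [hI, e1, e2]
    have hIsum : ∑ x : α, I x = 0 := by
      have hpt : ∀ x, I x = (if x = x₁ then (1 : ℝ) else 0) + (if x = x₂ then (-1 : ℝ) else 0) := by
        intro x
        by_cases e1 : x = x₁
        · subst e1; simp [hI, Ne.symm hx₂ne]
        · simp [hI, e1]
      rw [Finset.sum_congr rfl fun x _ => hpt x, Finset.sum_add_distrib]
      simp
    set tp := min (1 - w x₁) (w x₂) with htp
    set tm := min (w x₁) (1 - w x₂) with htm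
    have htp0 : 0 < tp := lt_min (by linarith) h20
    have htm0 : 0 < tm := lt_min h10 (by linarith)
    have htp1 : tp ≤ 1 - w x₁ := min_le_left _ _
    have htp2 : tp ≤ w x₂ := min_le_right _ _
    have htm1 : tm ≤ w x₁ := min_le_left _ _
    have htm2 : tm ≤ 1 - w x₂ := min_le_right _ _
    set lam := tm / (tp + tm) with hlam
    have hlam0 : 0 ≤ lam := by positivity
    have hlam1 : lam ≤ 1 := by
      rw [hlam, div_le_one (by linarith)]; linarith
    set u : ℝ → α → ℝ := fun δ x => w x + δ * I x with hu
    have hu_sum : ∀ δ, ∑ x : α, u δ x = (M : ℝ) := by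
      intro δ
      simp only [hu]
      rw [Finset.sum_add_distrib, ← Finset.mul_sum, hIsum, hs]
      ring
    -- bounds
    have hbnds : ∀ δ, 0 ≤ δ → δ ≤ 1 - w x₁ → δ ≤ w x₂ →
        (∀ x, 0 ≤ u δ x) ∧ (∀ x, u δ x ≤ 1) := by
      intro δ hδ0 hδ1 hδ2
      constructor <;> intro x <;> by_cases e1 : x = x₁
      · subst e1; simp only [hu, hIx₁]; nlinarith
      · by_cases e2 : x = x₂
        · subst e2; simp only [hu, hIx₂]; nlinarith
        · simp only [hu, hIother x e1 e2]; simpa using h0 x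
      · subst e1; simp only [hu, hIx₁]; nlinarith
      · by_cases e2 : x = x₂
        · subst e2; simp only [hu, hIx₂]; nlinarith
        · simp only [hu, hIother x e1 e2]; simpa using h1 x
    have hbndm : (∀ x, 0 ≤ u (-tm) x) ∧ (∀ x, u (-tm) x ≤ 1) := by
      constructor <;> intro x <;> by_cases e1 : x = x₁
      · subst e1; simp only [hu, hIx₁]; nlinarith
      · by_cases e2 : x = x₂
        · subst e2; simp only [hu, hIx₂]; nlinarith
        · simp only [hu, hIother x e1 e2]; simpa using h0 x
      · subst e1; simp only [hu, hIx₁]; nlinarith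
      · by_cases e2 : x = x₂
        · subst e2; simp only [hu, hIx₂]; nlinarith
        · simp only [hu, hIother x e1 e2]; simpa using h1 x
    obtain ⟨hp0, hp1⟩ := hbnds tp htp0.le htp1 htp2
    obtain ⟨hm0, hm1⟩ := hbndm
    -- fractional set decreases
    have hfrac : ∀ δ, (∀ x, u δ x = w x ∨ x = x₁ ∨ x = x₂) →
        ((∃ z ∈ ({x₁, x₂} : Finset α), u δ z = 0 ∨ u δ z = 1)) →
        (Finset.univ.filter fun x => u δ x ≠ 0 ∧ u δ x ≠ 1).card < N := by
      intro δ heq ⟨z, hz, hzv⟩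
      rw [← hN]
      apply Finset.card_lt_card
      rw [Finset.ssubset_iff_of_subset]
      · refine ⟨z, ?_, ?_⟩
        · rcases Finset.mem_insert.mp hz with h | h
          · rwa [h]
          · rw [Finset.mem_singleton.mp h]; exact hx₂F
        · simp only [Finset.mem_filter, not_and_or, not_not]
          rcases hzv with h | h
          · right; left; exact h
          · right; right; exact h
      · intro x hx
        rcases heq x with h | h | h
        · simp only [Finset.mem_filter] at hx ⊢
          rw [h] at hx
          exact ⟨Finset.mem_univ x, hx.2⟩
        · rw [h]; exact hx₁
        · rw [h]; exact hx₂F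
    have hequ : ∀ δ, ∀ x, u δ x = w x ∨ x = x₁ ∨ x = x₂ := by
      intro δ x
      by_cases e1 : x = x₁
      · right; left; exact e1
      · by_cases e2 : x = x₂
        · right; right; exact e2
        · left; simp [hu, hIother x e1 e2]
    have hcardp : (Finset.univ.filter fun x => u tp x ≠ 0 ∧ u tp x ≠ 1).card < N := by
      apply hfrac tp (hequ tp)
      rcases min_choice (1 - w x₁) (w x₂) with hc | hc
      · exact ⟨x₁, by simp, Or.inr (by simp only [hu, hIx₁]; rw [htp, hc]; ring)⟩
      · exact ⟨x₂, by simp, Or.inl (by simp only [hu, hIx₂]; rw [htp, hc]; ring)⟩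
    have hcardm : (Finset.univ.filter fun x => u (-tm) x ≠ 0 ∧ u (-tm) x ≠ 1).card < N := by
      apply hfrac (-tm) (hequ (-tm))
      rcases min_choice (w x₁) (1 - w x₂) with hc | hc
      · exact ⟨x₁, by simp, Or.inl (by simp only [hu, hIx₁]; rw [htm, hc]; ring)⟩
      · exact ⟨x₂, by simp, Or.inr (by simp only [hu, hIx₂]; rw [htm, hc]; ring)⟩
    have hBp := ih _ hcardp (u tp) rfl hp0 hp1 (hu_sum tp)
    have hBm := ih _ hcardm (u (-tm)) rfl hm0 hm1 (hu_sum (-tm))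
    -- convex combination
    have hcomb : ∀ x, w x = lam * u tp x + (1 - lam) * u (-tm) x := by
      intro x
      have key : lam * tp - (1 - lam) * tm = 0 := by
        rw [hlam]
        field_simp
        ring
      have expand : lam * u tp x + (1 - lam) * u (-tm) x
          = w x + (lam * tp - (1 - lam) * tm) * I x := by
        simp only [hu]; ring
      rw [expand, key]; ring
    have hgy : ∀ y, (∑ x : α, w x * c x y)
        = lam * (∑ x : α, u tp x * c x y) + (1 - lam) * (∑ x : α, u (-tm) x * c x y) := by
      intro y
      rw [Finset.mul_sum, Finset.mul_sum, ← Finset.sum_add_distrib]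
      refine Finset.sum_congr rfl fun x _ => ?_
      rw [hcomb x]; ring
    calc ∑ y : β, max ((∑ x : α, w x * c x y) - r) 0
        ≤ ∑ y : β, (lam * max ((∑ x : α, u tp x * c x y) - r) 0
            + (1 - lam) * max ((∑ x : α, u (-tm) x * c x y) - r) 0) := by
          refine Finset.sum_le_sum fun y _ => ?_
          rw [hgy y]
          exact convex_max_ineq lam _ _ r hlam0 hlam1
      _ = lam * (∑ y : β, max ((∑ x : α, u tp x * c x y) - r) 0)
            + (1 - lam) * (∑ y : β, max ((∑ x : α, u (-tm) x * c x y) - r) 0) := by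
          rw [Finset.sum_add_distrib, ← Finset.mul_sum, ← Finset.mul_sum]
      _ ≤ lam * B + (1 - lam) * B :=
          add_le_add (mul_le_mul_of_nonneg_left hBp hlam0)
            (mul_le_mul_of_nonneg_left hBm (by linarith))
      _ = B := by ring


/-- **Bounded right degree ⇒ condenser** (second half of the condenser / bounded
right degree equivalence). If the graph corresponding to
`C : {0,1}^n × {0,1}^d → {0,1}^m` has `(2^e, 2^{k_max}, ε)` bounded right degree
(`ε ≥ 0`) and `m ≥ k_max + d − e`, then `C` is a `k →_ε (k+d−e)` condenser for
every nonnegative integer `k ≤ k_max`. -/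
theorem condenser_of_boundedRightDegree
    (n d m kmax e : ℕ) (hkmax : kmax ≤ n) (ε : ℝ) (hε : 0 ≤ ε)
    (C : (Fin n → Bool) → (Fin d → Bool) → (Fin m → Bool))
    (hbd : BoundedRightDegree (fun x (ρ : Fin d → Bool) => C x ρ) (2 ^ e) (2 ^ kmax) ε)
    (hm : kmax + d ≤ m + e) :
    ∀ k : ℕ, k ≤ kmax → IsCondenser C (k : ℝ) ε ((k : ℝ) + (d : ℝ) - (e : ℝ)) := by
  intro k hk P hP hmin
  have hcardι : Fintype.card (Fin d → Bool) = 2 ^ d := by simp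
  have hcardR : Fintype.card (Fin m → Bool) = 2 ^ m := by simp
  set cn : (Fin n → Bool) → (Fin m → Bool) → ℕ :=
    fun x y => (Finset.univ.filter fun ρ : Fin d → Bool => C x ρ = y).card with hcn
  -- base case of the convexity argument, from bounded right degree
  have hbase : ∀ S : Finset (Fin n → Bool), S.card = 2 ^ k →
      ∑ y : Fin m → Bool, max ((∑ x ∈ S, (cn x y : ℝ)) - (2 : ℝ) ^ e) 0
        ≤ ε * 2 ^ d * 2 ^ k := by
    intro S hS
    have h1 : S.card ≤ 2 ^ kmax := by
      rw [hS]; exact Nat.pow_le_pow_right (by norm_num) hk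
    have h2 := hbd S h1
    have hEdge : ∀ p, edgeCount (fun x (ρ : Fin d → Bool) => C x ρ) S p = ∑ x ∈ S, cn x p := by
      intro p
      rw [edgeCount, Finset.card_filter, Finset.sum_product]
      exact Finset.sum_congr rfl fun x _ => (Finset.card_filter _ _).symm
    have h3 : ((excess (fun x (ρ : Fin d → Bool) => C x ρ) S (2 ^ e) : ℕ) : ℝ)
        = ∑ y : Fin m → Bool, max ((∑ x ∈ S, (cn x y : ℝ)) - (2 : ℝ) ^ e) 0 := by
      rw [excess, Nat.cast_sum]
      refine Finset.sum_congr rfl fun p _ => ?_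
      rw [hEdge p, cast_sub_max]
      push_cast
      ring_nf
    rw [← h3]
    calc ((excess (fun x (ρ : Fin d → Bool) => C x ρ) S (2 ^ e) : ℕ) : ℝ)
        ≤ ε * (Fintype.card (Fin d → Bool) : ℝ) * (S.card : ℝ) := h2
      _ = ε * 2 ^ d * 2 ^ k := by rw [hcardι, hS]; push_cast; ring
  -- the weight function
  set w : (Fin n → Bool) → ℝ := fun x => (2 : ℝ) ^ k * P x with hw
  have h2kpos : (0 : ℝ) < 2 ^ k := by positivity
  have h0w : ∀ x, 0 ≤ w x := fun x => mul_nonneg h2kpos.le (hP.1 x)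
  have h1w : ∀ x, w x ≤ 1 := by
    intro x
    have hr : (2 : ℝ) ^ (-(k : ℝ)) = ((2 : ℝ) ^ k)⁻¹ := by
      rw [← Real.rpow_natCast 2 k, ← Real.rpow_neg (by norm_num)]
    have h := hmin x
    rw [hr] at h
    calc w x ≤ (2 : ℝ) ^ k * ((2 : ℝ) ^ k)⁻¹ := mul_le_mul_of_nonneg_left h h2kpos.le
      _ = 1 := mul_inv_cancel₀ (ne_of_gt h2kpos)
  have hsw : ∑ x : Fin n → Bool, w x = ((2 ^ k : ℕ) : ℝ) := by
    simp only [hw]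
    rw [← Finset.mul_sum, hP.2, mul_one]
    push_cast
    ring
  have hΦ := phi_bound (fun x y => (cn x y : ℝ)) ((2 : ℝ) ^ e) (ε * 2 ^ d * 2 ^ k) (2 ^ k)
    hbase w h0w h1w hsw
  -- the output distribution in terms of w
  set K : ℝ := (2 : ℝ) ^ k * 2 ^ d with hKdef
  have hK : 0 < K := by positivity
  set τ : ℝ := (2 : ℝ) ^ e / K with hτdef
  have hτ0 : 0 < τ := by positivity
  have hout : ∀ y, outDist C P y = (∑ x : Fin n → Bool, w x * (cn x y : ℝ)) / K := by
    intro y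
    rw [outDist, Finset.sum_div]
    refine Finset.sum_congr rfl fun x _ => ?_
    rw [← Finset.sum_filter, Finset.sum_const, nsmul_eq_mul]
    simp only [hw, hcn, hKdef]
    field_simp
  have houtn : ∀ y, 0 ≤ outDist C P y := by
    intro y
    rw [hout y]
    have : 0 ≤ ∑ x : Fin n → Bool, w x * (cn x y : ℝ) :=
      Finset.sum_nonneg fun x _ => mul_nonneg (h0w x) (Nat.cast_nonneg _)
    positivity
  have hsum1 : ∑ y : Fin m → Bool, outDist C P y = 1 := by
    have hpt : ∀ (x : Fin n → Bool) (ρ : Fin d → Bool),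
        ∑ y : Fin m → Bool, (if C x ρ = y then P x / 2 ^ d else 0) = P x / 2 ^ d := by
      intro x ρ
      rw [Finset.sum_ite_eq]
      simp
    calc ∑ y : Fin m → Bool, outDist C P y
        = ∑ x : Fin n → Bool, ∑ ρ : Fin d → Bool, P x / 2 ^ d := by
          simp only [outDist]
          rw [Finset.sum_comm]
          refine Finset.sum_congr rfl fun x _ => ?_
          rw [Finset.sum_comm]
          exact Finset.sum_congr rfl fun ρ _ => hpt x ρ
      _ = ∑ x : Fin n → Bool, P x := by
          refine Finset.sum_congr rfl fun x _ => ?_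
          rw [Finset.sum_const, Finset.card_univ, hcardι, nsmul_eq_mul]
          push_cast
          field_simp
      _ = 1 := hP.2
  -- excess of the output distribution
  set E : ℝ := ∑ y : Fin m → Bool, max (outDist C P y - τ) 0 with hEdef
  have hE0 : 0 ≤ E := Finset.sum_nonneg fun y _ => le_max_right _ _
  have hEε : E ≤ ε := by
    have h1 : ∀ y, max (outDist C P y - τ) 0
        = max ((∑ x : Fin n → Bool, w x * (cn x y : ℝ)) - (2 : ℝ) ^ e) 0 / K := by
      intro y
      rw [hout y, hτdef, div_sub_div_same, max_div_zero _ _ hK]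
    rw [hEdef, Finset.sum_congr rfl fun y _ => h1 y, ← Finset.sum_div]
    rw [div_le_iff₀ hK]
    refine hΦ.trans_eq ?_
    rw [hKdef]; ring
  -- the capped distribution
  set md : (Fin m → Bool) → ℝ := fun y => min (outDist C P y) τ with hmd
  have hmd0 : ∀ y, 0 ≤ md y := fun y => le_min (houtn y) hτ0.le
  have hmd_le_out : ∀ y, md y ≤ outDist C P y := fun y => min_le_left _ _
  have hmd_le_τ : ∀ y, md y ≤ τ := fun y => min_le_right _ _
  set Bd : ℝ := ∑ y : Fin m → Bool, (τ - md y) with hBddef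
  have hBd0 : 0 ≤ Bd := Finset.sum_nonneg fun y _ => sub_nonneg.mpr (hmd_le_τ y)
  have hsum_md : (∑ y : Fin m → Bool, md y) + E = 1 := by
    rw [hEdef, ← Finset.sum_add_distrib]
    rw [Finset.sum_congr rfl fun y _ => min_add_max_sub (outDist C P y) τ]
    exact hsum1
  have hcap : (1 : ℝ) ≤ (2 : ℝ) ^ m * τ := by
    have hle : (2 : ℝ) ^ (k + d) ≤ (2 : ℝ) ^ (m + e) :=
      pow_le_pow_right₀ (by norm_num) (by omega)
    rw [hτdef, hKdef]
    rw [mul_div_assoc', one_le_div (by positivity : (0:ℝ) < (2:ℝ)^k * 2^d)]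
    calc (2 : ℝ) ^ k * 2 ^ d = 2 ^ (k + d) := by rw [pow_add]
      _ ≤ 2 ^ (m + e) := hle
      _ = 2 ^ m * 2 ^ e := by rw [pow_add]
  have hBd_eq : Bd = (2 : ℝ) ^ m * τ - ∑ y : Fin m → Bool, md y := by
    rw [hBddef, Finset.sum_sub_distrib, Finset.sum_const, Finset.card_univ, hcardR,
      nsmul_eq_mul]
    push_cast
    ring
  have hEBd : E ≤ Bd := by rw [hBd_eq]; linarith
  set q : ℝ := E / Bd with hq
  have hq0 : 0 ≤ q := div_nonneg hE0 hBd0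
  have hq1 : q ≤ 1 := by
    by_cases h : Bd = 0
    · simp [hq, h]
    · exact (div_le_one (hBd0.lt_of_ne (Ne.symm h))).mpr hEBd
  have hqBd : q * Bd = E := by
    by_cases h : Bd = 0
    · have hE' : E = 0 := le_antisymm (h ▸ hEBd) hE0
      simp [hq, h, hE']
    · rw [hq, div_mul_cancel₀ _ h]
  refine ⟨fun y => md y + q * (τ - md y), ⟨fun y => ?_, ?_⟩, fun y => ?_, fun T => ?_⟩
  · exact add_nonneg (hmd0 y) (mul_nonneg hq0 (sub_nonneg.mpr (hmd_le_τ y)))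
  · rw [Finset.sum_add_distrib, ← Finset.mul_sum, ← hBddef, hqBd]
    linarith
  · -- min entropy
    have hτeq : τ = (2 : ℝ) ^ (-((k : ℝ) + (d : ℝ) - (e : ℝ))) := by
      rw [show -((k : ℝ) + (d : ℝ) - (e : ℝ)) = (e : ℝ) - ((k : ℝ) + (d : ℝ)) by ring]
      rw [Real.rpow_sub (by norm_num), Real.rpow_natCast,
        Real.rpow_add (by norm_num), Real.rpow_natCast, Real.rpow_natCast]
    have hle : md y + q * (τ - md y) ≤ τ := by
      have h1 : q * (τ - md y) ≤ τ - md y :=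
        mul_le_of_le_one_left (sub_nonneg.mpr (hmd_le_τ y)) hq1
      linarith
    rw [← hτeq]
    exact hle
  · -- closeness
    have hub : ∀ y, outDist C P y - (md y + q * (τ - md y)) ≤ max (outDist C P y - τ) 0 := by
      intro y
      have h1 := min_add_max_sub (outDist C P y) τ
      have h2 : 0 ≤ q * (τ - md y) := mul_nonneg hq0 (sub_nonneg.mpr (hmd_le_τ y))
      simp only [hmd] at *
      linarith
    have hlb : ∀ y, (md y + q * (τ - md y)) - outDist C P y ≤ q * (τ - md y) := by
      intro y
      have := hmd_le_out y
      linarith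
    rw [abs_sub_le_iff]
    constructor
    · rw [← Finset.sum_sub_distrib]
      calc ∑ y ∈ T, (outDist C P y - (md y + q * (τ - md y)))
          ≤ ∑ y ∈ T, max (outDist C P y - τ) 0 := Finset.sum_le_sum fun y _ => hub y
        _ ≤ ∑ y : Fin m → Bool, max (outDist C P y - τ) 0 :=
            Finset.sum_le_sum_of_subset_of_nonneg (Finset.subset_univ T)
              (fun y _ _ => le_max_right _ _)
        _ = E := by rw [hEdef]
        _ ≤ ε := hEε
    · rw [← Finset.sum_sub_distrib]
      calc ∑ y ∈ T, ((md y + q * (τ - md y)) - outDist C P y)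
          ≤ ∑ y ∈ T, q * (τ - md y) := Finset.sum_le_sum fun y _ => hlb y
        _ ≤ ∑ y : Fin m → Bool, q * (τ - md y) :=
            Finset.sum_le_sum_of_subset_of_nonneg (Finset.subset_univ T)
              (fun y _ _ => mul_nonneg hq0 (sub_nonneg.mpr (hmd_le_τ y)))
        _ = q * Bd := by rw [hBddef, Finset.mul_sum]
        _ = E := hqBd
        _ ≤ ε := hEε
end

section
/- Let Γ : L × [D] → R be a bipartite graph with finite left side L, finite right side R and left degree D ≥ 1 that is a (K_max, (1−ε)D) expander, where ε > 0 and K_max ≥ 2. Then the graph admits ((1−4ε)D, 2⌈log₂ K_max⌉) online matching up to size K_max. -/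
open Finset

set_option linter.unusedSectionVars false
set_option linter.unusedVariables false

section
variable {L : Type*} [DecidableEq L]

def fo : List L → List L
  | [] => []
  | x :: s => x :: (fo s).filter (fun y => decide (y ≠ x))

lemma mem_fo {x : L} : ∀ {S : List L}, x ∈ fo S ↔ x ∈ S
  | [] => by simp [fo]
  | a :: s => by
    by_cases hxa : x = a
    · subst hxa; simp [fo]
    · simp [fo, hxa, List.mem_filter, mem_fo (S := s)]

lemma nodup_fo : ∀ (S : List L), (fo S).Nodup
  | [] => by simp [fo]
  | a :: s => by
    rw [fo, List.nodup_cons]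
    refine ⟨?_, (nodup_fo s).filter _⟩
    simp [List.mem_filter]

lemma length_fo_le : ∀ (S : List L), (fo S).length ≤ S.length
  | [] => by simp [fo]
  | a :: s => by
    rw [fo]
    simp only [List.length_cons, Nat.add_le_add_iff_right]
    exact le_trans (List.length_filter_le _ _) (length_fo_le s)

lemma fo_prefix : ∀ {S S' : List L}, S <+: S' → fo S <+: fo S'
  | [], _, _ => by simp [fo]
  | a :: s, _, ⟨t, rfl⟩ => by
    rw [List.cons_append, fo, fo]
    obtain ⟨u, hu⟩ := (fo_prefix (⟨t, rfl⟩ : s <+: s ++ t)).filter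
      (fun y => decide (y ≠ a))
    exact ⟨u, by rw [List.cons_append, hu]⟩

lemma takeWhile_stable {x : L} : ∀ {l l' : List L}, l <+: l' → x ∈ l →
    l.takeWhile (fun y => decide (y ≠ x)) = l'.takeWhile (fun y => decide (y ≠ x))
  | [], _, _, hx => by simp at hx
  | a :: l, _, ⟨t, rfl⟩, hx => by
    by_cases hax : a = x
    · subst hax; simp [List.takeWhile_cons]
    · have hx' : x ∈ l := by
        rcases hx with _ | h
        · exact absurd rfl hax
        · assumption
      rw [List.cons_append, List.takeWhile_cons, List.takeWhile_cons,
        if_pos (by simp [hax]), if_pos (by simp [hax]),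
        takeWhile_stable (⟨t, rfl⟩ : l <+: l ++ t) hx']

lemma takeWhile_of_append {x : L} : ∀ {l₁ : List L} (l₂ : List L), (∀ y ∈ l₁, y ≠ x) →
    (l₁ ++ x :: l₂).takeWhile (fun y => decide (y ≠ x)) = l₁
  | [], l₂, _ => by simp [List.takeWhile_cons]
  | a :: l₁, l₂, h => by
    rw [List.cons_append, List.takeWhile_cons,
      if_pos (by simp [h a (by simp)]), takeWhile_of_append l₂ (fun y hy => h y (by simp [hy]))]

lemma decomp {x : L} : ∀ {l : List L}, x ∈ l →
    ∃ l₂, l = l.takeWhile (fun y => decide (y ≠ x)) ++ x :: l₂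
  | a :: l, hx => by
    by_cases hax : a = x
    · subst hax
      exact ⟨l, by simp [List.takeWhile_cons]⟩
    · have hx' : x ∈ l := by rcases hx with _ | h; exact absurd rfl hax; assumption
      obtain ⟨l₂, hl₂⟩ := decomp hx'
      refine ⟨l₂, ?_⟩
      rw [List.takeWhile_cons, if_pos (by simp [hax]), List.cons_append]
      exact congrArg (a :: ·) hl₂

lemma before_total {x y : L} : ∀ {l : List L}, x ∈ l → y ∈ l → x ≠ y →
    x ∈ l.takeWhile (fun z => decide (z ≠ y)) ∨ y ∈ l.takeWhile (fun z => decide (z ≠ x))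
  | a :: l, hx, hy, hxy => by
    by_cases hax : a = x
    · subst hax
      left
      rw [List.takeWhile_cons, if_pos (by simp [hxy])]
      exact List.mem_cons_self
    · by_cases hay : a = y
      · subst hay
        right
        rw [List.takeWhile_cons, if_pos (by simp [Ne.symm hxy])]
        exact List.mem_cons_self
      · have hx' : x ∈ l := by rcases hx with _ | h; exact absurd rfl hax; assumption
        have hy' : y ∈ l := by rcases hy with _ | h; exact absurd rfl hay; assumption
        rcases before_total hx' hy' hxy with h | h
        · left
          rw [List.takeWhile_cons, if_pos (by simp [hay])]
          exact List.mem_cons_of_mem _ h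
        · right
          rw [List.takeWhile_cons, if_pos (by simp [hax])]
          exact List.mem_cons_of_mem _ h

variable {L R : Type*} [DecidableEq L] [DecidableEq R] {D : ℕ} (Γ : L → Fin D → R) (ε : ℝ)

def occB (h : List (L × ℕ × Finset (Fin D))) (j : ℕ) (p : R) : Prop :=
  ∃ e ∈ h, e.2.1 = j ∧ ∃ i ∈ e.2.2, Γ e.1 i = p

instance (h : List (L × ℕ × Finset (Fin D))) (j : ℕ) (p : R) :
    Decidable (occB Γ h j p) := by unfold occB; infer_instance

def cnt (h : List (L × ℕ × Finset (Fin D))) (x : L) (j : ℕ) : ℕ :=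
  (Finset.univ.filter fun i : Fin D => occB Γ h j (Γ x i)).card

def Pgood (h : List (L × ℕ × Finset (Fin D))) (x : L) (j : ℕ) : Prop :=
  cnt Γ h x j = 0 ∨ (cnt Γ h x j : ℝ) ≤ 2 * ε * D

lemma exists_Pgood (h : List (L × ℕ × Finset (Fin D))) (x : L) :
    ∃ j, Pgood Γ ε h x j := by
  refine ⟨(h.map fun e => e.2.1).sum + 1, Or.inl ?_⟩
  rw [cnt, Finset.card_eq_zero, Finset.filter_eq_empty_iff]
  rintro i -
  rintro ⟨e, he, hej, -⟩
  have : e.2.1 ≤ (h.map fun e => e.2.1).sum :=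
    List.single_le_sum (by simp) _ (List.mem_map_of_mem he)
  omega

open Classical in
noncomputable def lvl (h : List (L × ℕ × Finset (Fin D))) (x : L) : ℕ :=
  Nat.find (exists_Pgood Γ ε h x)

open Classical in
lemma lvl_spec (h : List (L × ℕ × Finset (Fin D))) (x : L) :
    Pgood Γ ε h x (lvl Γ ε h x) := Nat.find_spec (exists_Pgood Γ ε h x)

open Classical in
lemma lvl_min {h : List (L × ℕ × Finset (Fin D))} {x : L} {j : ℕ}
    (hj : j < lvl Γ ε h x) : ¬ Pgood Γ ε h x j :=
  Nat.find_min (exists_Pgood Γ ε h x) hj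

lemma cnt_gt {h : List (L × ℕ × Finset (Fin D))} {x : L} {j : ℕ}
    (hj : j < lvl Γ ε h x) : 2 * ε * D < (cnt Γ h x j : ℝ) := by
  have := lvl_min Γ ε hj
  rw [Pgood, not_or] at this
  exact lt_of_not_ge this.2

noncomputable def mkRec (h : List (L × ℕ × Finset (Fin D))) (x : L) :
    L × ℕ × Finset (Fin D) :=
  (x, lvl Γ ε h x, Finset.univ.filter fun i => ¬ occB Γ h (lvl Γ ε h x) (Γ x i))

lemma card_mkRec (hε : 0 ≤ ε) (h : List (L × ℕ × Finset (Fin D))) (x : L) :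
    (1 - 4 * ε) * D ≤ ((mkRec Γ ε h x).2.2.card : ℝ) := by
  have hkey : (mkRec Γ ε h x).2.2.card + cnt Γ h x (lvl Γ ε h x) = D := by
    rw [mkRec, cnt]
    simpa using Finset.card_filter_add_card_filter_not
      (s := (Finset.univ : Finset (Fin D)))
      (p := fun i => ¬ occB Γ h (lvl Γ ε h x) (Γ x i))
  have hDnn : (0:ℝ) ≤ D := Nat.cast_nonneg D
  rcases lvl_spec Γ ε h x with h0 | hle
  · rw [h0] at hkey
    have : ((mkRec Γ ε h x).2.2.card : ℝ) = D := by exact_mod_cast congrArg Nat.cast hkey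
    rw [this]; nlinarith
  · have : ((mkRec Γ ε h x).2.2.card : ℝ) = D - cnt Γ h x (lvl Γ ε h x) := by
      have := congrArg (Nat.cast (R := ℝ)) hkey
      push_cast at this
      linarith
    rw [this]; nlinarith

noncomputable def runK : List L → List (L × ℕ × Finset (Fin D)) :=
  fun ks => ks.foldl (fun h x => mkRec Γ ε h x :: h) []

noncomputable def hist (ks : List L) (x : L) : List (L × ℕ × Finset (Fin D)) :=
  runK Γ ε (ks.takeWhile fun y => decide (y ≠ x))

noncomputable def lvlK (ks : List L) (x : L) : ℕ := lvl Γ ε (hist Γ ε ks x) x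

noncomputable def keptK (ks : List L) (x : L) : Finset (Fin D) :=
  (mkRec Γ ε (hist Γ ε ks x) x).2.2

end
section
variable {L R : Type*} [DecidableEq L] [DecidableEq R] {D : ℕ} (Γ : L → Fin D → R) (ε : ℝ)

lemma runK_append (l l' : List L) :
    runK Γ ε (l ++ l') = l'.foldl (fun h x => mkRec Γ ε h x :: h) (runK Γ ε l) := by
  rw [runK, List.foldl_append]; rfl

lemma mem_runK' {e : L × ℕ × Finset (Fin D)} : ∀ {ks : List L}, e ∈ runK Γ ε ks →
    ∃ l₁ l₂, ks = l₁ ++ e.1 :: l₂ ∧ e = mkRec Γ ε (runK Γ ε l₁) e.1 := by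
  intro ks
  induction ks using List.reverseRecOn with
  | nil => intro h; simp [runK] at h
  | append_singleton l a ih =>
    intro he
    rw [runK_append] at he
    simp only [List.foldl_cons, List.foldl_nil] at he
    rcases List.mem_cons.mp he with he1 | he1
    · subst he1
      exact ⟨l, [], rfl, rfl⟩
    · obtain ⟨l₁, l₂, h1, h2⟩ := ih he1
      exact ⟨l₁, l₂ ++ [a], by rw [h1]; simp, h2⟩

lemma mem_foldl {e : L × ℕ × Finset (Fin D)} :
    ∀ (l : List L) (h : List (L × ℕ × Finset (Fin D))), e ∈ h →
      e ∈ l.foldl (fun h x => mkRec Γ ε h x :: h) h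
  | [], _, he => he
  | a :: l, h, he => mem_foldl l _ (List.mem_cons_of_mem _ he)

lemma mem_runK {e : L × ℕ × Finset (Fin D)} {ks : List L} (hnd : ks.Nodup)
    (he : e ∈ runK Γ ε ks) :
    e.1 ∈ ks ∧ e = mkRec Γ ε (hist Γ ε ks e.1) e.1 := by
  obtain ⟨l₁, l₂, h1, h2⟩ := mem_runK' Γ ε he
  have hx : e.1 ∈ ks := by rw [h1]; simp
  have hnl : ∀ y ∈ l₁, y ≠ e.1 := by
    rw [h1, List.nodup_append] at hnd
    intro y hy hcon
    exact hnd.2.2 y hy e.1 List.mem_cons_self hcon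
  have heq : hist Γ ε ks e.1 = runK Γ ε l₁ := by
    rw [hist, h1, takeWhile_of_append l₂ hnl]
  rw [heq]
  exact ⟨hx, h2⟩

lemma runK_decomp {ks : List L} {x : L} (hx : x ∈ ks) :
    ∃ l₂ : List L, runK Γ ε ks =
      l₂.foldl (fun h y => mkRec Γ ε h y :: h)
        (mkRec Γ ε (hist Γ ε ks x) x :: hist Γ ε ks x) := by
  obtain ⟨l₂, hl₂⟩ := decomp hx
  refine ⟨l₂, ?_⟩
  conv_lhs => rw [hl₂]
  rw [runK_append]
  simp only [List.foldl_cons]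
  rfl

lemma record_mem {ks : List L} {x : L} (hx : x ∈ ks) :
    mkRec Γ ε (hist Γ ε ks x) x ∈ runK Γ ε ks := by
  obtain ⟨l₂, hl₂⟩ := runK_decomp Γ ε hx
  rw [hl₂]
  exact mem_foldl Γ ε _ _ List.mem_cons_self

lemma occB_hist_mono {ks : List L} {x : L} (hx : x ∈ ks) {j : ℕ} {p : R}
    (hocc : occB Γ (hist Γ ε ks x) j p) : occB Γ (runK Γ ε ks) j p := by
  obtain ⟨l₂, hl₂⟩ := runK_decomp Γ ε hx
  rw [hl₂]
  obtain ⟨e, he, h1, h2⟩ := hocc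
  exact ⟨e, mem_foldl Γ ε _ _ (List.mem_cons_of_mem _ he), h1, h2⟩

lemma occB_runK_iff {ks : List L} (hnd : ks.Nodup) {j : ℕ} {p : R} :
    occB Γ (runK Γ ε ks) j p ↔
      ∃ x ∈ ks, lvlK Γ ε ks x = j ∧ ∃ i ∈ keptK Γ ε ks x, Γ x i = p := by
  constructor
  · rintro ⟨e, he, h1, h2⟩
    obtain ⟨hx, hrec⟩ := mem_runK Γ ε hnd he
    refine ⟨e.1, hx, ?_, ?_⟩
    · rw [lvlK, ← h1, hrec]; rfl
    · rw [keptK, ← hrec]; exact h2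
  · rintro ⟨x, hx, h1, h2⟩
    exact ⟨mkRec Γ ε (hist Γ ε ks x) x, record_mem Γ ε hx, h1, h2⟩

lemma hist_stable {l l' : List L} (hpre : l <+: l') {x : L} (hx : x ∈ l) :
    hist Γ ε l x = hist Γ ε l' x := by
  rw [hist, hist, takeWhile_stable hpre hx]


lemma level_unique_aux {ks : List L} {x y : L}
    (hxpre : x ∈ ks.takeWhile (fun z => decide (z ≠ y)))
    (hlv : lvlK Γ ε ks x = lvlK Γ ε ks y) {p : R}
    (hxp : ∃ i ∈ keptK Γ ε ks x, Γ x i = p)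
    (hyp : ∃ i ∈ keptK Γ ε ks y, Γ y i = p) : False := by
  set pre := ks.takeWhile (fun z => decide (z ≠ y)) with hpre_def
  have hpre_ks : pre <+: ks := List.takeWhile_prefix _
  have hhist : hist Γ ε pre x = hist Γ ε ks x := hist_stable Γ ε hpre_ks hxpre
  have hocc : occB Γ (runK Γ ε pre) (lvlK Γ ε ks x) p := by
    refine ⟨mkRec Γ ε (hist Γ ε ks x) x, ?_, rfl, ?_⟩
    · have := record_mem Γ ε (ks := pre) (x := x) hxpre
      rwa [hhist] at this
    · exact hxp
  have hysub : hist Γ ε ks y = runK Γ ε pre := rfl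
  obtain ⟨i, hi, hΓ⟩ := hyp
  rw [keptK, mkRec] at hi
  simp only [Finset.mem_filter] at hi
  apply hi.2
  rw [hΓ, hysub]
  rw [hlv] at hocc
  exact hocc

lemma level_unique {ks : List L} (hnd : ks.Nodup) {x y : L} (hx : x ∈ ks) (hy : y ∈ ks)
    (hxy : x ≠ y) (hlv : lvlK Γ ε ks x = lvlK Γ ε ks y) {p : R}
    (hxp : ∃ i ∈ keptK Γ ε ks x, Γ x i = p)
    (hyp : ∃ i ∈ keptK Γ ε ks y, Γ y i = p) : False := by
  rcases before_total hx hy hxy with h | h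
  · exact level_unique_aux Γ ε h hlv hxp hyp
  · exact level_unique_aux Γ ε h hlv.symm hyp hxp


noncomputable def Tset (ks : List L) (j : ℕ) : Finset L :=
  ks.toFinset.filter (fun x => j ≤ lvlK Γ ε ks x)

lemma halving {Kmax : ℕ} {ks : List L} (hnd : ks.Nodup) (hlen : ks.length ≤ Kmax)
    (hexp : Expander Γ Kmax ((1 - ε) * (D : ℝ))) (hε : 0 < ε) (hD : 1 ≤ D) (j : ℕ)
    (hA : (Tset Γ ε ks (j + 1)).Nonempty) :
    2 * (Tset Γ ε ks (j + 1)).card < (Tset Γ ε ks j).card := by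
  classical
  set T := Tset Γ ε ks j with hT
  set A := Tset Γ ε ks (j + 1) with hAdef
  have hAT : A ⊆ T := by
    intro x hx
    rw [hAdef, Tset, Finset.mem_filter] at hx
    rw [hT, Tset, Finset.mem_filter]
    exact ⟨hx.1, by omega⟩
  have hTK : T.card ≤ Kmax := by
    calc T.card ≤ ks.toFinset.card := Finset.card_le_card (Finset.filter_subset _ _)
    _ ≤ ks.length := ks.toFinset_card_le
    _ ≤ Kmax := hlen
  set N := ((T ×ˢ (Finset.univ : Finset (Fin D))).image fun q => Γ q.1 q.2) with hNdef
  have hN : (1 - ε) * D * T.card ≤ (N.card : ℝ) := hexp T hTK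
  set blk := fun x : L => (Finset.univ.filter fun i : Fin D =>
    occB Γ (hist Γ ε ks x) j (Γ x i)) with hblk
  set B := A.biUnion (fun x => ({x} : Finset L) ×ˢ blk x) with hBdef
  have hBcard : B.card = ∑ x ∈ A, (blk x).card := by
    rw [hBdef, Finset.card_biUnion]
    · refine Finset.sum_congr rfl fun x _ => ?_
      rw [Finset.card_product, Finset.card_singleton, one_mul]
    · intro x _ y _ hxy
      rw [Function.onFun, Finset.disjoint_left]
      intro q hqx hqy
      rw [Finset.mem_product, Finset.mem_singleton] at hqx hqy
      exact hxy (hqx.1 ▸ hqy.1 ▸ rfl)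
  have hBsub : B ⊆ T ×ˢ Finset.univ := by
    intro q hq
    rw [hBdef, Finset.mem_biUnion] at hq
    obtain ⟨x, hxA, hq⟩ := hq
    rw [Finset.mem_product, Finset.mem_singleton] at hq
    rw [Finset.mem_product]
    exact ⟨hq.1 ▸ hAT hxA, Finset.mem_univ _⟩
  -- canonical edges
  set W := fun p : R => ∃ x ∈ ks, lvlK Γ ε ks x = j ∧ ∃ i ∈ keptK Γ ε ks x, Γ x i = p
    with hWdef
  have hsec : ∀ p ∈ N, ∃ q : L × Fin D, q ∈ T ×ˢ Finset.univ ∧ Γ q.1 q.2 = p ∧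
      (W p → lvlK Γ ε ks q.1 = j) := by
    intro p hp
    by_cases hW : W p
    · obtain ⟨x, hx, hlv, i, hi, hΓ⟩ := hW
      refine ⟨(x, i), ?_, hΓ, fun _ => hlv⟩
      rw [Finset.mem_product]
      refine ⟨?_, Finset.mem_univ _⟩
      rw [hT, Tset, Finset.mem_filter]
      exact ⟨List.mem_toFinset.mpr hx, le_of_eq hlv.symm⟩
    · rw [hNdef, Finset.mem_image] at hp
      obtain ⟨q, hq, hΓ⟩ := hp
      exact ⟨q, hq, hΓ, fun h => absurd h hW⟩
  choose c hc1 hc2 hc3 using hsec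
  set C := N.attach.image (fun z => c z.1 z.2) with hCdef
  have hCcard : C.card = N.card := by
    rw [hCdef, Finset.card_image_of_injOn, Finset.card_attach]
    intro z₁ _ z₂ _ heq
    simp only at heq
    have h1 := hc2 z₁.1 z₁.2
    have h2 := hc2 z₂.1 z₂.2
    rw [heq] at h1
    exact Subtype.ext (by rw [← h1, h2])
  have hCsub : C ⊆ T ×ˢ Finset.univ := by
    intro q hq
    rw [hCdef, Finset.mem_image] at hq
    obtain ⟨z, _, hz⟩ := hq
    exact hz ▸ hc1 z.1 z.2
  have hdisj : Disjoint B C := by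
    rw [Finset.disjoint_left]
    intro q hqB hqC
    rw [hBdef, Finset.mem_biUnion] at hqB
    obtain ⟨x, hxA, hq⟩ := hqB
    rw [Finset.mem_product, Finset.mem_singleton] at hq
    have hxks : x ∈ ks := by
      have := hAT hxA
      rw [hT, Tset, Finset.mem_filter] at this
      exact List.mem_toFinset.mp this.1
    have hocc : occB Γ (hist Γ ε ks x) j (Γ x q.2) := by
      have := hq.2
      rw [hblk, Finset.mem_filter] at this
      exact this.2
    have hWp : W (Γ q.1 q.2) := by
      rw [hq.1]
      exact (occB_runK_iff Γ ε hnd).mp (occB_hist_mono Γ ε hxks hocc)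
    rw [hCdef, Finset.mem_image] at hqC
    obtain ⟨z, _, hz⟩ := hqC
    have hΓz : Γ q.1 q.2 = z.1 := by rw [← hz]; exact hc2 z.1 z.2
    have hlvq : lvlK Γ ε ks q.1 = j := by
      have := hc3 z.1 z.2 (hΓz ▸ hWp)
      rw [hz] at this
      exact this
    have : j + 1 ≤ lvlK Γ ε ks x := by
      rw [hAdef, Tset, Finset.mem_filter] at hxA
      exact hxA.2
    rw [hq.1] at hlvq
    omega
  have hcount : B.card + N.card ≤ T.card * D := by
    have h1 : (B ∪ C).card = B.card + C.card := Finset.card_union_of_disjoint hdisj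
    have h2 : (B ∪ C).card ≤ (T ×ˢ (Finset.univ : Finset (Fin D))).card :=
      Finset.card_le_card (Finset.union_subset hBsub hCsub)
    rw [Finset.card_product, Finset.card_univ, Fintype.card_fin] at h2
    omega
  -- now the real-number chain
  have hkey : (∑ x ∈ A, ((blk x).card : ℝ)) ≤ ε * D * T.card := by
    have h1 : ((B.card : ℝ)) + N.card ≤ T.card * D := by exact_mod_cast hcount
    have h2 : (∑ x ∈ A, ((blk x).card : ℝ)) = (B.card : ℝ) := by
      rw [hBcard]; push_cast; ring
    nlinarith [hN]
  have hlow : ∀ x ∈ A, 2 * ε * D < ((blk x).card : ℝ) := by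
    intro x hxA
    have hj : j < lvlK Γ ε ks x := by
      rw [hAdef, Tset, Finset.mem_filter] at hxA
      omega
    exact cnt_gt Γ ε hj
  have hsum : 2 * ε * D * A.card < ∑ x ∈ A, ((blk x).card : ℝ) := by
    calc 2 * ε * D * A.card = ∑ _x ∈ A, 2 * ε * D := by
          rw [Finset.sum_const, nsmul_eq_mul]; ring
    _ < ∑ x ∈ A, ((blk x).card : ℝ) := Finset.sum_lt_sum_of_nonempty hA hlow
  have hεD : (0:ℝ) < ε * D := by
    have : (1:ℝ) ≤ D := by exact_mod_cast hD
    nlinarith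
  have hfin : 2 * (A.card : ℝ) < T.card := by nlinarith
  exact_mod_cast hfin


lemma lvl_lt_clog {Kmax : ℕ} {ks : List L} (hnd : ks.Nodup) (hlen : ks.length ≤ Kmax)
    (hexp : Expander Γ Kmax ((1 - ε) * (D : ℝ))) (hε : 0 < ε) (hD : 1 ≤ D)
    (hK : 2 ≤ Kmax) : ∀ x ∈ ks, lvlK Γ ε ks x < Nat.clog 2 Kmax := by
  intro x hx
  set m := lvlK Γ ε ks x with hm
  have hmem : ∀ j, j ≤ m → x ∈ Tset Γ ε ks j := by
    intro j hj
    rw [Tset, Finset.mem_filter]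
    exact ⟨List.mem_toFinset.mpr hx, hj⟩
  rcases Nat.eq_zero_or_pos m with hm0 | hm1
  · rw [hm0]
    exact Nat.clog_pos one_lt_two hK
  · have hpow : ∀ t, t ≤ m → 2 ^ t ≤ (Tset Γ ε ks (m - t)).card := by
      intro t
      induction t with
      | zero =>
        intro _
        have : x ∈ Tset Γ ε ks (m - 0) := hmem _ (by omega)
        have := Finset.card_pos.mpr ⟨x, this⟩
        simpa using this
      | succ t ih =>
        intro ht
        have h1 := ih (by omega)
        have he : m - t = (m - (t + 1)) + 1 := by omega
        rw [he] at h1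
        have hne : (Tset Γ ε ks ((m - (t + 1)) + 1)).Nonempty := by
          rw [← Finset.card_pos]
          have : 0 < 2 ^ t := Nat.pow_pos (show 0 < 2 by omega)
          omega
        have h2 := halving Γ ε hnd hlen hexp hε hD (m - (t + 1)) hne
        have h3 : 2 ^ (t + 1) = 2 * 2 ^ t := by ring
        omega
    have h1 := hpow (m - 1) (by omega)
    have he : m - (m - 1) = 1 := by omega
    rw [he] at h1
    have hne : (Tset Γ ε ks (0 + 1)).Nonempty := by
      rw [← Finset.card_pos]
      have : 0 < 2 ^ (m - 1) := Nat.pow_pos (show 0 < 2 by omega)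
      simp only [zero_add]
      omega
    have h2 := halving Γ ε hnd hlen hexp hε hD 0 hne
    rw [zero_add] at h2
    have h3 : (Tset Γ ε ks 0).card ≤ Kmax := by
      calc (Tset Γ ε ks 0).card ≤ ks.toFinset.card :=
            Finset.card_le_card (Finset.filter_subset _ _)
      _ ≤ ks.length := ks.toFinset_card_le
      _ ≤ Kmax := hlen
    have hfin : 2 ^ m < Kmax := by
      have : 2 ^ m = 2 * 2 ^ (m - 1) := by
        rw [← pow_succ']
        congr 1
        omega
      omega
    exact (Nat.lt_clog_iff_pow_lt one_lt_two).mpr hfin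
end

/-- **Online matching properties of lossless expanders (with sharing).**
If `Γ : L × [D] → R` (with `D ≥ 1`) is a `(K_max, (1−ε)D)` expander, where `ε > 0`
and `K_max ≥ 2`, then it admits `((1−4ε)D, 2⌈log₂ K_max⌉)` online matching up to
size `K_max`. -/
theorem onlineMatching_of_losslessExpander
    {L R : Type*} [Fintype L] [Fintype R] [DecidableEq L] [DecidableEq R]
    (D : ℕ) (hD : 1 ≤ D) (Γ : L → Fin D → R) (Kmax : ℕ) (hK : 2 ≤ Kmax)
    (ε : ℝ) (hε : 0 < ε)
    (hexp : Expander Γ Kmax ((1 - ε) * (D : ℝ))) :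
    OnlineMatching Γ ((1 - 4 * ε) * (D : ℝ)) (2 * Nat.clog 2 Kmax) Kmax := by
  classical
  refine ⟨fun S x => if x ∈ fo S then keptK Γ ε (fo S) x else ∅, ?_, ?_⟩
  · intro S hS x
    dsimp only
    constructor
    · intro hx
      rw [if_neg (fun h => hx (mem_fo.mp h))]
    · intro hx
      have hxfo : x ∈ fo S := mem_fo.mpr hx
      constructor
      · rw [if_pos hxfo]
        unfold keptK
        exact card_mkRec Γ ε hε.le _ x
      · intro S' hS' hpre
        have hxfo' : x ∈ fo S' := mem_fo.mpr (hpre.sublist.subset hx)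
        rw [if_pos hxfo, if_pos hxfo']
        unfold keptK
        rw [hist_stable Γ ε (fo_prefix hpre) hxfo]
  · intro S hS p
    set ks := fo S with hks
    have hnd : ks.Nodup := nodup_fo S
    have hlen : ks.length ≤ Kmax := le_trans (length_fo_le S) hS
    set F : Finset L := ks.toFinset.filter
      (fun x => ∃ i ∈ keptK Γ ε ks x, Γ x i = p) with hF
    have hset : {x : L | x ∈ S ∧ ∃ i ∈ (if x ∈ fo S then keptK Γ ε (fo S) x else ∅),
        Γ x i = p} = ↑F := by
      ext x
      simp only [Set.mem_setOf_eq, hF, Finset.coe_filter, List.mem_toFinset]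
      constructor
      · rintro ⟨hxS, hi⟩
        have hxfo : x ∈ fo S := mem_fo.mpr hxS
        rw [if_pos hxfo] at hi
        exact ⟨hxfo, hi⟩
      · rintro ⟨hxks, hi⟩
        refine ⟨mem_fo.mp hxks, ?_⟩
        rw [if_pos hxks]
        exact hi
    rw [hset, Set.ncard_coe_finset]
    have hcard : F.card ≤ Nat.clog 2 Kmax := by
      have hmap : ∀ x ∈ F, lvlK Γ ε ks x ∈ Finset.range (Nat.clog 2 Kmax) := by
        intro x hxF
        rw [hF, Finset.mem_filter] at hxF
        rw [Finset.mem_range]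
        exact lvl_lt_clog Γ ε hnd hlen hexp hε hD hK x (List.mem_toFinset.mp hxF.1)
      have hinj : Set.InjOn (fun x => lvlK Γ ε ks x) ↑F := by
        intro x hxF y hyF heq
        by_contra hne
        rw [Finset.mem_coe, hF, Finset.mem_filter] at hxF hyF
        exact level_unique Γ ε hnd (List.mem_toFinset.mp hxF.1)
          (List.mem_toFinset.mp hyF.1) hne heq hxF.2 hyF.2
      simpa using Finset.card_le_card_of_injOn _ hmap hinj
    omega
end

section
/- Let G be a bipartite graph Γ : L × [D] → R with finite left side L whose elements are labeled by distinct strings in {0,1}^n, with n ≥ 2, finite right side R and left degree D ≥ 1, and suppose G is a (K_max, (1−ε)D) expander, where 0 < ε < 1 and K_max ≥ 2. Let r = 2⌈log₂ K_max⌉ and let t be the smallest power of two with t ≥ (1/ε)(n−1)(r−1) and t ≥ 2. Then the graph G′ obtained from G by the G ↦ G′ transformation with parameters ε and r has left side L, right side of size |R|·t², left degree D′ = D·t, and admits ((1−5ε)·D′, 1) online matching up to size K_max. -/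
open Finset

set_option linter.unusedSectionVars false
set_option maxHeartbeats 1000000
namespace OMProof
variable {L R : Type*} [Fintype L] [DecidableEq L] [DecidableEq R] {D : ℕ}

open Classical in
noncomputable def usersF (Γ : L → Fin D → R) (σ : L → Option (ℕ × Finset (Fin D)))
    (p : R) (π : ℕ) : Finset L :=
  Finset.univ.filter (fun z => ∃ C, σ z = some (π, C) ∧ ∃ i ∈ C, Γ z i = p)

open Classical in
noncomputable def blockedS (Γ : L → Fin D → R) (σ : L → Option (ℕ × Finset (Fin D)))
    (y : L) (π : ℕ) : Finset (Fin D) :=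
  Finset.univ.filter (fun i => 2 ≤ (usersF Γ σ (Γ y i) π).card)

def goodL (Γ : L → Fin D → R) (ε : ℝ) (σ : L → Option (ℕ × Finset (Fin D)))
    (y : L) (π : ℕ) : Prop :=
  ((blockedS Γ σ y π).card : ℝ) ≤ 2*ε*D

open Classical in
noncomputable def prio (Γ : L → Fin D → R) (ε : ℝ) (m : ℕ)
    (σ : L → Option (ℕ × Finset (Fin D))) (y : L) : ℕ :=
  Nat.find (p := fun π => (1 ≤ π ∧ π ≤ m ∧ goodL Γ ε σ y π) ∨ π = m+1) ⟨m+1, Or.inr rfl⟩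

noncomputable def stepSt (Γ : L → Fin D → R) (ε : ℝ) (m : ℕ)
    (σ : L → Option (ℕ × Finset (Fin D))) (y : L) : L → Option (ℕ × Finset (Fin D)) :=
  if σ y ≠ none then σ else
  fun z => if z = y then
      some (prio Γ ε m σ y, Finset.univ \ blockedS Γ σ y (prio Γ ε m σ y))
    else σ z

noncomputable def procSt (Γ : L → Fin D → R) (ε : ℝ) (m : ℕ) (S : List L) :
    L → Option (ℕ × Finset (Fin D)) :=
  S.foldl (stepSt Γ ε m) (fun _ => none)

def stLE (σ σ' : L → Option (ℕ × Finset (Fin D))) : Prop :=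
  ∀ z v, σ z = some v → σ' z = some v

variable {Γ : L → Fin D → R} {ε : ℝ} {m : ℕ} {σ σ' : L → Option (ℕ × Finset (Fin D))}

open Classical in
noncomputable def prio' (P : ℕ → Prop) (m : ℕ) : ℕ :=
  Nat.find (p := fun π => (1 ≤ π ∧ π ≤ m ∧ P π) ∨ π = m+1) ⟨m+1, Or.inr rfl⟩

open Classical in
theorem prio'_pos (P : ℕ → Prop) (m : ℕ) : 1 ≤ prio' P m := by
  rcases Nat.find_spec (p := fun π => (1 ≤ π ∧ π ≤ m ∧ P π) ∨ π = m+1) ⟨m+1, Or.inr rfl⟩ with h | h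
  · exact h.1
  · rw [prio', h]; omega

open Classical in
theorem prio'_le (P : ℕ → Prop) (m : ℕ) : prio' P m ≤ m + 1 :=
  Nat.find_le (Or.inr rfl)

open Classical in
theorem prio'_good (P : ℕ → Prop) (m : ℕ) (h : prio' P m ≤ m) : P (prio' P m) := by
  rcases Nat.find_spec (p := fun π => (1 ≤ π ∧ π ≤ m ∧ P π) ∨ π = m+1) ⟨m+1, Or.inr rfl⟩ with h' | h'
  · exact h'.2.2
  · rw [prio'] at h; omega

open Classical in
theorem prio'_min (P : ℕ → Prop) (m : ℕ) {π : ℕ} (h1 : 1 ≤ π) (h2 : π ≤ m) (h3 : P π) :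
    prio' P m ≤ π :=
  Nat.find_le (Or.inl ⟨h1, h2, h3⟩)

open Classical in
theorem prio'_not (P : ℕ → Prop) (m : ℕ) {π : ℕ} (h1 : 1 ≤ π) (hlt : π < prio' P m) : ¬ P π := by
  intro hP
  have h2 : π ≤ m := by have := prio'_le P m; omega
  exact absurd (prio'_min P m h1 h2 hP) (by omega)

theorem stLE_refl : stLE σ σ := fun _ _ h => h

theorem stLE_trans {σ'' : L → Option (ℕ × Finset (Fin D))} (h : stLE σ σ') (h' : stLE σ' σ'') :
    stLE σ σ'' := fun z v hz => h' z v (h z v hz)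

theorem stLE_step (y : L) : stLE σ (stepSt Γ ε m σ y) := by
  intro z v hz
  unfold stepSt
  split
  · exact hz
  · rename_i hy
    simp only [ne_eq, not_not] at hy
    by_cases hzy : z = y
    · rw [hzy, hy] at hz; exact absurd hz (by simp)
    · simp [hzy, hz]

theorem stLE_foldl (T : List L) : stLE σ (T.foldl (stepSt Γ ε m) σ) := by
  induction T generalizing σ with
  | nil => exact stLE_refl
  | cons y T ih => exact stLE_trans (stLE_step y) (ih)

theorem procSt_append (S T : List L) :
    procSt Γ ε m (S ++ T) = T.foldl (stepSt Γ ε m) (procSt Γ ε m S) := by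
  simp [procSt, List.foldl_append]

theorem usersF_mono (h : stLE σ σ') (p : R) (π : ℕ) :
    usersF Γ σ p π ⊆ usersF Γ σ' p π := by
  intro z hz
  simp only [usersF, mem_filter, mem_univ, true_and] at hz ⊢
  obtain ⟨C, hC, hi⟩ := hz
  exact ⟨C, h z _ hC, hi⟩

theorem blockedS_mono (h : stLE σ σ') (y : L) (π : ℕ) :
    blockedS Γ σ y π ⊆ blockedS Γ σ' y π := by
  intro i hi
  simp only [blockedS, mem_filter, mem_univ, true_and] at hi ⊢
  exact le_trans hi (card_le_card (usersF_mono h _ _))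

theorem procSt_eq_none (S : List L) (z : L) (hz : z ∉ S) : procSt Γ ε m S z = none := by
  induction S using List.reverseRecOn with
  | nil => simp [procSt]
  | append_singleton T y ih =>
    have hzT : z ∉ T := fun h => hz (by simp [h])
    have hzy : z ≠ y := fun h => hz (by simp [h])
    rw [procSt_append]
    simp only [List.foldl_cons, List.foldl_nil]
    unfold stepSt
    split
    · exact ih hzT
    · simp [hzy, ih hzT]

theorem procSt_mem_isSome (S : List L) (z : L) (hz : z ∈ S) :
    (procSt Γ ε m S z).isSome := by
  induction S using List.reverseRecOn with
  | nil => simp at hz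
  | append_singleton T y ih =>
    rw [procSt_append]
    simp only [List.foldl_cons, List.foldl_nil]
    rcases List.mem_append.1 hz with hzT | hzy
    · obtain ⟨v, hv⟩ := Option.isSome_iff_exists.1 (ih hzT)
      rw [Option.isSome_iff_exists]
      exact ⟨v, stLE_step y z v hv⟩
    · simp only [List.mem_singleton] at hzy
      subst hzy
      unfold stepSt
      split
      · rename_i h; simpa [Option.isSome_iff_ne_none] using h
      · simp



theorem prio_eq (y : L) : prio Γ ε m σ y = prio' (goodL Γ ε σ y) m := rfl

def Inv (Γ : L → Fin D → R) (ε : ℝ) (m : ℕ) (σ : L → Option (ℕ × Finset (Fin D))) : Prop :=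
  (∀ p π, (usersF Γ σ p π).card ≤ 2) ∧
  (∀ z π' C, σ z = some (π', C) →
    1 ≤ π' ∧ π' ≤ m + 1 ∧
    (π' ≤ m → (1 - 2*ε) * (D : ℝ) ≤ (C.card : ℝ)) ∧
    (∀ π, 1 ≤ π → π < π' → 2*ε*(D : ℝ) < ((blockedS Γ σ z π).card : ℝ)))

theorem mem_usersF {p : R} {π : ℕ} {z : L} :
    z ∈ usersF Γ σ p π ↔ ∃ C, σ z = some (π, C) ∧ ∃ i ∈ C, Γ z i = p := by
  simp [usersF]

theorem mem_blockedS {y : L} {π : ℕ} {i : Fin D} :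
    i ∈ blockedS Γ σ y π ↔ 2 ≤ (usersF Γ σ (Γ y i) π).card := by
  simp [blockedS]

theorem stepSt_new {y : L} (hy : σ y = none) (z : L) :
    stepSt Γ ε m σ y z = if z = y then
      some (prio Γ ε m σ y, Finset.univ \ blockedS Γ σ y (prio Γ ε m σ y))
    else σ z := by
  unfold stepSt
  simp [hy]

theorem Inv_step (hInv : Inv Γ ε m σ) (y : L) : Inv Γ ε m (stepSt Γ ε m σ y) := by
  by_cases hy : σ y = none
  case neg =>
    have : stepSt Γ ε m σ y = σ := by unfold stepSt; simp [hy]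
    rwa [this]
  case pos =>
  set π₀ := prio Γ ε m σ y with hπ₀
  set C₀ := Finset.univ \ blockedS Γ σ y π₀ with hC₀
  set σ' := stepSt Γ ε m σ y with hσ'
  have hle : stLE σ σ' := stLE_step y
  have hval : ∀ z, σ' z = if z = y then some (π₀, C₀) else σ z := stepSt_new hy
  have husers : ∀ p π z, z ∈ usersF Γ σ' p π → z = y ∨ z ∈ usersF Γ σ p π := by
    intro p π z hz
    by_cases hzy : z = y
    · exact Or.inl hzy
    · refine Or.inr ?_
      rw [mem_usersF] at hz ⊢
      rwa [hval z, if_neg hzy] at hz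
  have hymem : ∀ p π, y ∈ usersF Γ σ' p π → π = π₀ ∧ ∃ i ∈ C₀, Γ y i = p := by
    intro p π hz
    rw [mem_usersF] at hz
    obtain ⟨C, hC, hi⟩ := hz
    rw [hval y, if_pos rfl] at hC
    simp only [Option.some.injEq, Prod.mk.injEq] at hC
    exact ⟨hC.1.symm, hC.2 ▸ hi⟩
  constructor
  · intro p π
    by_cases hym : y ∈ usersF Γ σ' p π
    · obtain ⟨hππ, i, hiC, hip⟩ := hymem p π hym
      have husub : usersF Γ σ' p π ⊆ insert y (usersF Γ σ p π) := by
        intro z hz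
        rcases husers p π z hz with h | h
        · simp [h]
        · simp [h]
      have hblock : i ∉ blockedS Γ σ y π₀ := by
        rw [hC₀] at hiC; exact (Finset.mem_sdiff.1 hiC).2
      rw [mem_blockedS] at hblock
      have h1 : (usersF Γ σ p π).card ≤ 1 := by
        rw [hππ, ← hip]; omega
      calc (usersF Γ σ' p π).card ≤ (insert y (usersF Γ σ p π)).card := card_le_card husub
        _ ≤ (usersF Γ σ p π).card + 1 := card_insert_le _ _
        _ ≤ 2 := by omega
    · have husub : usersF Γ σ' p π ⊆ usersF Γ σ p π := by
        intro z hz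
        rcases husers p π z hz with h | h
        · exact absurd (h ▸ hz) hym
        · exact h
      exact le_trans (card_le_card husub) (hInv.1 p π)
  · intro z π' C hzC
    by_cases hzy : z = y
    · subst hzy
      rw [hval z, if_pos rfl] at hzC
      simp only [Option.some.injEq, Prod.mk.injEq] at hzC
      obtain ⟨hπ1, hπ2⟩ := hzC
      subst hπ1; subst hπ2
      refine ⟨prio'_pos _ _, prio'_le _ _, ?_, ?_⟩
      · intro hm
        have hgood : goodL Γ ε σ z π₀ := by
          rw [hπ₀, prio_eq] at hm ⊢
          exact prio'_good _ _ hm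
        unfold goodL at hgood
        have hDc : (blockedS Γ σ z π₀).card ≤ D := by
          calc _ ≤ (univ : Finset (Fin D)).card := card_le_card (subset_univ _)
            _ = D := by simp
        have hcard : C₀.card = D - (blockedS Γ σ z π₀).card := by
          rw [hC₀, card_sdiff_of_subset (subset_univ _), card_univ, Fintype.card_fin]
        rw [hcard]
        push_cast [Nat.cast_sub hDc]
        nlinarith [hgood]
      · intro π h1 hlt
        have hnot : ¬ goodL Γ ε σ z π := by
          rw [hπ₀, prio_eq] at hlt
          exact prio'_not _ _ h1 hlt
        unfold goodL at hnot
        push_neg at hnot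
        calc 2*ε*(D:ℝ) < ((blockedS Γ σ z π).card : ℝ) := hnot
          _ ≤ _ := Nat.cast_le.2 (card_le_card (blockedS_mono hle z π))
    · rw [hval z, if_neg hzy] at hzC
      obtain ⟨h1, h2, h3, h4⟩ := hInv.2 z π' C hzC
      refine ⟨h1, h2, h3, ?_⟩
      intro π hπ1 hπlt
      calc 2*ε*(D:ℝ) < ((blockedS Γ σ z π).card : ℝ) := h4 π hπ1 hπlt
        _ ≤ _ := Nat.cast_le.2 (card_le_card (blockedS_mono hle z π))

theorem Inv_init : Inv Γ ε m (fun _ => (none : Option (ℕ × Finset (Fin D)))) := by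
  constructor
  · intro p π
    have : usersF Γ (fun _ => (none : Option (ℕ × Finset (Fin D)))) p π = ∅ := by
      ext z; simp [mem_usersF]
    simp [this]
  · intro z π' C h; simp at h

theorem Inv_proc (S : List L) : Inv Γ ε m (procSt Γ ε m S) := by
  induction S using List.reverseRecOn with
  | nil => exact Inv_init
  | append_singleton T y ih =>
    rw [procSt_append]
    simpa using Inv_step ih y


section Counting
variable {Kmax : ℕ}

open Classical in
theorem counting (hexp : Expander Γ Kmax ((1 - ε) * (D:ℝ))) (hε0 : 0 < ε) (hD : 1 ≤ D)
    (hInv : Inv Γ ε m σ) (y₀ : L) (hy₀ : σ y₀ = none) (π : ℕ)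
    (hK : ((univ.filter (fun z => z = y₀ ∨ ∃ π' C', σ z = some (π',C') ∧ π+1 ≤ π')) ∪
        (univ.filter (fun z => ∃ C', σ z = some (π, C')))).card ≤ Kmax)
    (hbad : ∀ z, (z = y₀ ∨ ∃ π' C', σ z = some (π',C') ∧ π+1 ≤ π') →
      2*ε*(D:ℝ) < ((blockedS Γ σ z π).card:ℝ)) :
    (univ.filter (fun z => z = y₀ ∨ ∃ π' C', σ z = some (π',C') ∧ π+1 ≤ π')).card
      < (univ.filter (fun z => ∃ C', σ z = some (π, C'))).card := by
  set A := univ.filter (fun z => z = y₀ ∨ ∃ π' C', σ z = some (π',C') ∧ π+1 ≤ π') with hA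
  set Cs := univ.filter (fun z : L => ∃ C', σ z = some (π, C')) with hCs
  have hdisj : Disjoint A Cs := by
    rw [Finset.disjoint_left]
    intro z hzA hzC
    rw [hA, mem_filter] at hzA
    rw [hCs, mem_filter] at hzC
    obtain ⟨C'', hC''⟩ := hzC.2
    rcases hzA.2 with h | ⟨π', C', hC', hπ'⟩
    · rw [h, hy₀] at hC''; exact absurd hC'' (by simp)
    · rw [hC'] at hC''
      simp only [Option.some.injEq, Prod.mk.injEq] at hC''
      omega
  set S₀ := A ∪ Cs with hS₀
  set E := S₀ ×ˢ (univ : Finset (Fin D)) with hE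
  set E' := E.filter (fun q => q.1 ∈ A ∧ 2 ≤ (usersF Γ σ (Γ q.1 q.2) π).card) with hE'
  set N := E.image (fun q => Γ q.1 q.2) with hN
  have h1 : N ⊆ (E \ E').image (fun q => Γ q.1 q.2) := by
    intro p hp
    rw [hN, mem_image] at hp
    obtain ⟨q, hq, hΓ⟩ := hp
    by_cases h2u : 2 ≤ (usersF Γ σ p π).card
    · have hne : (usersF Γ σ p π).Nonempty := card_pos.1 (by omega)
      obtain ⟨u, hu⟩ := hne
      rw [mem_usersF] at hu
      obtain ⟨C', hC', i, hiC, hΓui⟩ := hu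
      have huCs : u ∈ Cs := by rw [hCs, mem_filter]; exact ⟨mem_univ _, C', hC'⟩
      have huS : u ∈ S₀ := mem_union_right _ huCs
      have hmemE : (u, i) ∈ E := by rw [hE, mem_product]; exact ⟨huS, mem_univ _⟩
      have hnot : (u, i) ∉ E' := by
        rw [hE', mem_filter]
        rintro ⟨-, huA, -⟩
        exact (Finset.disjoint_left.1 hdisj) huA huCs
      rw [mem_image]
      exact ⟨(u, i), mem_sdiff.2 ⟨hmemE, hnot⟩, hΓui⟩
    · rw [mem_image]
      refine ⟨q, mem_sdiff.2 ⟨hq, ?_⟩, hΓ⟩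
      rw [hE', mem_filter]
      rintro ⟨-, -, h2⟩
      rw [hΓ] at h2
      exact h2u h2
  have hScard : S₀.card ≤ Kmax := hK
  have h2 : ((1-ε) * (D:ℝ)) * S₀.card ≤ (N.card : ℝ) := hexp S₀ hScard
  have h3 : N.card + E'.card ≤ E.card := by
    have hNle : N.card ≤ (E \ E').card := le_trans (card_le_card h1) (card_image_le)
    have hsub : E' ⊆ E := filter_subset _ _
    have := card_sdiff_of_subset hsub
    have := card_le_card hsub
    omega
  have h4 : E.card = S₀.card * D := by
    rw [hE, card_product, card_univ, Fintype.card_fin]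
  have h5 : E'.card = ∑ z ∈ A, (blockedS Γ σ z π).card := by
    rw [card_eq_sum_card_fiberwise (f := Prod.fst) (t := A)
      (fun q hq => ((mem_filter.1 hq).2).1)]
    refine Finset.sum_congr rfl (fun z hz => ?_)
    have hzS : z ∈ S₀ := mem_union_left _ hz
    have : E'.filter (fun q => q.1 = z) = {z} ×ˢ blockedS Γ σ z π := by
      ext q
      simp only [hE', mem_filter, mem_product, mem_singleton, hE, mem_univ, and_true,
        mem_blockedS]
      constructor
      · rintro ⟨⟨hqS, hqA, hq2⟩, hq1⟩
        exact ⟨hq1, by rwa [hq1] at hq2⟩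
      · rintro ⟨hq1, hq2⟩
        exact ⟨⟨by rwa [hq1], by rwa [hq1], by rwa [hq1]⟩, hq1⟩
    rw [this, card_product, card_singleton, one_mul]
  have hAne : A.Nonempty := ⟨y₀, by rw [hA, mem_filter]; exact ⟨mem_univ _, Or.inl rfl⟩⟩
  have h6 : 2*ε*(D:ℝ) * A.card < (E'.card:ℝ) := by
    have : (E'.card : ℝ) = ∑ z ∈ A, ((blockedS Γ σ z π).card : ℝ) := by
      rw [h5]; push_cast; rfl
    rw [this]
    have := Finset.sum_lt_sum_of_nonempty hAne
      (f := fun _ => 2*ε*(D:ℝ)) (g := fun z => ((blockedS Γ σ z π).card : ℝ))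
      (fun z hz => hbad z (by rw [hA, mem_filter] at hz; exact hz.2))
    calc 2*ε*(D:ℝ) * A.card = ∑ _z ∈ A, 2*ε*(D:ℝ) := by rw [Finset.sum_const]; ring
      _ < _ := this
  have h7 : (E'.card : ℝ) ≤ ε * D * S₀.card := by
    have h3' : (N.card : ℝ) + E'.card ≤ E.card := by exact_mod_cast h3
    have h4' : (E.card : ℝ) = S₀.card * D := by exact_mod_cast h4
    nlinarith [h2]
  have hsum : S₀.card = A.card + Cs.card := card_union_of_disjoint hdisj
  have hDpos : (0:ℝ) < D := by exact_mod_cast hD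
  have : (A.card : ℝ) < Cs.card := by
    have hsum' : (S₀.card : ℝ) = A.card + Cs.card := by exact_mod_cast hsum
    nlinarith [mul_pos hε0 hDpos]
  exact_mod_cast this

open Classical in
theorem noFallback (hexp : Expander Γ Kmax ((1 - ε) * (D:ℝ))) (hε0 : 0 < ε) (hD : 1 ≤ D)
    (hm : m = Nat.clog 2 Kmax) (hK2 : 2 ≤ Kmax)
    (hInv : Inv Γ ε m σ) (y₀ : L) (hy₀ : σ y₀ = none)
    (harr : (univ.filter (fun z : L => σ z ≠ none)).card < Kmax) :
    ∃ π, 1 ≤ π ∧ π ≤ m ∧ goodL Γ ε σ y₀ π := by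
  by_contra hcon
  push_neg at hcon
  have hcon' : ∀ π, 1 ≤ π → π ≤ m → 2*ε*(D:ℝ) < ((blockedS Γ σ y₀ π).card:ℝ) := by
    intro π h1 h2
    have := hcon π h1 h2
    unfold goodL at this
    push_neg at this
    exact this
  set g : ℕ → ℕ := fun π =>
    (univ.filter (fun z => z = y₀ ∨ ∃ π' C', σ z = some (π',C') ∧ π ≤ π')).card with hg
  have hsubins : ∀ π, (univ.filter (fun z => z = y₀ ∨ ∃ π' C', σ z = some (π',C') ∧ π ≤ π'))
      ⊆ insert y₀ (univ.filter (fun z : L => σ z ≠ none)) := by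
    intro π z hz
    rw [mem_filter] at hz
    rcases hz.2 with h | ⟨π', C', hC', -⟩
    · simp [h]
    · rw [mem_insert, mem_filter]
      exact Or.inr ⟨mem_univ _, by rw [hC']; simp⟩
  have hgKmax : ∀ π, g π ≤ Kmax := by
    intro π
    calc g π ≤ (insert y₀ (univ.filter (fun z : L => σ z ≠ none))).card :=
        card_le_card (hsubins π)
      _ ≤ (univ.filter (fun z : L => σ z ≠ none)).card + 1 := card_insert_le _ _
      _ ≤ Kmax := harr
  have hg1 : ∀ π, 1 ≤ g π := by
    intro π
    have : y₀ ∈ univ.filter (fun z => z = y₀ ∨ ∃ π' C', σ z = some (π',C') ∧ π ≤ π') := by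
      rw [mem_filter]; exact ⟨mem_univ _, Or.inl rfl⟩
    exact card_pos.2 ⟨y₀, this⟩
  have key : ∀ π, 1 ≤ π → π ≤ m → 2 * g (π+1) < g π := by
    intro π h1 h2
    set A := univ.filter (fun z => z = y₀ ∨ ∃ π' C', σ z = some (π',C') ∧ π+1 ≤ π') with hA
    set Cs := univ.filter (fun z : L => ∃ C', σ z = some (π, C')) with hCs
    have hdisj : Disjoint A Cs := by
      rw [Finset.disjoint_left]
      intro z hzA hzC
      rw [hA, mem_filter] at hzA
      rw [hCs, mem_filter] at hzC
      obtain ⟨C'', hC''⟩ := hzC.2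
      rcases hzA.2 with h | ⟨π', C', hC', hπ'⟩
      · rw [h, hy₀] at hC''; exact absurd hC'' (by simp)
      · rw [hC'] at hC''
        simp only [Option.some.injEq, Prod.mk.injEq] at hC''
        omega
    have hunion : (univ.filter (fun z => z = y₀ ∨ ∃ π' C', σ z = some (π',C') ∧ π ≤ π'))
        = A ∪ Cs := by
      ext z
      simp only [hA, hCs, mem_union, mem_filter, mem_univ, true_and]
      constructor
      · rintro (h | ⟨π', C', hC', hπ'⟩)
        · exact Or.inl (Or.inl h)
        · by_cases heq : π' = π
          · exact Or.inr ⟨C', by rw [← heq]; exact hC'⟩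
          · exact Or.inl (Or.inr ⟨π', C', hC', by omega⟩)
      · rintro ((h | ⟨π', C', hC', hπ'⟩) | ⟨C', hC'⟩)
        · exact Or.inl h
        · exact Or.inr ⟨π', C', hC', by omega⟩
        · exact Or.inr ⟨π, C', hC', le_refl _⟩
    have hbad : ∀ z, (z = y₀ ∨ ∃ π' C', σ z = some (π',C') ∧ π+1 ≤ π') →
        2*ε*(D:ℝ) < ((blockedS Γ σ z π).card:ℝ) := by
      rintro z (h | ⟨π', C', hC', hπ'⟩)
      · rw [h]; exact hcon' π h1 h2
      · exact (hInv.2 z π' C' hC').2.2.2 π h1 (by omega)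
    have hKc : (A ∪ Cs).card ≤ Kmax := by
      rw [← hunion]; exact hgKmax π
    have hlt := counting hexp hε0 hD hInv y₀ hy₀ π hKc hbad
    rw [← hA, ← hCs] at hlt
    have hgπ : g π = A.card + Cs.card := by
      rw [hg]
      simp only
      rw [hunion, card_union_of_disjoint hdisj]
    have hgπ1 : g (π+1) = A.card := rfl
    omega
  have hm1 : 1 ≤ m := by
    rw [hm]; exact Nat.clog_pos one_lt_two hK2
  have chain : ∀ j, 1 ≤ j → j ≤ m → 2^j < g (m+1-j) := by
    intro j
    induction j with
    | zero => omega
    | succ j ih =>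
      intro _ hjm
      by_cases hj : j = 0
      · subst hj
        have h1 := key m hm1 (le_refl _)
        have h2 := hg1 (m+1)
        have e1 : (2:ℕ)^(0+1) = 2 := by norm_num
        have e2 : m + 1 - (0+1) = m := by omega
        rw [e1, e2]
        omega
      · have hj1 : 1 ≤ j := by omega
        have ihj := ih hj1 (by omega)
        have hkey := key (m-j) (by omega) (by omega)
        have heq : m - j + 1 = m + 1 - j := by omega
        have heq2 : m + 1 - (j+1) = m - j := by omega
        rw [heq] at hkey
        rw [heq2]
        have hp : (2:ℕ)^(j+1) = 2 * 2^j := by ring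
        omega
  have hfin := chain m hm1 (le_refl _)
  have e3 : m + 1 - m = 1 := by omega
  rw [e3] at hfin
  have hpow : Kmax ≤ 2 ^ m := by
    rw [hm]; exact Nat.le_pow_clog one_lt_two Kmax
  have := hgKmax 1
  omega


open Classical in
theorem arr_proc (S : List L) :
    (univ.filter (fun z : L => procSt Γ ε m S z ≠ none)) = S.toFinset := by
  ext z
  simp only [mem_filter, mem_univ, true_and, List.mem_toFinset]
  constructor
  · intro h
    by_contra hz
    exact h (procSt_eq_none S z hz)
  · intro h
    obtain ⟨v, hv⟩ := Option.isSome_iff_exists.1 (procSt_mem_isSome (Γ:=Γ) (ε:=ε) (m:=m) S z h)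
    rw [hv]; simp

theorem prio_le_m (hexp : Expander Γ Kmax ((1 - ε) * (D:ℝ))) (hε0 : 0 < ε) (hD : 1 ≤ D)
    (hm : m = Nat.clog 2 Kmax) (hK2 : 2 ≤ Kmax) :
    ∀ S : List L, S.length ≤ Kmax → ∀ z π' C, procSt Γ ε m S z = some (π', C) → π' ≤ m := by
  intro S
  induction S using List.reverseRecOn with
  | nil =>
    intro _ z π' C h
    rw [procSt_eq_none [] z (by simp)] at h
    exact absurd h (by simp)
  | append_singleton T y ih =>
    intro hlen z π' C h
    rw [procSt_append] at h
    simp only [List.foldl_cons, List.foldl_nil] at h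
    set σ := procSt Γ ε m T with hσ
    have hlenT : T.length ≤ Kmax := by
      rw [List.length_append] at hlen; simp at hlen; omega
    by_cases hz : σ z = none
    · by_cases hy : σ y = none
      · by_cases hzy : z = y
        · subst hzy
          rw [stepSt_new hy z, if_pos rfl] at h
          simp only [Option.some.injEq, Prod.mk.injEq] at h
          rw [← h.1]
          have hInv : Inv Γ ε m σ := Inv_proc T
          have harr : (univ.filter (fun w : L => σ w ≠ none)).card < Kmax := by
            rw [hσ, arr_proc]
            have h1 : T.toFinset.card ≤ T.length := T.toFinset_card_le
            rw [List.length_append] at hlen; simp at hlen; omega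
          obtain ⟨π, h1, h2, hgood⟩ := noFallback hexp hε0 hD hm hK2 hInv z hy harr
          have hple : prio Γ ε m σ z ≤ π := by
            rw [prio_eq]
            exact prio'_min _ _ h1 h2 hgood
          omega
        · rw [stepSt_new hy z, if_neg hzy] at h
          rw [h] at hz; exact absurd hz (by simp)
      · have : stepSt Γ ε m σ y = σ := by unfold stepSt; simp [hy]
        rw [this] at h
        rw [h] at hz; exact absurd hz (by simp)
    · obtain ⟨v, hv⟩ := Option.ne_none_iff_exists'.1 hz
      have := stLE_step (Γ:=Γ) (ε:=ε) (m:=m) y z v hv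
      rw [this] at h
      have hveq : v = (π', C) := Option.some_injective _ h
      exact ih hlenT z π' C (by rw [hv, hveq])

open Classical in
theorem base_matching (hexp : Expander Γ Kmax ((1 - ε) * (D:ℝ))) (hε0 : 0 < ε) (hD : 1 ≤ D)
    (hm : m = Nat.clog 2 Kmax) (hK2 : 2 ≤ Kmax) :
    OnlineMatching Γ ((1-2*ε)*(D:ℝ)) (2*m) Kmax := by
  classical
  refine ⟨fun S x => ((procSt Γ ε m S) x).elim ∅ (fun v => v.2), ?_, ?_⟩
  · intro S hS x
    dsimp only
    constructor
    · intro hx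
      rw [procSt_eq_none S x hx]
      rfl
    · intro hx
      obtain ⟨v, hv⟩ := Option.isSome_iff_exists.1
        (procSt_mem_isSome (Γ:=Γ) (ε:=ε) (m:=m) S x hx)
      obtain ⟨π', C⟩ := v
      constructor
      · have hInv : Inv Γ ε m (procSt Γ ε m S) := Inv_proc S
        have hb := hInv.2 x π' C hv
        have hπm : π' ≤ m := prio_le_m hexp hε0 hD hm hK2 S hS x π' C hv
        rw [hv]
        exact hb.2.2.1 hπm
      · intro S' hS' hpre
        obtain ⟨u, rfl⟩ := hpre
        rw [procSt_append]
        have hfr := stLE_foldl (Γ:=Γ) (ε:=ε) (m:=m) (σ := procSt Γ ε m S) u x _ hv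
        rw [hv, hfr]
  · intro S hS p
    dsimp only
    set σ := procSt Γ ε m S with hσ
    set B : Finset L := (Finset.Icc 1 m).biUnion (fun π => usersF Γ σ p π) with hB
    have hsub : {x : L | x ∈ S ∧ ∃ i ∈ ((σ x).elim ∅ (fun v => v.2)), Γ x i = p} ⊆ (B : Set L) := by
      intro x hx
      obtain ⟨hxS, i, hiC, hΓ⟩ := hx
      obtain ⟨v, hv⟩ := Option.isSome_iff_exists.1 (procSt_mem_isSome (Γ:=Γ) (ε:=ε) (m:=m) S x hxS)
      obtain ⟨π', C⟩ := v
      rw [← hσ] at hv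
      rw [hv] at hiC
      simp only [Option.elim] at hiC
      have hInv : Inv Γ ε m σ := Inv_proc S
      have hb := hInv.2 x π' C hv
      have hπm : π' ≤ m := prio_le_m hexp hε0 hD hm hK2 S hS x π' C hv
      have : x ∈ B := by
        rw [hB, mem_biUnion]
        exact ⟨π', by rw [Finset.mem_Icc]; exact ⟨hb.1, hπm⟩,
          mem_usersF.2 ⟨C, hv, i, hiC, hΓ⟩⟩
      exact this
    calc {x : L | x ∈ S ∧ ∃ i ∈ ((σ x).elim ∅ (fun v => v.2)), Γ x i = p}.ncard
        ≤ (B : Set L).ncard := Set.ncard_le_ncard hsub (Set.toFinite _)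
      _ = B.card := Set.ncard_coe_finset B
      _ ≤ ∑ π ∈ Finset.Icc 1 m, (usersF Γ σ p π).card := card_biUnion_le
      _ ≤ ∑ _π ∈ Finset.Icc 1 m, 2 := Finset.sum_le_sum (fun π _ => (Inv_proc S).1 p π)
      _ = 2 * m := by rw [Finset.sum_const, Nat.card_Icc]; simp [Nat.smul_one_eq_cast]; ring

end Counting

end OMProof

open Polynomial in
theorem polyEval_agree_card_le {F : Type*} [Field F] [Fintype F] [DecidableEq F] {n : ℕ}
    (b c : Fin n → Bool) (hbc : b ≠ c) :
    ((univ : Finset F).filter (fun a => polyEval b a = polyEval c a)).card ≤ n - 1 := by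
  set Q : F[X] :=
    ∑ j : Fin n, Polynomial.C ((if b j then (1:F) else 0) - (if c j then 1 else 0))
      * Polynomial.X ^ (j:ℕ) with hQ
  have heval : ∀ a : F, Q.eval a = polyEval b a - polyEval c a := by
    intro a
    rw [hQ, Polynomial.eval_finset_sum]
    simp only [Polynomial.eval_mul, Polynomial.eval_C, Polynomial.eval_pow, Polynomial.eval_X]
    rw [polyEval, polyEval, ← Finset.sum_sub_distrib]
    congr 1
    ext j
    ring
  obtain ⟨j₀, hj₀⟩ : ∃ j, b j ≠ c j := by
    by_contra hc
    push_neg at hc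
    exact hbc (funext hc)
  have hcoeff : Q.coeff (j₀ : ℕ) = (if b j₀ then (1:F) else 0) - (if c j₀ then 1 else 0) := by
    rw [hQ, Polynomial.finset_sum_coeff, Finset.sum_eq_single j₀]
    · rw [Polynomial.coeff_C_mul, Polynomial.coeff_X_pow, if_pos rfl, mul_one]
    · intro j _ hj
      have hne : ¬ ((j:ℕ) = (j₀:ℕ)) := fun h => hj (Fin.ext h)
      rw [Polynomial.coeff_C_mul, Polynomial.coeff_X_pow,
        if_neg (fun h => hne (Eq.symm h)), mul_zero]
    · simp
  have hne : Q ≠ 0 := by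
    intro h0
    rw [h0, Polynomial.coeff_zero] at hcoeff
    cases hb : b j₀ <;> cases hc : c j₀
    · exact hj₀ (hb.trans hc.symm)
    · rw [hb, hc] at hcoeff; simp at hcoeff
    · rw [hb, hc] at hcoeff; simp at hcoeff
    · exact hj₀ (hb.trans hc.symm)
  have hdeg : Q.natDegree ≤ n - 1 := by
    rw [hQ]
    refine Polynomial.natDegree_sum_le_of_forall_le _ _ (fun j _ => ?_)
    calc (Polynomial.C ((if b j then (1:F) else 0) - (if c j then 1 else 0))
          * Polynomial.X ^ (j:ℕ)).natDegree
        ≤ (Polynomial.X ^ (j:ℕ) : F[X]).natDegree := Polynomial.natDegree_C_mul_le _ _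
      _ = (j:ℕ) := Polynomial.natDegree_X_pow _
      _ ≤ n - 1 := by have := j.isLt; omega
  have hsub : (univ : Finset F).filter (fun a => polyEval b a = polyEval c a)
      ⊆ Q.roots.toFinset := by
    intro a ha
    rw [mem_filter] at ha
    rw [Multiset.mem_toFinset, Polynomial.mem_roots hne]
    rw [Polynomial.IsRoot, heval a, sub_eq_zero]
    exact ha.2
  calc ((univ : Finset F).filter (fun a => polyEval b a = polyEval c a)).card
      ≤ Q.roots.toFinset.card := card_le_card hsub
    _ ≤ Multiset.card Q.roots := Multiset.toFinset_card_le _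
    _ ≤ Q.natDegree := Polynomial.card_roots' Q
    _ ≤ n - 1 := hdeg



namespace OMProof2
variable {L R F : Type*} [Fintype L] [DecidableEq L] [DecidableEq R]
    [Field F] [Fintype F] [DecidableEq F] {D n : ℕ}
set_option linter.unusedSectionVars false
set_option maxHeartbeats 1000000

def Pfx (S : List L) (x : L) : List L := S.take (S.idxOf x + 1)

open Classical in
noncomputable def gaDef (Γ : L → Fin D → R) (lab : L → Fin n → Bool)
    (f : List L → L → Finset (Fin D)) (P : List L) (x : L) (i : Fin D) : Finset F :=
  univ.filter (fun a => ∀ y ∈ P, y ≠ x → (∃ j ∈ f P y, Γ y j = Γ x i) →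
    polyEval (lab y) a ≠ polyEval (lab x) a)

open Classical in
noncomputable def fT (Γ : L → Fin D → R) (lab : L → Fin n → Bool)
    (f : List L → L → Finset (Fin D)) (S : List L) (x : L) : Finset (Fin D × F) :=
  if x ∈ S then (f (Pfx S x) x).biUnion
    (fun i => (gaDef Γ lab f (Pfx S x) x i).image (fun a => (i, a))) else ∅

theorem mem_take_idx : ∀ (S : List L) (x : L) (k : ℕ), x ∈ S → S.idxOf x < k → x ∈ S.take k := by
  intro S
  induction S with
  | nil => intro x k hx; simp at hx
  | cons a T ih =>
    intro x k hx hk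
    by_cases hxa : x = a
    · subst hxa
      rw [List.idxOf_cons_self] at hk
      obtain ⟨k', rfl⟩ : ∃ k', k = k' + 1 := ⟨k - 1, by omega⟩
      rw [List.take_succ_cons]
      exact List.mem_cons_self
    · have hxT : x ∈ T := by
        rcases List.mem_cons.1 hx with h | h
        · exact absurd h hxa
        · exact h
      rw [List.idxOf_cons_ne _ (fun h => hxa h.symm)] at hk
      obtain ⟨k', rfl⟩ : ∃ k', k = k' + 1 := ⟨k - 1, by omega⟩
      rw [List.take_succ_cons]
      exact List.mem_cons_of_mem _ (ih x k' hxT (by omega))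

theorem Pfx_prefix (S : List L) (x : L) : Pfx S x <+: S := List.take_prefix _ _

theorem Pfx_len (S : List L) (x : L) : (Pfx S x).length ≤ S.length := by
  rw [Pfx, List.length_take]; exact min_le_right _ _

theorem Pfx_mem (S : List L) (x : L) (hx : x ∈ S) : x ∈ Pfx S x :=
  mem_take_idx S x _ hx (by omega)

theorem Pfx_stable (S S' : List L) (x : L) (hx : x ∈ S) (hpre : S <+: S') :
    Pfx S x = Pfx S' x := by
  obtain ⟨u, rfl⟩ := hpre
  rw [Pfx, Pfx, List.idxOf_append_of_mem hx, List.take_append_of_le_length (by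
    have := List.idxOf_lt_length_iff.2 hx; omega)]

theorem Pfx_mono (S : List L) (x1 x2 : L) (h : S.idxOf x1 < S.idxOf x2) :
    Pfx S x1 <+: Pfx S x2 := by
  have : Pfx S x1 = (Pfx S x2).take (S.idxOf x1 + 1) := by
    rw [Pfx, Pfx, List.take_take]
    congr 1
    omega
  rw [this]
  exact List.take_prefix _ _

open Classical in
theorem mem_fT (Γ : L → Fin D → R) (lab : L → Fin n → Bool)
    (f : List L → L → Finset (Fin D)) (S : List L) (x : L) (hx : x ∈ S) (i : Fin D) (a : F) :
    ((i,a) ∈ fT Γ lab f S x ↔ i ∈ f (Pfx S x) x ∧ a ∈ gaDef Γ lab f (Pfx S x) x i) := by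
  rw [fT, if_pos hx]
  simp only [mem_biUnion, mem_image, Prod.mk.injEq]
  constructor
  · rintro ⟨i', hi', a', ha', h1, h2⟩
    subst h1; subst h2
    exact ⟨hi', ha'⟩
  · rintro ⟨h1, h2⟩
    exact ⟨i, h1, a, h2, rfl, rfl⟩

open Classical in
theorem transform (Γ : L → Fin D → R) (lab : L → Fin n → Bool) (hlab : Function.Injective lab)
    {ℓ ℓ' : ℝ} {r K : ℕ} (hr : 1 ≤ r) (hn : 1 ≤ n)
    (hbase : OnlineMatching Γ ℓ r K)
    (hfac : ((r:ℝ) - 1) * ((n:ℝ) - 1) ≤ (Fintype.card F : ℝ))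
    (hsub : ℓ' ≤ ℓ * ((Fintype.card F : ℝ) - ((r:ℝ)-1) * ((n:ℝ)-1))) :
    OnlineMatching (fun (x : L) (q : Fin D × F) =>
      ((Γ x q.1, polyEval (lab x) q.2, q.2) : R × F × F)) ℓ' 1 K := by
  classical
  obtain ⟨f, hf1, hf2⟩ := hbase
  refine ⟨fT Γ lab f, ?_, ?_⟩
  · intro S hS x
    constructor
    · intro hx
      rw [fT, if_neg hx]
    · intro hx
      have hPlen : (Pfx S x).length ≤ K := le_trans (Pfx_len S x) hS
      have hxP : x ∈ Pfx S x := Pfx_mem S x hx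
      constructor
      · -- cardinality bound
        rw [fT, if_pos hx]
        have hdisj : ∀ i₁ ∈ f (Pfx S x) x, ∀ i₂ ∈ f (Pfx S x) x, i₁ ≠ i₂ →
            Disjoint ((gaDef Γ lab f (Pfx S x) x i₁).image (fun a => ((i₁, a) : Fin D × F)))
                     ((gaDef Γ lab f (Pfx S x) x i₂).image (fun a => (i₂, a))) := by
          intro i₁ _ i₂ _ hne12
          rw [Finset.disjoint_left]
          rintro ⟨i', a'⟩ h1 h2
          rw [mem_image] at h1 h2
          obtain ⟨a1, -, h1⟩ := h1
          obtain ⟨a2, -, h2⟩ := h2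
          apply hne12
          have e1 : i₁ = i' := congrArg Prod.fst h1
          have e2 : i₂ = i' := congrArg Prod.fst h2
          rw [e1, e2]
        rw [card_biUnion hdisj]
        have hterm : ∀ i ∈ f (Pfx S x) x,
            (Fintype.card F : ℝ) - ((r:ℝ)-1) * ((n:ℝ)-1)
              ≤ ((gaDef (F := F) Γ lab f (Pfx S x) x i).card : ℝ) := by
          intro i hi
          set P := Pfx S x with hP
          set sharers := ((P.toFinset.erase x).filter
            (fun y => ∃ j ∈ f P y, Γ y j = Γ x i)) with hsh
          have hshcard : sharers.card ≤ r - 1 := by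
            have hset : {y : L | y ∈ P ∧ ∃ j ∈ f P y, Γ y j = Γ x i}
                = ↑(P.toFinset.filter (fun y => ∃ j ∈ f P y, Γ y j = Γ x i)) := by
              ext y
              simp [List.mem_toFinset]
            have h2 := hf2 P hPlen (Γ x i)
            rw [hset, Set.ncard_coe_finset] at h2
            have hxmem : x ∈ P.toFinset.filter (fun y => ∃ j ∈ f P y, Γ y j = Γ x i) := by
              simp only [mem_filter, List.mem_toFinset]
              exact ⟨hxP, i, hi, rfl⟩
            rw [hsh, Finset.filter_erase, Finset.card_erase_of_mem hxmem]
            omega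
          have hbadsub : univ \ gaDef (F := F) Γ lab f P x i ⊆ sharers.biUnion (fun y =>
              univ.filter (fun a => polyEval (lab y) a = polyEval (lab x) a)) := by
            intro a ha
            rw [mem_sdiff] at ha
            have h2 := ha.2
            rw [gaDef] at h2
            simp only [mem_filter, mem_univ, true_and] at h2
            push_neg at h2
            obtain ⟨y, hyP, hyx, hshare, heqv⟩ := h2
            rw [mem_biUnion]
            refine ⟨y, ?_, by simp [heqv]⟩
            rw [hsh, mem_filter, Finset.mem_erase]
            exact ⟨⟨hyx, List.mem_toFinset.2 hyP⟩, hshare⟩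
          have hbadcard : (univ \ gaDef (F := F) Γ lab f P x i).card ≤ (r-1) * (n-1) := by
            calc (univ \ gaDef (F := F) Γ lab f P x i).card
                ≤ ∑ y ∈ sharers,
                  (univ.filter (fun a => polyEval (lab y) a = polyEval (lab x) a)).card :=
                le_trans (card_le_card hbadsub) card_biUnion_le
              _ ≤ ∑ _y ∈ sharers, (n-1) := Finset.sum_le_sum (fun y hy => by
                  apply polyEval_agree_card_le
                  intro hlabeq
                  have heq : y = x := hlab hlabeq
                  rw [hsh, mem_filter, Finset.mem_erase] at hy
                  exact hy.1.1 heq)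
              _ = sharers.card * (n-1) := by rw [Finset.sum_const, smul_eq_mul]
              _ ≤ (r-1)*(n-1) := Nat.mul_le_mul_right _ hshcard
          have hsplit : (univ \ gaDef (F := F) Γ lab f P x i).card + (gaDef (F := F) Γ lab f P x i).card
              = Fintype.card F := by
            rw [card_sdiff_of_subset (subset_univ _), card_univ]
            have : (gaDef (F := F) Γ lab f P x i).card ≤ Fintype.card F := by
              rw [← card_univ]; exact card_le_card (subset_univ _)
            omega
          have hc0 : (((r-1) * (n-1) : ℕ) : ℝ) = ((r:ℝ)-1) * ((n:ℝ)-1) := by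
            rw [Nat.cast_mul, Nat.cast_sub hr, Nat.cast_sub hn]
            push_cast
            ring
          have hc1 : ((univ \ gaDef (F := F) Γ lab f P x i).card : ℝ) ≤ ((r:ℝ)-1) * ((n:ℝ)-1) := by
            rw [← hc0]
            exact_mod_cast hbadcard
          have hcast : ((univ \ gaDef (F := F) Γ lab f P x i).card : ℝ) + ((gaDef (F := F) Γ lab f P x i).card : ℝ)
              = (Fintype.card F : ℝ) := by
            exact_mod_cast hsplit
          linarith
        have hℓcard : ℓ ≤ ((f (Pfx S x) x).card : ℝ) := ((hf1 (Pfx S x) hPlen x).2 hxP).1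
        have hfactor : (0:ℝ) ≤ (Fintype.card F : ℝ) - ((r:ℝ)-1) * ((n:ℝ)-1) := by linarith
        have himgcard : ∀ i, ((gaDef Γ lab f (Pfx S x) x i).image
            (fun a => ((i, a) : Fin D × F))).card = (gaDef (F := F) Γ lab f (Pfx S x) x i).card := by
          intro i
          apply card_image_of_injective
          intro a b hab
          exact congrArg Prod.snd hab
        calc ℓ' ≤ ℓ * ((Fintype.card F : ℝ) - ((r:ℝ)-1) * ((n:ℝ)-1)) := hsub
          _ ≤ ((f (Pfx S x) x).card : ℝ) * ((Fintype.card F : ℝ) - ((r:ℝ)-1) * ((n:ℝ)-1)) :=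
            mul_le_mul_of_nonneg_right hℓcard hfactor
          _ = ∑ _i ∈ f (Pfx S x) x, ((Fintype.card F : ℝ) - ((r:ℝ)-1) * ((n:ℝ)-1)) := by
            rw [Finset.sum_const, nsmul_eq_mul]
          _ ≤ ∑ i ∈ f (Pfx S x) x, ((gaDef (F := F) Γ lab f (Pfx S x) x i).card : ℝ) :=
            Finset.sum_le_sum hterm
          _ = ((∑ i ∈ f (Pfx S x) x, ((gaDef Γ lab f (Pfx S x) x i).image
              (fun a => ((i, a) : Fin D × F))).card : ℕ) : ℝ) := by
            push_cast
            exact Finset.sum_congr rfl (fun i _ => by rw [himgcard i])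
      · intro S' hS' hpre
        rw [fT, fT, if_pos hx, if_pos (List.IsPrefix.mem hx hpre),
          Pfx_stable S S' x hx hpre]
  · intro S hS p'
    have main : ∀ (x1 x2 : L) (i1 i2 : Fin D) (a1 a2 : F), x1 ∈ S → x2 ∈ S →
        S.idxOf x1 < S.idxOf x2 →
        (i1,a1) ∈ fT Γ lab f S x1 → (i2,a2) ∈ fT Γ lab f S x2 →
        ((Γ x1 i1, polyEval (lab x1) a1, a1) : R × F × F)
          = (Γ x2 i2, polyEval (lab x2) a2, a2) → False := by
      intro x1 x2 i1 i2 a1 a2 hx1 hx2 hlt hm1 hm2 he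
      have hx1ne : x1 ≠ x2 := by
        rintro rfl; omega
      obtain ⟨hΓe, hve, hae⟩ : Γ x1 i1 = Γ x2 i2 ∧
          polyEval (lab x1) a1 = polyEval (lab x2) a2 ∧ a1 = a2 := by
        simpa [Prod.ext_iff] using he
      subst hae
      have hx1P2 : x1 ∈ Pfx S x2 := mem_take_idx S x1 _ hx1 (by omega)
      rw [mem_fT Γ lab f S x2 hx2] at hm2
      obtain ⟨hi2, hga2⟩ := hm2
      rw [gaDef] at hga2
      simp only [mem_filter, mem_univ, true_and] at hga2
      have hP2len : (Pfx S x2).length ≤ K := le_trans (Pfx_len S x2) hS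
      have hP1len : (Pfx S x1).length ≤ K := le_trans (Pfx_len S x1) hS
      rw [mem_fT Γ lab f S x1 hx1] at hm1
      have hfst : f (Pfx S x1) x1 = f (Pfx S x2) x1 :=
        ((hf1 (Pfx S x1) hP1len x1).2 (Pfx_mem S x1 hx1)).2 (Pfx S x2) hP2len
          (Pfx_mono S x1 x2 hlt)
      exact hga2 x1 hx1P2 hx1ne ⟨i1, by rw [← hfst]; exact hm1.1, hΓe⟩ hve
    rw [Set.ncard_le_one (Set.toFinite _)]
    rintro x ⟨hxS, ⟨i, a⟩, hqm, hqe⟩ x' ⟨hxS', ⟨i', a'⟩, hqm', hqe'⟩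
    by_contra hne
    have hidx : S.idxOf x ≠ S.idxOf x' := by
      intro h
      apply hne
      have e1 := List.getElem_idxOf (List.idxOf_lt_length_iff.2 hxS)
      have e2 := List.getElem_idxOf (List.idxOf_lt_length_iff.2 hxS')
      rw [← e1, ← e2]
      congr 1
    simp only at hqe hqe'
    rcases Nat.lt_or_ge (S.idxOf x) (S.idxOf x') with h | h
    · exact main x x' i i' a a' hxS hxS' h hqm hqm' (hqe.trans hqe'.symm)
    · exact main x' x i' i a' a hxS' hxS (by omega) hqm' hqm (hqe'.trans hqe.symm)

end OMProof2


/-- **Online matching properties of lossless expanders (with no sharing).**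
Let `G` be a bipartite graph `Γ : L × [D] → R` (with `D ≥ 1`) whose left nodes are
labeled by distinct strings in `{0,1}^n` (`n ≥ 2`) and which is a
`(K_max, (1−ε)D)` expander, where `0 < ε < 1` and `K_max ≥ 2`. Let
`r = 2⌈log₂ K_max⌉` and let `t = 2^s` be the smallest power of two with
`t ≥ (1/ε)(n−1)(r−1)` and `t ≥ 2`. Then the graph `G'` obtained by the `G ↦ G'`
transformation has left side `L`, right side of size `|R|·t²`, left degree
`D' = D·t`, and admits `((1−5ε)·D', 1)` online matching up to size `K_max`. -/
theorem onlineMatching_noSharing_of_losslessExpander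
    {L R : Type*} [Fintype L] [Fintype R] [DecidableEq L] [DecidableEq R]
    (n : ℕ) (hn : 2 ≤ n) (D : ℕ) (hD : 1 ≤ D) (Γ : L → Fin D → R)
    (lab : L → Fin n → Bool) (hlab : Function.Injective lab)
    (Kmax : ℕ) (hK : 2 ≤ Kmax) (ε : ℝ) (hε0 : 0 < ε) (hε1 : ε < 1)
    (hexp : Expander Γ Kmax ((1 - ε) * (D : ℝ)))
    (r : ℕ) (hrdef : r = 2 * Nat.clog 2 Kmax)
    (s : ℕ) (hs : 1 ≤ s)
    (ht : (1 / ε) * ((n : ℝ) - 1) * ((r : ℝ) - 1) ≤ ((2 : ℝ) ^ s))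
    (hmin : ∀ s' : ℕ, 1 ≤ s' →
      (1 / ε) * ((n : ℝ) - 1) * ((r : ℝ) - 1) ≤ ((2 : ℝ) ^ s') → s ≤ s') :
    Nat.card (R × GaloisField 2 s × GaloisField 2 s) = Fintype.card R * (2 ^ s) ^ 2 ∧
    Nat.card (Fin D × GaloisField 2 s) = D * 2 ^ s ∧
    OnlineMatching
      (fun (x : L) (q : Fin D × GaloisField 2 s) =>
        ((Γ x q.1, polyEval (lab x) q.2, q.2) : R × GaloisField 2 s × GaloisField 2 s))
      ((1 - 5 * ε) * ((D : ℝ) * (2 : ℝ) ^ s)) 1 Kmax := by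
  classical
  haveI : Fact (Nat.Prime 2) := ⟨by norm_num⟩
  have hcardN : Nat.card (GaloisField 2 s) = 2 ^ s := GaloisField.card 2 s (by omega)
  haveI hfin : Finite (GaloisField 2 s) :=
    Nat.finite_of_card_ne_zero (by rw [hcardN]; positivity)
  haveI : Fintype (GaloisField 2 s) := Fintype.ofFinite _
  have hcardF : Fintype.card (GaloisField 2 s) = 2 ^ s := by
    rw [← Nat.card_eq_fintype_card, hcardN]
  refine ⟨?_, ?_, ?_⟩
  · rw [Nat.card_prod, Nat.card_prod, Nat.card_eq_fintype_card (α := R), hcardN]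
    ring
  · rw [Nat.card_prod, Nat.card_eq_fintype_card (α := Fin D), Fintype.card_fin, hcardN]
  · -- the online matching
    set m := Nat.clog 2 Kmax with hm
    have hbase : OnlineMatching Γ ((1-2*ε)*(D:ℝ)) (2*m) Kmax :=
      OMProof.base_matching hexp hε0 hD hm hK
    rw [← hrdef] at hbase
    have hm1 : 1 ≤ m := Nat.clog_pos one_lt_two hK
    have hr1 : 1 ≤ r := by omega
    have hn1 : 1 ≤ n := by omega
    have htpos : (0:ℝ) < (2:ℝ)^s := by positivity
    have hn0 : (0:ℝ) ≤ (n:ℝ) - 1 := by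
      have : (1:ℝ) ≤ (n:ℝ) := by exact_mod_cast hn1
      linarith
    have hr0 : (0:ℝ) ≤ (r:ℝ) - 1 := by
      have : (1:ℝ) ≤ (r:ℝ) := by exact_mod_cast hr1
      linarith
    have hκt : ((n:ℝ)-1) * ((r:ℝ)-1) ≤ ε * (2:ℝ)^s := by
      have h1 : (1/ε) * ((n:ℝ)-1) * ((r:ℝ)-1) * ε ≤ (2:ℝ)^s * ε :=
        mul_le_mul_of_nonneg_right ht hε0.le
      have h2 : (1/ε) * ((n:ℝ)-1) * ((r:ℝ)-1) * ε = ((n:ℝ)-1) * ((r:ℝ)-1) := by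
        field_simp
      rw [h2] at h1
      linarith
    have hfac : ((r:ℝ) - 1) * ((n:ℝ) - 1) ≤ (Fintype.card (GaloisField 2 s) : ℝ) := by
      rw [hcardF]
      push_cast
      calc ((r:ℝ)-1) * ((n:ℝ)-1) = ((n:ℝ)-1) * ((r:ℝ)-1) := by ring
        _ ≤ ε * (2:ℝ)^s := hκt
        _ ≤ (2:ℝ)^s := by nlinarith
    have hsub : (1 - 5 * ε) * ((D : ℝ) * (2 : ℝ) ^ s)
        ≤ ((1-2*ε)*(D:ℝ)) *
          ((Fintype.card (GaloisField 2 s) : ℝ) - ((r:ℝ)-1) * ((n:ℝ)-1)) := by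
      rw [hcardF]
      push_cast
      set t := (2:ℝ)^s
      set κ := ((r:ℝ)-1) * ((n:ℝ)-1) with hκ
      have hκ0 : 0 ≤ κ := mul_nonneg hr0 hn0
      have hκ2 : κ ≤ ε * t := by
        rw [hκ]
        calc ((r:ℝ)-1) * ((n:ℝ)-1) = ((n:ℝ)-1) * ((r:ℝ)-1) := by ring
          _ ≤ ε * t := hκt
      have hDr : (1:ℝ) ≤ (D:ℝ) := by exact_mod_cast hD
      have hkey : (1-5*ε) * t ≤ (1-2*ε)*(t-κ) := by nlinarith
      calc (1 - 5*ε) * ((D:ℝ) * t) = (D:ℝ) * ((1-5*ε) * t) := by ring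
        _ ≤ (D:ℝ) * ((1-2*ε)*(t-κ)) := by
            apply mul_le_mul_of_nonneg_left hkey (by linarith)
        _ = ((1-2*ε)*(D:ℝ)) * (t-κ) := by ring
    exact OMProof2.transform Γ lab hlab hr1 hn1 hbase hfac hsub
end
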